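/- arXiv:2003.07817 — 8 statements merged into one kernel-verified Lean document; each statement's English description precedes it below -/
import Mathlib

section
/- Let X ⊆ Z^d be a finite lattice-convex set with dim(X) ≥ 4. Then rc(X) > log₂(dim(X)) − log₂ log₂(dim(X)). -/
/-- Coercion of an integer point to a real point. -/
def ZtoR {d : ℕ} (x : Fin d → ℤ) : Fin d → ℝ := fun i => (x i : ℝ)

/-- `X ⊆ ℤ^d` is lattice-convex if `conv(X) ∩ ℤ^d = X`. -/
def IsLatticeConvex {d : ℕ} (X : Set (Fin d → ℤ)) : Prop :=
  ∀ z : Fin d → ℤ, ZtoR z ∈ convexHull ℝ (ZtoR '' X) → z ∈ X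

/-- `X` is described within `ℤ^d` by a system of `k` real linear inequalities
(together with finitely many linear equations). -/
def IsRelaxation {d : ℕ} (X : Set (Fin d → ℤ)) (k : ℕ) : Prop :=
  ∃ (m : ℕ) (A : Fin k → Fin d → ℝ) (b : Fin k → ℝ) (U : Fin m → Fin d → ℝ) (v : Fin m → ℝ),
    X = {x : Fin d → ℤ |
      (∀ i, ∑ j, A i j * (x j : ℝ) ≤ b i) ∧ ∀ i, ∑ j, U i j * (x j : ℝ) = v i}

/-- The relaxation complexity of `X` within `ℤ^d`. -/
noncomputable def rc {d : ℕ} (X : Set (Fin d → ℤ)) : ℕ := sInf {k | IsRelaxation X k}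

/-- `X` is described within `ℤ^d` by a system of `k` rational linear inequalities
(together with finitely many rational linear equations). -/
def IsRelaxationQ {d : ℕ} (X : Set (Fin d → ℤ)) (k : ℕ) : Prop :=
  ∃ (m : ℕ) (A : Fin k → Fin d → ℚ) (b : Fin k → ℚ) (U : Fin m → Fin d → ℚ) (v : Fin m → ℚ),
    X = {x : Fin d → ℤ |
      (∀ i, ∑ j, A i j * (x j : ℚ) ≤ b i) ∧ ∀ i, ∑ j, U i j * (x j : ℚ) = v i}

/-- The rational relaxation complexity of `X` within `ℤ^d`. -/
noncomputable def rcQ {d : ℕ} (X : Set (Fin d → ℤ)) : ℕ := sInf {k | IsRelaxationQ X k}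

/-- The dimension of `X`, i.e. the dimension of its affine hull. -/
noncomputable def dimX {d : ℕ} (X : Set (Fin d → ℤ)) : ℕ :=
  Module.finrank ℝ (affineSpan ℝ (ZtoR '' X)).direction

section RCProof

open Finset

lemma abs_sub_le_one_of_round_eq {a b : ℝ} (h : round a = round b) : |a - b| ≤ 1 := by
  have ha := abs_sub_round a
  have hb := abs_sub_round b
  have hab : a - b = (a - round a) - (b - round b) := by rw [h]; ring
  rw [hab]
  calc |(a - round a) - (b - round b)| ≤ |a - round a| + |b - round b| := abs_sub _ _
    _ ≤ 1/2 + 1/2 := by gcongr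
    _ = 1 := by norm_num

lemma abs_sub_lt_of_floor_div_eq {x y ε : ℝ} (hε : 0 < ε) (h : ⌊x/ε⌋ = ⌊y/ε⌋) :
    |x - y| < ε := by
  have h1 : x/ε - y/ε < 1 := by
    have h3 := Int.lt_floor_add_one (x/ε)
    have h4 := Int.floor_le (y/ε)
    rw [h] at h3
    linarith
  have h2 : y/ε - x/ε < 1 := by
    have h3 := Int.lt_floor_add_one (y/ε)
    have h4 := Int.floor_le (x/ε)
    rw [h] at h4
    linarith
  have habs : |x/ε - y/ε| < 1 := abs_sub_lt_iff.2 ⟨h1, h2⟩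
  have hxy : |x - y| / ε < 1 := by
    rw [← sub_div, abs_div, abs_of_pos hε] at habs
    exact habs
  calc |x - y| = (|x - y|/ε) * ε := by field_simp
    _ < 1 * ε := mul_lt_mul_of_pos_right hxy hε
    _ = ε := one_mul ε

lemma exists_ker {n : ℕ} {ι : Type} [Fintype ι] (β : ι → Fin n → ℝ)
    (hcard : Fintype.card ι < n) :
    ∃ v : Fin n → ℝ, v ≠ 0 ∧ ∀ i, ∑ t, β i t * v t = 0 := by
  by_contra hcon
  push_neg at hcon
  let φ : (Fin n → ℝ) →ₗ[ℝ] (ι → ℝ) :=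
    { toFun := fun v i => ∑ t, β i t * v t
      map_add' := by
        intro a b; funext i
        simp [mul_add, Finset.sum_add_distrib]
      map_smul' := by
        intro m a; funext i
        simp [Finset.mul_sum, mul_left_comm] }
  have hinj : Function.Injective φ := by
    rw [← LinearMap.ker_eq_bot]
    rw [Submodule.eq_bot_iff]
    intro v hv
    by_contra hv0
    obtain ⟨i, hi⟩ := hcon v hv0
    have : φ v i = 0 := by rw [hv]; rfl
    exact hi this
  have hle := LinearMap.finrank_le_finrank_of_injective hinj
  rw [Module.finrank_pi ℝ, Module.finrank_pi ℝ] at hle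
  simp at hle
  omega

lemma exists_tiny {n : ℕ} {ι : Type} [Fintype ι] (β : ι → Fin n → ℝ)
    (hcard : Fintype.card ι < n) {ε : ℝ} (hε : 0 < ε) :
    ∃ ζ : Fin n → ℤ, ζ ≠ 0 ∧ ∀ i, |∑ t, β i t * (ζ t : ℝ)| ≤ ε := by
  classical
  obtain ⟨v, hv0, hker⟩ := exists_ker β hcard
  obtain ⟨ts, hts⟩ : ∃ t, v t ≠ 0 := Function.ne_iff.1 hv0
  have habs : 0 < |v ts| := abs_pos.2 hts
  obtain ⟨D, hD⟩ := exists_nat_gt (2 / |v ts|)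
  have hD2 : 2 < (D : ℝ) * |v ts| := by
    rw [div_lt_iff₀ habs] at hD
    linarith
  let f : ℕ → (Fin n → ℤ) := fun s t => round (((D * s : ℕ) : ℝ) * v t)
  have hroundoff : ∀ (s : ℕ) (t : Fin n),
      |((f s t : ℤ) : ℝ) - ((D * s : ℕ) : ℝ) * v t| ≤ 1 := by
    intro s t
    rw [abs_sub_comm]
    calc |((D * s : ℕ) : ℝ) * v t - ((f s t : ℤ) : ℝ)| ≤ 1/2 := abs_sub_round _
      _ ≤ 1 := by norm_num
  have hval : ∀ (s : ℕ) (i : ι), |∑ t, β i t * ((f s t : ℤ) : ℝ)| ≤ ∑ t, |β i t| := by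
    intro s i
    have hsum : ∑ t, β i t * ((f s t : ℤ) : ℝ)
        = (∑ t, β i t * (((f s t : ℤ) : ℝ) - ((D * s : ℕ) : ℝ) * v t))
          + ((D * s : ℕ) : ℝ) * ∑ t, β i t * v t := by
      rw [Finset.mul_sum, ← Finset.sum_add_distrib]
      exact Finset.sum_congr rfl (fun t _ => by ring)
    rw [hsum, hker i, mul_zero, add_zero]
    calc |∑ t, β i t * (((f s t : ℤ) : ℝ) - ((D * s : ℕ) : ℝ) * v t)|
        ≤ ∑ t, |β i t * (((f s t : ℤ) : ℝ) - ((D * s : ℕ) : ℝ) * v t)| :=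
          Finset.abs_sum_le_sum_abs _ _
      _ ≤ ∑ t, |β i t| := by
          apply Finset.sum_le_sum
          intro t _
          rw [abs_mul]
          calc |β i t| * |((f s t : ℤ) : ℝ) - ((D * s : ℕ) : ℝ) * v t|
              ≤ |β i t| * 1 := by
                apply mul_le_mul_of_nonneg_left (hroundoff s t) (abs_nonneg _)
            _ = |β i t| := mul_one _
  have hdist : ∀ s s' : ℕ, s ≠ s' → f s ts ≠ f s' ts := by
    intro s s' hne heq
    have h1 : |((D * s : ℕ) : ℝ) * v ts - ((D * s' : ℕ) : ℝ) * v ts| ≤ 1 :=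
      abs_sub_le_one_of_round_eq heq
    have h2 : ((D * s : ℕ) : ℝ) * v ts - ((D * s' : ℕ) : ℝ) * v ts
        = ((D : ℝ) * ((s : ℝ) - (s' : ℝ))) * v ts := by push_cast; ring
    rw [h2, abs_mul, abs_mul] at h1
    have h3 : (1 : ℝ) ≤ |(s : ℝ) - (s' : ℝ)| := by
      have h5 : ((s : ℤ)) ≠ ((s' : ℤ)) := by exact_mod_cast hne
      have h4 : ((1 : ℤ) : ℝ) ≤ |((s : ℤ) : ℝ) - ((s' : ℤ) : ℝ)| := by
        rw [← Int.cast_sub, ← Int.cast_abs]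
        exact_mod_cast Int.one_le_abs (sub_ne_zero.2 h5)
      push_cast at h4 ⊢
      exact h4
    have hDpos : (0:ℝ) ≤ (D:ℝ) := by positivity
    rw [abs_of_nonneg hDpos] at h1
    nlinarith [abs_nonneg ((s:ℝ) - (s':ℝ))]
  -- box indices
  let M : ι → ℤ := fun i => ⌈(∑ t, |β i t|) / ε⌉
  let Bf : Finset (ι → ℤ) := Fintype.piFinset (fun i => Finset.Icc (-(M i) - 1) (M i))
  let g : ℕ → (ι → ℤ) := fun s i => ⌊(∑ t, β i t * ((f s t : ℤ) : ℝ)) / ε⌋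
  have hmaps : ∀ s ∈ Finset.range (Bf.card + 1), g s ∈ Bf := by
    intro s _
    rw [Fintype.mem_piFinset]
    intro i
    rw [Finset.mem_Icc]
    have hv := hval s i
    have hCpos : (0:ℝ) ≤ ∑ t, |β i t| := Finset.sum_nonneg (fun t _ => abs_nonneg _)
    have hub : (∑ t, β i t * ((f s t : ℤ) : ℝ)) / ε ≤ (M i : ℝ) := by
      calc (∑ t, β i t * ((f s t : ℤ) : ℝ)) / ε ≤ (∑ t, |β i t|) / ε := by
            apply div_le_div_of_nonneg_right (le_trans (le_abs_self _) hv) hε.le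
        _ ≤ (M i : ℝ) := Int.le_ceil _
    have hlb : -((M i : ℝ)) ≤ (∑ t, β i t * ((f s t : ℤ) : ℝ)) / ε := by
      have : -(∑ t, |β i t|) / ε ≤ (∑ t, β i t * ((f s t : ℤ) : ℝ)) / ε := by
        apply div_le_div_of_nonneg_right ?_ hε.le
        have := neg_abs_le (∑ t, β i t * ((f s t : ℤ) : ℝ))
        linarith
      have h2 : -((M i : ℝ)) ≤ -(∑ t, |β i t|) / ε := by
        rw [neg_div]
        exact neg_le_neg (Int.le_ceil _)
      linarith
    constructor
    · have : ((-(M i) - 1 : ℤ) : ℝ) < (g s i : ℝ) := by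
        have hf := Int.sub_one_lt_floor ((∑ t, β i t * ((f s t : ℤ) : ℝ)) / ε)
        push_cast
        push_cast at hf hlb
        linarith
      exact_mod_cast le_of_lt (by exact_mod_cast this : (-(M i) - 1 : ℤ) < g s i)
    · have : (g s i : ℝ) ≤ (M i : ℝ) := le_trans (Int.floor_le _) hub
      exact_mod_cast this
  have hcardlt : Bf.card < (Finset.range (Bf.card + 1)).card := by
    rw [Finset.card_range]; omega
  obtain ⟨s, _, s', _, hss', hgeq⟩ :=
    Finset.exists_ne_map_eq_of_card_lt_of_maps_to hcardlt hmaps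
  refine ⟨fun t => f s t - f s' t, ?_, ?_⟩
  · intro hzero
    have := congrFun hzero ts
    simp at this
    exact hdist s s' hss' (by omega)
  · intro i
    have hdiff : ∑ t, β i t * (((f s t - f s' t : ℤ) : ℝ))
        = (∑ t, β i t * ((f s t : ℤ) : ℝ)) - ∑ t, β i t * ((f s' t : ℤ) : ℝ) := by
      rw [← Finset.sum_sub_distrib]
      exact Finset.sum_congr rfl (fun t _ => by push_cast; ring)
    rw [hdiff]
    exact le_of_lt (abs_sub_lt_of_floor_div_eq hε (congrFun hgeq i))

lemma step_false {n k r : ℕ} (α : Fin k → Fin n → ℝ) (c : Fin k → ℝ)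
    (hfin : {y : Fin n → ℤ | ∀ i, ∑ t, α i t * (y t : ℝ) ≤ c i}.Finite)
    (x : Fin n → ℤ) (hx : ∀ i, ∑ t, α i t * (x t : ℝ) ≤ c i)
    (π : Finset (Fin k))
    (η : Fin r → Fin n → ℤ)
    (hfree : ∀ μ : Fin r → ℤ, (∀ s, ∑ j, μ j * η j s = 0) → μ = 0)
    (htight : ∀ i ∈ π, ∀ j, ∑ t, α i t * (η j t : ℝ) = 0)
    (hslack : ∀ i ∉ π, ∑ t, α i t * (x t : ℝ) < c i)
    (hr : k - π.card < r) : False := by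
  classical
  set S : Set (Fin n → ℤ) := {y : Fin n → ℤ | ∀ i, ∑ t, α i t * (y t : ℝ) ≤ c i} with hSdef
  let F : (Fin r → ℤ) → (Fin n → ℤ) := fun μ t => x t + ∑ j, μ j * η j t
  have hFapp : ∀ μ t, F μ t = x t + ∑ j, μ j * η j t := fun _ _ => rfl
  let B : Fin k → Fin r → ℝ := fun i j => ∑ t, α i t * ((η j t : ℤ) : ℝ)
  have hBapp : ∀ i j, B i j = ∑ t, α i t * ((η j t : ℤ) : ℝ) := fun _ _ => rfl
  have key : ∀ (i : Fin k) (μ : Fin r → ℤ),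
      ∑ t, α i t * ((F μ t : ℤ) : ℝ)
        = (∑ t, α i t * (x t : ℝ)) + ∑ j, B i j * (μ j : ℝ) := by
    intro i μ
    have expand : ∀ t : Fin n, α i t * ((F μ t : ℤ) : ℝ)
        = α i t * (x t : ℝ) + ∑ j, (α i t * ((η j t : ℤ) : ℝ)) * (μ j : ℝ) := by
      intro t
      have hc : ((F μ t : ℤ) : ℝ) = (x t : ℝ) + ∑ j, ((μ j : ℤ) : ℝ) * ((η j t : ℤ) : ℝ) := by
        rw [hFapp]
        push_cast
        ring
      rw [hc, mul_add, Finset.mul_sum]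
      congr 1
      exact Finset.sum_congr rfl fun j _ => by ring
    rw [Finset.sum_congr rfl (fun t _ => expand t), Finset.sum_add_distrib]
    congr 1
    rw [Finset.sum_comm]
    exact Finset.sum_congr rfl fun j _ => by rw [hBapp, ← Finset.sum_mul]
  have hFinj : Function.Injective F := by
    intro μ μ' h
    have h1 : ∀ s, ∑ j, μ j * η j s = ∑ j, μ' j * η j s := by
      intro s
      have h2 := congrFun h s
      rw [hFapp, hFapp] at h2
      omega
    have h0 : ∀ s, ∑ j, (μ j - μ' j) * η j s = 0 := by
      intro s
      calc ∑ j, (μ j - μ' j) * η j s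
          = ∑ j, (μ j * η j s - μ' j * η j s) :=
            Finset.sum_congr rfl fun j _ => by ring
        _ = (∑ j, μ j * η j s) - ∑ j, μ' j * η j s := Finset.sum_sub_distrib _ _
        _ = 0 := by rw [h1 s]; ring
    have h3 := hfree _ h0
    funext j
    have h4 := congrFun h3 j
    simp only [Pi.zero_apply, sub_eq_zero] at h4
    exact h4
  by_cases hπu : π = Finset.univ
  · -- all rows tight on η's : infinitely many solutions along η 0
    have hrpos : 0 < r := by
      subst hπu
      simpa using hr
    have hmem : ∀ m : ℕ, F (fun j => (m + 1 : ℤ) * (if j = ⟨0, hrpos⟩ then 1 else 0)) ∈ S := by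
      intro m
      intro i
      rw [key]
      have hiπ : i ∈ π := by rw [hπu]; exact Finset.mem_univ i
      have : ∑ j, B i j * (((m + 1 : ℤ) * (if j = ⟨0, hrpos⟩ then 1 else 0) : ℤ) : ℝ) = 0 := by
        apply Finset.sum_eq_zero
        intro j _
        have hB0 : B i j = 0 := htight i hiπ j
        rw [hB0, zero_mul]
      rw [this, add_zero]
      exact hx i
    have hinj2 : Function.Injective
        (fun m : ℕ => F (fun j => (m + 1 : ℤ) * (if j = ⟨0, hrpos⟩ then 1 else 0))) := by
      intro m m' hmm'
      have h5' := hFinj hmm'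
      have h5 := congrFun h5' ⟨0, hrpos⟩
      simp at h5
      omega
    exact (Set.infinite_of_injective_forall_mem hinj2 hmem) hfin
  · have hne : (πᶜ : Finset (Fin k)).Nonempty := by
      rw [Finset.nonempty_iff_ne_empty]
      intro hemp
      exact hπu (by rwa [Finset.compl_eq_empty_iff] at hemp)
    set ε : ℝ := (πᶜ).inf' hne (fun i => c i - ∑ t, α i t * (x t : ℝ)) with hεdef
    have hεpos : 0 < ε := by
      rw [hεdef, Finset.lt_inf'_iff]
      intro i hi
      have := hslack i (Finset.mem_compl.1 hi)
      linarith
    set T : Set (Fin r → ℤ) :=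
      {μ | μ ≠ 0 ∧ ∀ i ∈ (πᶜ : Finset (Fin k)), |∑ j, B i j * (μ j : ℝ)| ≤ ε} with hTdef
    have hmemS : ∀ μ : Fin r → ℤ,
        (∀ i ∈ (πᶜ : Finset (Fin k)), |∑ j, B i j * (μ j : ℝ)| ≤ ε) → F μ ∈ S := by
      intro μ hμ i
      rw [key]
      by_cases hiπ : i ∈ π
      · have : ∑ j, B i j * (μ j : ℝ) = 0 := by
          apply Finset.sum_eq_zero
          intro j _
          have hB0 : B i j = 0 := htight i hiπ j
          rw [hB0, zero_mul]
        rw [this, add_zero]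
        exact hx i
      · have h6 := hμ i (Finset.mem_compl.2 hiπ)
        have h7 : ε ≤ c i - ∑ t, α i t * (x t : ℝ) := by
          rw [hεdef]
          exact Finset.inf'_le _ (Finset.mem_compl.2 hiπ)
        have h8 : ∑ j, B i j * (μ j : ℝ) ≤ ε := le_trans (le_abs_self _) h6
        linarith
    have hTfin : T.Finite := by
      apply Set.Finite.subset (Set.Finite.preimage hFinj.injOn hfin)
      intro μ hμ
      exact hmemS μ hμ.2
    have hcardc : Fintype.card {i : Fin k // i ∈ (πᶜ : Finset (Fin k))} < r := by
      rw [Fintype.card_coe, Finset.card_compl, Fintype.card_fin]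
      exact hr
    have hTne : T.Nonempty := by
      obtain ⟨ζ, hζ0, hζ⟩ := exists_tiny (fun (ip : {i : Fin k // i ∈ (πᶜ : Finset (Fin k))}) j => B ip.1 j) hcardc hεpos
      exact ⟨ζ, hζ0, fun i hi => hζ ⟨i, hi⟩⟩
    set G : (Fin r → ℤ) → ℝ := fun μ => (πᶜ).sup' hne (fun i => |∑ j, B i j * (μ j : ℝ)|)
      with hGdef
    have hTfinset : hTfin.toFinset.Nonempty := by
      rwa [Set.Finite.toFinset_nonempty]
    obtain ⟨μs, hμsT, hmin⟩ := Finset.exists_min_image hTfin.toFinset G hTfinset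
    rw [Set.Finite.mem_toFinset] at hμsT
    by_cases hG : G μs ≤ 0
    · -- exact zeroes: infinite family
      have hzero : ∀ i ∈ (πᶜ : Finset (Fin k)), ∑ j, B i j * (μs j : ℝ) = 0 := by
        intro i hi
        have h9 : |∑ j, B i j * (μs j : ℝ)| ≤ G μs :=
          Finset.le_sup' (fun i => |∑ j, B i j * (μs j : ℝ)|) hi
        have := abs_nonneg (∑ j, B i j * (μs j : ℝ))
        have habs0 : |∑ j, B i j * (μs j : ℝ)| = 0 := le_antisymm (le_trans h9 hG) this
        exact abs_eq_zero.1 habs0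
      have hinj2 : Function.Injective (fun m : ℕ => F (fun j => (m + 1 : ℤ) * μs j)) := by
        intro m m' hmm'
        have h10 := hFinj hmm'
        obtain ⟨j0, hj0⟩ := Function.ne_iff.1 hμsT.1
        have h11 := congrFun h10 j0
        have h13 : (m + 1 : ℤ) = (m' + 1 : ℤ) := mul_right_cancel₀ hj0 h11
        omega
      have hmem2 : ∀ m : ℕ, F (fun j => (m + 1 : ℤ) * μs j) ∈ S := by
        intro m
        apply hmemS
        intro i hi
        have h12 : ∑ j, B i j * (((m + 1 : ℤ) * μs j : ℤ) : ℝ)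
            = ((m + 1 : ℤ) : ℝ) * ∑ j, B i j * (μs j : ℝ) := by
          rw [Finset.mul_sum]
          exact Finset.sum_congr rfl fun j _ => by push_cast; ring
        rw [h12, hzero i hi, mul_zero, abs_zero]
        exact hεpos.le
      exact (Set.infinite_of_injective_forall_mem hinj2 hmem2) hfin
    · push_neg at hG
      have hε'pos : 0 < min ε (G μs / 2) := lt_min hεpos (by linarith)
      obtain ⟨ζ, hζ0, hζ⟩ := exists_tiny
        (fun (ip : {i : Fin k // i ∈ (πᶜ : Finset (Fin k))}) j => B ip.1 j) hcardc hε'pos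
      have hζT : ζ ∈ T := by
        refine ⟨hζ0, fun i hi => ?_⟩
        exact le_trans (hζ ⟨i, hi⟩) (min_le_left _ _)
      have hGζ : G ζ ≤ G μs / 2 := by
        rw [hGdef]
        apply Finset.sup'_le
        intro i hi
        exact le_trans (hζ ⟨i, hi⟩) (min_le_right _ _)
      have := hmin ζ (Set.Finite.mem_toFinset _ |>.2 hζT)
      linarith

lemma core {n k : ℕ} (α : Fin k → Fin n → ℝ) (c : Fin k → ℝ)
    (hfin : {y : Fin n → ℤ | ∀ i, ∑ t, α i t * (y t : ℝ) ≤ c i}.Finite)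
    (hgen : ∀ (i : Fin k) (t : Fin n), α i t ≤ c i) :
    n ≤ k * 2 ^ k := by
  classical
  by_contra hbig
  push_neg at hbig
  have hkn : k < n := by
    have h1 : k ≤ k * 2 ^ k := by
      calc k = k * 1 := (mul_one k).symm
        _ ≤ k * 2 ^ k := Nat.mul_le_mul_left k Nat.one_le_two_pow
    omega
  -- basis vectors
  let eb : Fin n → (Fin n → ℤ) := fun t s => if s = t then 1 else 0
  have hsum_single : ∀ (i : Fin k) (t : Fin n),
      ∑ s, α i s * ((eb t s : ℤ) : ℝ) = α i t := by
    intro i t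
    have : ∀ s : Fin n, α i s * ((eb t s : ℤ) : ℝ) = if s = t then α i s else 0 := by
      intro s
      by_cases hs : s = t
      · simp [eb, hs]
      · simp [eb, hs]
    rw [Finset.sum_congr rfl fun s _ => this s]
    simp
  -- tight sets
  let tight : Fin n → Finset (Fin k) := fun t => Finset.univ.filter (fun i => α i t = c i)
  have htight_mem : ∀ t i, i ∈ tight t ↔ α i t = c i := by
    intro t i
    simp [tight]
  have hclaim1 : ∀ t, (tight t).Nonempty := by
    intro t
    rw [Finset.nonempty_iff_ne_empty]
    intro hemp
    apply step_false α c hfin (eb t)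
      (fun i => by rw [hsum_single]; exact hgen i t)
      ∅ (fun j s => if s = j then 1 else 0)
      ?_ ?_ ?_ ?_
    · intro μ hμ
      funext s
      have h2 := hμ s
      have h3 : ∑ j, μ j * (if s = j then (1:ℤ) else 0) = μ s := by
        simp [mul_ite]
      rw [h3] at h2
      exact h2
    · intro i hi
      exact absurd hi (Finset.notMem_empty i)
    · intro i _
      rw [hsum_single]
      refine lt_of_le_of_ne (hgen i t) ?_
      intro heq
      have : i ∈ tight t := (htight_mem t i).2 heq
      rw [hemp] at this
      exact Finset.notMem_empty i this
    · simpa using hkn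
  -- counting
  let Bf : Finset (Finset (Fin k)) :=
    (Finset.univ : Finset (Fin k)).powerset.filter (fun π => π.Nonempty)
  have hmaps : ∀ t ∈ (Finset.univ : Finset (Fin n)), tight t ∈ Bf := by
    intro t _
    rw [Finset.mem_filter]
    exact ⟨Finset.mem_powerset.2 (Finset.filter_subset _ _), hclaim1 t⟩
  have hcount := Finset.card_eq_sum_card_fiberwise hmaps
  have hfiber : ∀ π ∈ Bf, ((Finset.univ : Finset (Fin n)).filter fun t => tight t = π).card ≤ k := by
    intro π hπ
    by_contra hcard
    push_neg at hcard
    have hπne : π.Nonempty := (Finset.mem_filter.1 hπ).2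
    have hπcard : 1 ≤ π.card := Finset.card_pos.2 hπne
    have hπk : π.card ≤ k := by
      have := Finset.card_le_card (Finset.mem_powerset.1 (Finset.mem_filter.1 hπ).1)
      simpa using this
    -- extract subset of size k - π.card + 2
    obtain ⟨u, hu_sub, hu_card⟩ := Finset.exists_subset_card_eq
      (show k - π.card + 2 ≤ ((Finset.univ : Finset (Fin n)).filter fun t => tight t = π).card by omega)
    have hu_ne : u.Nonempty := Finset.card_pos.1 (by omega)
    obtain ⟨t₀, ht₀u⟩ := hu_ne
    have htight_t₀ : tight t₀ = π := (Finset.mem_filter.1 (hu_sub ht₀u)).2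
    set u' : Finset (Fin n) := u.erase t₀ with hu'def
    have hu'card : u'.card = k - π.card + 1 := by
      rw [hu'def, Finset.card_erase_of_mem ht₀u, hu_card]
      omega
    set r : ℕ := k - π.card + 1 with hrdef
    -- enumeration of u'
    let e := u'.equivFin
    let σ : Fin r → Fin n := fun j => (e.symm ((finCongr hu'card).symm j) : Fin n)
    have hσmem : ∀ j, σ j ∈ u' := fun j => (e.symm _).2
    have hσinj : Function.Injective σ := by
      intro j j' hjj'
      have h1 : e.symm ((finCongr hu'card).symm j) = e.symm ((finCongr hu'card).symm j') :=
        Subtype.ext hjj'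
      have h2 := e.symm.injective h1
      exact (finCongr hu'card).symm.injective h2
    have hσne : ∀ j, σ j ≠ t₀ := fun j => Finset.ne_of_mem_erase (hσmem j)
    have htight_σ : ∀ j, tight (σ j) = π := by
      intro j
      have := hu_sub (Finset.mem_of_mem_erase (hσmem j))
      exact (Finset.mem_filter.1 this).2
    let η : Fin r → Fin n → ℤ := fun j s => (if s = σ j then 1 else 0) - (if s = t₀ then 1 else 0)
    have hηsum : ∀ (i : Fin k) (j : Fin r),
        ∑ t, α i t * ((η j t : ℤ) : ℝ) = α i (σ j) - α i t₀ := by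
      intro i j
      have h5 : ∀ t : Fin n, α i t * ((η j t : ℤ) : ℝ)
          = α i t * ((eb (σ j) t : ℤ) : ℝ) - α i t * ((eb t₀ t : ℤ) : ℝ) := by
        intro t
        have : ((η j t : ℤ) : ℝ) = ((eb (σ j) t : ℤ) : ℝ) - ((eb t₀ t : ℤ) : ℝ) := by
          simp only [η, eb]
          push_cast
          ring
        rw [this]
        ring
      rw [Finset.sum_congr rfl fun t _ => h5 t, Finset.sum_sub_distrib,
        hsum_single, hsum_single]
    apply step_false α c hfin (eb t₀)
      (fun i => by rw [hsum_single]; exact hgen i t₀)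
      π η ?_ ?_ ?_ ?_
    · -- freeness
      intro μ hμ
      funext j₀
      have h6 := hμ (σ j₀)
      have h7 : ∀ j, η j (σ j₀) = if j = j₀ then 1 else 0 := by
        intro j
        have hc2 : (if σ j₀ = t₀ then (1:ℤ) else 0) = 0 := if_neg (hσne j₀)
        by_cases hj : j = j₀
        · subst hj
          simp [η, hc2]
        · have hc1 : (if σ j₀ = σ j then (1:ℤ) else 0) = 0 :=
            if_neg (fun heq => hj (hσinj heq.symm))
          simp [η, hc1, hc2, if_neg hj]
      rw [Finset.sum_congr rfl fun j _ => by rw [h7 j]] at h6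
      have h8 : ∑ j, μ j * (if j = j₀ then (1:ℤ) else 0) = μ j₀ := by simp [mul_ite]
      rw [h8] at h6
      exact h6
    · -- tightness
      intro i hi j
      rw [hηsum]
      have h9 : α i (σ j) = c i := (htight_mem _ i).1 (by rw [htight_σ j]; exact hi)
      have h10 : α i t₀ = c i := (htight_mem _ i).1 (by rw [htight_t₀]; exact hi)
      rw [h9, h10, sub_self]
    · -- slackness
      intro i hi
      rw [hsum_single]
      refine lt_of_le_of_ne (hgen i t₀) ?_
      intro heq
      exact hi (by rw [← htight_t₀]; exact (htight_mem t₀ i).2 heq)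
    · omega
  -- combine
  have hsum_le : ∑ π ∈ Bf, ((Finset.univ : Finset (Fin n)).filter fun t => tight t = π).card
      ≤ Bf.card * k := by
    calc ∑ π ∈ Bf, ((Finset.univ : Finset (Fin n)).filter fun t => tight t = π).card
        ≤ ∑ _π ∈ Bf, k := Finset.sum_le_sum hfiber
      _ = Bf.card * k := by rw [Finset.sum_const, smul_eq_mul]
  have hBcard : Bf.card ≤ 2 ^ k := by
    calc Bf.card ≤ (Finset.univ : Finset (Fin k)).powerset.card := Finset.card_filter_le _ _
      _ = 2 ^ k := by rw [Finset.card_powerset, Finset.card_univ, Fintype.card_fin]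
  have hn : n ≤ 2 ^ k * k := by
    have h11 : (Finset.univ : Finset (Fin n)).card = n := by
      rw [Finset.card_univ, Fintype.card_fin]
    calc n = (Finset.univ : Finset (Fin n)).card := h11.symm
      _ = ∑ π ∈ Bf, ((Finset.univ : Finset (Fin n)).filter fun t => tight t = π).card := hcount
      _ ≤ Bf.card * k := hsum_le
      _ ≤ 2 ^ k * k := Nat.mul_le_mul_right k hBcard
  rw [mul_comm] at hn
  omega

lemma arith_final {n k : ℕ} (h4 : 4 ≤ n) (hb : n ≤ k * 2 ^ k) :
    Real.logb 2 n - Real.logb 2 (Real.logb 2 n) < k := by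
  have hk1 : 1 ≤ k := by
    by_contra hk
    push_neg at hk
    interval_cases k <;> omega
  have hn0 : (0:ℝ) < n := by positivity
  have hn4 : (4:ℝ) ≤ n := by exact_mod_cast h4
  set L : ℝ := Real.logb 2 n with hLdef
  have hL2 : 2 ≤ L := by
    have h1 : Real.logb 2 4 ≤ L := by
      exact Real.logb_le_logb_of_le (by norm_num) (by norm_num) hn4
    have h2 : Real.logb 2 4 = 2 := by
      rw [show (4:ℝ) = 2 ^ (2:ℕ) by norm_num, Real.logb_pow,
        Real.logb_self_eq_one (by norm_num)]
      norm_num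
    linarith
  have hlogL1 : 1 ≤ Real.logb 2 L := by
    have h1 : Real.logb 2 2 ≤ Real.logb 2 L :=
      Real.logb_le_logb_of_le (by norm_num) (by norm_num) hL2
    rwa [Real.logb_self_eq_one (by norm_num)] at h1
  rcases le_or_gt L k with hcase | hcase
  · linarith
  · -- k < L
    have hkpos : (0:ℝ) < k := by exact_mod_cast hk1
    have hklt : Real.logb 2 k < Real.logb 2 L := by
      exact Real.logb_lt_logb (by norm_num) hkpos hcase
    have hbR : (n:ℝ) ≤ (k:ℝ) * 2 ^ (k:ℕ) := by exact_mod_cast hb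
    have hL_le : L ≤ Real.logb 2 k + k := by
      have h1 : L ≤ Real.logb 2 ((k:ℝ) * 2 ^ (k:ℕ)) :=
        Real.logb_le_logb_of_le (by norm_num) hn0 hbR
      have h2 : Real.logb 2 ((k:ℝ) * 2 ^ (k:ℕ)) = Real.logb 2 k + k := by
        rw [Real.logb_mul (ne_of_gt hkpos) (by positivity), Real.logb_pow,
          Real.logb_self_eq_one (by norm_num)]
        ring
      linarith
    linarith

lemma isRelaxation_of_fintype {d : ℕ} (X : Set (Fin d → ℤ)) {ι : Type} [Fintype ι]
    (A : ι → Fin d → ℝ) (b : ι → ℝ)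
    (hX : X = {x : Fin d → ℤ | ∀ i, ∑ j, A i j * (x j : ℝ) ≤ b i}) :
    IsRelaxation X (Fintype.card ι) := by
  refine ⟨0, fun i => A ((Fintype.equivFin ι).symm i), fun i => b ((Fintype.equivFin ι).symm i),
    fun _ => 0, fun _ => 0, ?_⟩
  rw [hX]
  ext x
  simp only [Set.mem_setOf_eq]
  constructor
  · intro h
    refine ⟨fun i => h _, fun i => i.elim0⟩
  · rintro ⟨h1, _⟩ i
    have h2 := h1 ((Fintype.equivFin ι) i)
    simpa using h2

lemma exists_relaxation {d : ℕ} (X : Set (Fin d → ℤ)) (hfin : X.Finite)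
    (hlc : IsLatticeConvex X) : ∃ K, IsRelaxation X K := by
  classical
  set R : ℕ := hfin.toFinset.sup (fun x => Finset.univ.sup fun j => (x j).natAbs) with hRdef
  have hR : ∀ x ∈ X, ∀ j, (x j).natAbs ≤ R := by
    intro x hx j
    calc (x j).natAbs ≤ Finset.univ.sup fun j => (x j).natAbs :=
          Finset.le_sup (f := fun j => (x j).natAbs) (Finset.mem_univ j)
      _ ≤ R := Finset.le_sup (f := fun x => Finset.univ.sup fun j => (x j).natAbs)
          (hfin.mem_toFinset.2 hx)
  set Box : Set (Fin d → ℤ) := {x | ∀ j, x j ∈ Set.Icc (-(R:ℤ)) (R:ℤ)} with hBoxdef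
  have hbox_fin : Box.Finite := by
    have h1 : Box = Set.pi Set.univ (fun _ => Set.Icc (-(R:ℤ)) (R:ℤ)) := by
      ext x
      constructor
      · intro h j _
        exact h j
      · intro h j
        exact h j (Set.mem_univ j)
    rw [h1]
    exact Set.Finite.pi (fun _ => Set.finite_Icc _ _)
  have hXBox : X ⊆ Box := by
    intro x hx j
    have h2 : ((x j).natAbs : ℤ) ≤ (R : ℤ) := by exact_mod_cast hR x hx j
    rw [← Int.abs_eq_natAbs] at h2
    exact ⟨neg_le_of_abs_le h2, le_of_abs_le h2⟩
  set W : Set (Fin d → ℤ) := Box \ X with hWdef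
  have hWfin : W.Finite := hbox_fin.subset Set.diff_subset
  set hull : Set (Fin d → ℝ) := convexHull ℝ (ZtoR '' X) with hhulldef
  have hhull_conv : Convex ℝ hull := convex_convexHull ℝ _
  have hhull_closed : IsClosed hull := ((hfin.image ZtoR).isCompact_convexHull ℝ).isClosed
  have hsep : ∀ z : {z : Fin d → ℤ // z ∈ hWfin.toFinset},
      ∃ (f : (Fin d → ℝ) →L[ℝ] ℝ) (u : ℝ), (∀ a ∈ hull, f a < u) ∧ u < f (ZtoR z.1) := by
    intro z
    have hz : ZtoR z.1 ∉ hull := by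
      intro hmem
      have := hlc z.1 hmem
      have hzW := hWfin.mem_toFinset.1 z.2
      exact hzW.2 this
    exact geometric_hahn_banach_closed_point hhull_conv hhull_closed hz
  choose f u hfu hufu using hsep
  -- basis vectors in ℝ^d
  let ebR : Fin d → (Fin d → ℝ) := fun j => fun j' => if j = j' then 1 else 0
  -- index type
  let ι := Sum (Fin d) (Sum (Fin d) {z : Fin d → ℤ // z ∈ hWfin.toFinset})
  let A : ι → Fin d → ℝ := Sum.elim (fun j0 => fun j => if j = j0 then 1 else 0)
    (Sum.elim (fun j0 => fun j => if j = j0 then -1 else 0)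
      (fun z => fun j => f z (ebR j)))
  let b : ι → ℝ := Sum.elim (fun _ => (R : ℝ))
    (Sum.elim (fun _ => (R : ℝ)) (fun z => u z))
  have hfsum : ∀ (z : {z : Fin d → ℤ // z ∈ hWfin.toFinset}) (x : Fin d → ℤ),
      ∑ j, f z (ebR j) * (x j : ℝ) = f z (ZtoR x) := by
    intro z x
    have h1 : ZtoR x = ∑ j, (ZtoR x j) • ebR j := pi_eq_sum_univ (ZtoR x)
    rw [h1, map_sum]
    apply Finset.sum_congr rfl
    intro j _
    rw [map_smul, smul_eq_mul]
    have : ZtoR x j = (x j : ℝ) := rfl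
    rw [this]
    ring
  have hXeq : X = {x : Fin d → ℤ | ∀ i : ι, ∑ j, A i j * (x j : ℝ) ≤ b i} := by
    ext x
    simp only [Set.mem_setOf_eq]
    constructor
    · intro hx i
      have hxR : ∀ j0 : Fin d, |(x j0 : ℝ)| ≤ (R : ℝ) := by
        intro j0
        have h2 : ((x j0).natAbs : ℤ) ≤ (R : ℤ) := by exact_mod_cast hR x hx j0
        rw [← Int.abs_eq_natAbs] at h2
        have h3 : |(x j0 : ℝ)| = ((|x j0| : ℤ) : ℝ) := by push_cast; rfl
        rw [h3]
        exact_mod_cast h2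
      cases i with
      | inl j0 =>
        have hsum : ∑ j, A (Sum.inl j0) j * (x j : ℝ) = (x j0 : ℝ) := by
          simp [A, ite_mul]
        rw [hsum]
        have := hxR j0
        have := abs_le.1 this
        simpa [b] using this.2
      | inr i' =>
        cases i' with
        | inl j0 =>
          have hsum : ∑ j, A (Sum.inr (Sum.inl j0)) j * (x j : ℝ) = -(x j0 : ℝ) := by
            simp [A, ite_mul]
          rw [hsum]
          have := abs_le.1 (hxR j0)
          have h4 : -(R:ℝ) ≤ (x j0 : ℝ) := this.1
          show -(x j0 : ℝ) ≤ b (Sum.inr (Sum.inl j0))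
          have h5 : b (Sum.inr (Sum.inl j0)) = (R : ℝ) := rfl
          rw [h5]
          linarith
        | inr z =>
          have hsum : ∑ j, A (Sum.inr (Sum.inr z)) j * (x j : ℝ)
              = ∑ j, f z (ebR j) * (x j : ℝ) := rfl
          rw [hsum, hfsum]
          have hmem : ZtoR x ∈ hull := by
            rw [hhulldef]
            exact subset_convexHull ℝ _ (Set.mem_image_of_mem ZtoR hx)
          exact le_of_lt (hfu z (ZtoR x) hmem)
    · intro hx
      by_contra hxX
      have hxBox : x ∈ Box := by
        intro j
        have h1 := hx (Sum.inl j)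
        have h2 := hx (Sum.inr (Sum.inl j))
        have hsum1 : ∑ j', A (Sum.inl j) j' * (x j' : ℝ) = (x j : ℝ) := by
          simp [A, ite_mul]
        have hsum2 : ∑ j', A (Sum.inr (Sum.inl j)) j' * (x j' : ℝ) = -(x j : ℝ) := by
          simp [A, ite_mul]
        rw [hsum1] at h1
        rw [hsum2] at h2
        have hb1 : b (Sum.inl j) = (R : ℝ) := rfl
        have hb2 : b (Sum.inr (Sum.inl j)) = (R : ℝ) := rfl
        rw [hb1] at h1
        rw [hb2] at h2
        constructor
        · have : -(R : ℝ) ≤ (x j : ℝ) := by linarith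
          exact_mod_cast this
        · exact_mod_cast h1
      have hxW : x ∈ hWfin.toFinset := hWfin.mem_toFinset.2 ⟨hxBox, hxX⟩
      have h3 := hx (Sum.inr (Sum.inr ⟨x, hxW⟩))
      have hsum : ∑ j, A (Sum.inr (Sum.inr ⟨x, hxW⟩)) j * (x j : ℝ)
          = ∑ j, f ⟨x, hxW⟩ (ebR j) * (x j : ℝ) := rfl
      rw [hsum, hfsum] at h3
      have h4 := hufu ⟨x, hxW⟩
      have hb3 : b (Sum.inr (Sum.inr ⟨x, hxW⟩)) = u ⟨x, hxW⟩ := rfl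
      rw [hb3] at h3
      linarith
  exact ⟨Fintype.card ι, isRelaxation_of_fintype X A b hXeq⟩

lemma dimX_le_of_isRelaxation {d : ℕ} (X : Set (Fin d → ℤ)) (hfin : X.Finite)
    {k : ℕ} (hrx : IsRelaxation X k) : dimX X ≤ k * 2 ^ k := by
  classical
  by_cases hn0 : dimX X = 0
  · omega
  set n := dimX X with hndef
  -- Part A: affinely independent integer points
  obtain ⟨t, hts, hspan, hai⟩ := exists_affineIndependent ℝ (Fin d → ℝ) (ZtoR '' X)
  have htfin : t.Finite := (hfin.image ZtoR).subset hts
  haveI : Fintype t := htfin.fintype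
  have hdirt : Module.finrank ℝ (vectorSpan ℝ t) = n := by
    rw [hndef]
    unfold dimX
    rw [← hspan, direction_affineSpan]
  have htne : t.Nonempty := by
    rcases t.eq_empty_or_nonempty with h | h
    · exfalso
      apply hn0
      rw [hndef] at hdirt ⊢
      rw [← hdirt, h]
      simp [vectorSpan_empty]
    · exact h
  haveI : Nonempty t := htne.to_subtype
  have hcardt : Fintype.card t = n + 1 := by
    have h1 := hai.finrank_vectorSpan_add_one
    rw [Subtype.range_coe] at h1
    rw [hdirt] at h1
    have hcards : Fintype.card {x // x ∈ t} = Fintype.card ↑t := Fintype.card_congr (Equiv.refl _)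
    omega
  let e : Fin (n+1) ≃ t := (Fintype.equivFinOfCardEq hcardt).symm
  let p : Fin (n+1) → (Fin d → ℝ) := fun i => (e i : Fin d → ℝ)
  have hp_ai : AffineIndependent ℝ p := hai.comp_embedding e.toEmbedding
  have hpre : ∀ i : Fin (n+1), ∃ y, y ∈ X ∧ ZtoR y = p i := by
    intro i
    have h2 : p i ∈ ZtoR '' X := hts (e i).2
    obtain ⟨y, hy1, hy2⟩ := h2
    exact ⟨y, hy1, hy2⟩
  choose xv hxvX hxvE using hpre
  have hli := (affineIndependent_iff_linearIndependent_vsub ℝ p 0).1 hp_ai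
  let em : Fin n → {x : Fin (n+1) // x ≠ 0} := fun j => ⟨j.succ, Fin.succ_ne_zero j⟩
  have hem_inj : Function.Injective em := by
    intro a a' h
    have := congrArg (fun z : {x : Fin (n+1) // x ≠ 0} => (z : Fin (n+1))) h
    exact Fin.succ_injective n this
  have hli2 : LinearIndependent ℝ (fun j : Fin n => p (j.succ) - p 0) := by
    have h3 := hli.comp em hem_inj
    exact h3
  -- Part B: transfer
  obtain ⟨m, A, b, U, v, hXeq⟩ := hrx
  have hXineq : ∀ y ∈ X, ∀ i, ∑ jd, A i jd * (y jd : ℝ) ≤ b i := by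
    intro y hy
    rw [hXeq] at hy
    exact hy.1
  have hXeqn : ∀ y ∈ X, ∀ i', ∑ jd, U i' jd * (y jd : ℝ) = v i' := by
    intro y hy
    rw [hXeq] at hy
    exact hy.2
  let δ : Fin n → (Fin d → ℤ) := fun j => xv (j.succ) - xv 0
  have hδcast : ∀ (j : Fin n) (jd : Fin d), ((δ j jd : ℤ) : ℝ) = p (j.succ) jd - p 0 jd := by
    intro j jd
    have h1 : (xv (j.succ) jd : ℝ) = p (j.succ) jd := congrFun (hxvE (j.succ)) jd
    have h2 : (xv 0 jd : ℝ) = p 0 jd := congrFun (hxvE 0) jd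
    simp only [δ, Pi.sub_apply]
    push_cast
    rw [h1, h2]
  let α : Fin k → Fin n → ℝ := fun i s => ∑ jd, A i jd * ((δ s jd : ℤ) : ℝ)
  let c : Fin k → ℝ := fun i => b i - ∑ jd, A i jd * ((xv 0 jd : ℤ) : ℝ)
  have hsplit : ∀ (i : Fin k) (s : Fin n),
      α i s = (∑ jd, A i jd * (xv (s.succ) jd : ℝ)) - ∑ jd, A i jd * (xv 0 jd : ℝ) := by
    intro i s
    rw [← Finset.sum_sub_distrib]
    apply Finset.sum_congr rfl
    intro jd _
    simp only [δ, Pi.sub_apply]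
    push_cast
    ring
  have hgen : ∀ (i : Fin k) (s : Fin n), α i s ≤ c i := by
    intro i s
    rw [hsplit]
    have := hXineq (xv (s.succ)) (hxvX _) i
    simp only [c]
    linarith
  -- the map Φ
  let Φ : (Fin n → ℤ) → (Fin d → ℤ) := fun lam jd => xv 0 jd + ∑ s, lam s * δ s jd
  have key2 : ∀ (lam : Fin n → ℤ) (i : Fin k),
      ∑ jd, A i jd * ((Φ lam jd : ℤ) : ℝ)
        = (∑ jd, A i jd * (xv 0 jd : ℝ)) + ∑ s, α i s * (lam s : ℝ) := by
    intro lam i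
    have expand : ∀ jd : Fin d, A i jd * ((Φ lam jd : ℤ) : ℝ)
        = A i jd * (xv 0 jd : ℝ) + ∑ s, (A i jd * ((δ s jd : ℤ) : ℝ)) * (lam s : ℝ) := by
      intro jd
      have hc : ((Φ lam jd : ℤ) : ℝ) = (xv 0 jd : ℝ) + ∑ s, ((lam s : ℤ) : ℝ) * ((δ s jd : ℤ) : ℝ) := by
        simp only [Φ]
        push_cast
        ring
      rw [hc, mul_add, Finset.mul_sum]
      congr 1
      exact Finset.sum_congr rfl fun s _ => by ring
    rw [Finset.sum_congr rfl (fun jd _ => expand jd), Finset.sum_add_distrib]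
    congr 1
    rw [Finset.sum_comm]
    apply Finset.sum_congr rfl
    intro s _
    simp only [α]
    rw [← Finset.sum_mul]
  have keyU : ∀ (lam : Fin n → ℤ) (i' : Fin m),
      ∑ jd, U i' jd * ((Φ lam jd : ℤ) : ℝ) = v i' := by
    intro lam i'
    have hUδ : ∀ s : Fin n, ∑ jd, U i' jd * ((δ s jd : ℤ) : ℝ) = 0 := by
      intro s
      have hsplitU : ∑ jd, U i' jd * ((δ s jd : ℤ) : ℝ)
          = (∑ jd, U i' jd * (xv (s.succ) jd : ℝ)) - ∑ jd, U i' jd * (xv 0 jd : ℝ) := by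
        rw [← Finset.sum_sub_distrib]
        apply Finset.sum_congr rfl
        intro jd _
        simp only [δ, Pi.sub_apply]
        push_cast
        ring
      rw [hsplitU, hXeqn (xv (s.succ)) (hxvX _) i', hXeqn (xv 0) (hxvX _) i', sub_self]
    have expand : ∀ jd : Fin d, U i' jd * ((Φ lam jd : ℤ) : ℝ)
        = U i' jd * (xv 0 jd : ℝ) + ∑ s, (U i' jd * ((δ s jd : ℤ) : ℝ)) * (lam s : ℝ) := by
      intro jd
      have hc : ((Φ lam jd : ℤ) : ℝ) = (xv 0 jd : ℝ) + ∑ s, ((lam s : ℤ) : ℝ) * ((δ s jd : ℤ) : ℝ) := by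
        simp only [Φ]
        push_cast
        ring
      rw [hc, mul_add, Finset.mul_sum]
      congr 1
      exact Finset.sum_congr rfl fun s _ => by ring
    rw [Finset.sum_congr rfl (fun jd _ => expand jd), Finset.sum_add_distrib]
    have h5 : ∑ jd, ∑ s, (U i' jd * ((δ s jd : ℤ) : ℝ)) * (lam s : ℝ) = 0 := by
      rw [Finset.sum_comm]
      apply Finset.sum_eq_zero
      intro s _
      have : ∑ jd, (U i' jd * ((δ s jd : ℤ) : ℝ)) * (lam s : ℝ)
          = (∑ jd, U i' jd * ((δ s jd : ℤ) : ℝ)) * (lam s : ℝ) := by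
        rw [← Finset.sum_mul]
      rw [this, hUδ s, zero_mul]
    rw [h5, add_zero]
    exact hXeqn (xv 0) (hxvX 0) i'
  have hΦinj : Function.Injective Φ := by
    intro lam lam' h
    have hcoord : ∀ jd, ∑ s, (lam s - lam' s) * δ s jd = 0 := by
      intro jd
      have h1 := congrFun h jd
      simp only [Φ] at h1
      have h2 : ∑ s, lam s * δ s jd = ∑ s, lam' s * δ s jd := by omega
      calc ∑ s, (lam s - lam' s) * δ s jd
          = (∑ s, lam s * δ s jd) - ∑ s, lam' s * δ s jd := by
            rw [← Finset.sum_sub_distrib]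
            exact Finset.sum_congr rfl fun s _ => by ring
        _ = 0 := by rw [h2]; ring
    have hzero : ∀ s, ((lam s - lam' s : ℤ) : ℝ) = 0 := by
      apply Fintype.linearIndependent_iff.1 hli2 (fun s => ((lam s - lam' s : ℤ) : ℝ))
      funext jd
      have h3 : (∑ s, ((lam s - lam' s : ℤ) : ℝ) • (fun j : Fin n => p (j.succ) - p 0) s) jd
          = ∑ s, ((lam s - lam' s : ℤ) : ℝ) * ((δ s jd : ℤ) : ℝ) := by
        rw [Finset.sum_apply]
        apply Finset.sum_congr rfl
        intro s _
        rw [Pi.smul_apply, smul_eq_mul]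
        have h4 : (fun j : Fin n => p (j.succ) - p 0) s jd = p (s.succ) jd - p 0 jd := rfl
        rw [h4, hδcast s jd]
      have h6 : ∑ s, ((lam s - lam' s : ℤ) : ℝ) * ((δ s jd : ℤ) : ℝ)
          = ((∑ s, (lam s - lam' s) * δ s jd : ℤ) : ℝ) := by
        push_cast
        rfl
      rw [Pi.zero_apply, h3, h6, hcoord jd]
      norm_num
    funext s
    have h6 := hzero s
    have : (lam s - lam' s : ℤ) = 0 := by exact_mod_cast h6
    omega
  have hSfin : {y : Fin n → ℤ | ∀ i, ∑ s, α i s * (y s : ℝ) ≤ c i}.Finite := by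
    apply Set.Finite.subset (Set.Finite.preimage hΦinj.injOn hfin)
    intro lam hlam
    simp only [Set.mem_preimage]
    rw [hXeq]
    constructor
    · intro i
      rw [key2]
      have h7 := hlam i
      simp only [c] at h7
      linarith
    · intro i'
      exact keyU lam i'
  have := core α c hSfin hgen
  omega

end RCProof

/-- For a finite lattice-convex set `X` with `dim(X) ≥ 4`,
`rc(X) > log₂(dim X) − log₂ log₂(dim X)`. -/
theorem rc_gt_log_dim {d : ℕ} (X : Set (Fin d → ℤ)) (hfin : X.Finite)
    (hlc : IsLatticeConvex X) (hdim : 4 ≤ dimX X) :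
    (rc X : ℝ) > Real.logb 2 (dimX X) - Real.logb 2 (Real.logb 2 (dimX X)) := by
  have hne : {k | IsRelaxation X k}.Nonempty := by
    obtain ⟨K, hK⟩ := exists_relaxation X hfin hlc
    exact ⟨K, hK⟩
  have hrx : IsRelaxation X (rc X) := Nat.sInf_mem hne
  have hb := dimX_le_of_isRelaxation X hfin hrx
  exact arith_final hdim hb
end

section
/- Let X ⊆ Z^2 be a finite lattice-convex set with dim(X) ≥ 1. Then every polyhedron P ⊆ R^2 with P ∩ Z^2 = X is bounded. -/
/-- A polyhedron is the solution set of finitely many linear inequalities. -/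
def IsPolyhedron {d : ℕ} (P : Set (Fin d → ℝ)) : Prop :=
  ∃ (k : ℕ) (A : Fin k → Fin d → ℝ) (b : Fin k → ℝ),
    P = {x | ∀ i, ∑ j, A i j * x j ≤ b i}

open Filter Topology

lemma exists_recession {k : ℕ} (A : Fin k → Fin 2 → ℝ) (b : Fin k → ℝ)
    (hub : ¬ Bornology.IsBounded {x : Fin 2 → ℝ | ∀ i, ∑ j, A i j * x j ≤ b i}) :
    ∃ r : Fin 2 → ℝ, r ≠ 0 ∧ ∀ i, ∑ j, A i j * r j ≤ 0 := by
  rw [isBounded_iff_forall_norm_le] at hub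
  push_neg at hub
  choose f hfP hfn using fun n : ℕ => hub n
  have hpos : ∀ n, 0 < ‖f n‖ := fun n => lt_of_le_of_lt (Nat.cast_nonneg n) (hfn n)
  set u : ℕ → Fin 2 → ℝ := fun n => ‖f n‖⁻¹ • f n with hu_def
  have hu : ∀ n, u n ∈ Metric.sphere (0 : Fin 2 → ℝ) 1 := by
    intro n
    rw [mem_sphere_zero_iff_norm, hu_def]
    simp [norm_smul, abs_of_pos (inv_pos.2 (hpos n)), inv_mul_cancel₀ (hpos n).ne']
  obtain ⟨r, hrs, φ, hφ, hconv⟩ := (isCompact_sphere (0 : Fin 2 → ℝ) 1).tendsto_subseq hu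
  have hrn : ‖r‖ = 1 := mem_sphere_zero_iff_norm.mp hrs
  refine ⟨r, by simp [← norm_pos_iff, hrn], ?_⟩
  intro i
  have hg : Continuous (fun v : Fin 2 → ℝ => ∑ j, A i j * v j) :=
    continuous_finset_sum _ fun j _ => continuous_const.mul (continuous_apply j)
  have h1 : Tendsto (fun n => ∑ j, A i j * (u (φ n)) j) atTop (𝓝 (∑ j, A i j * r j)) :=
    ((hg.tendsto r).comp hconv)
  have hmono : ∀ n : ℕ, (n : ℝ) ≤ ‖f (φ n)‖ := by
    intro n
    calc (n : ℝ) ≤ (φ n : ℝ) := by exact_mod_cast hφ.le_apply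
    _ ≤ ‖f (φ n)‖ := (hfn (φ n)).le
  have htop : Tendsto (fun n => ‖f (φ n)‖) atTop atTop :=
    tendsto_atTop_mono hmono tendsto_natCast_atTop_atTop
  have h2 : Tendsto (fun n => ‖f (φ n)‖⁻¹ * b i) atTop (𝓝 0) := by
    have := (htop.inv_tendsto_atTop).mul_const (b i)
    simpa using this
  have hle : ∀ n, (fun n => ∑ j, A i j * (u (φ n)) j) n ≤ ‖f (φ n)‖⁻¹ * b i := by
    intro n
    have heq : ∑ j, A i j * (u (φ n)) j = ‖f (φ n)‖⁻¹ * ∑ j, A i j * (f (φ n)) j := by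
      simp only [hu_def, Pi.smul_apply, smul_eq_mul, Fin.sum_univ_two]; ring
    dsimp only
    rw [heq]
    exact mul_le_mul_of_nonneg_left (hfP (φ n) i) (inv_nonneg.2 (norm_nonneg _))
  exact le_of_tendsto_of_tendsto' h1 h2 hle

lemma exists_two (X : Set (Fin 2 → ℤ)) (hdim : 1 ≤ dimX X) :
    ∃ x ∈ X, ∃ y ∈ X, x ≠ y := by
  by_contra h
  push_neg at h
  have hsub : (ZtoR '' X).Subsingleton := by
    rintro _ ⟨a, ha, rfl⟩ _ ⟨b, hb, rfl⟩
    rw [h a ha b hb]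
  have : dimX X = 0 := by
    unfold dimX
    rw [direction_affineSpan]
    rcases hsub.eq_empty_or_singleton with he | ⟨p, hp⟩
    · simp [he]
    · simp [hp]
  omega
lemma recession_mem {k : ℕ} (A : Fin k → Fin 2 → ℝ) (b : Fin k → ℝ) (r p q : Fin 2 → ℝ)
    (hr : ∀ i, ∑ j, A i j * r j ≤ 0) (hp : ∀ i, ∑ j, A i j * p j ≤ b i)
    (hq : ∀ i, ∑ j, A i j * q j ≤ b i) (s t : ℝ) (hs0 : 0 ≤ s) (hs1 : s ≤ 1) (ht : 0 ≤ t) :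
    ∀ i, ∑ j, A i j * ((1 - s) * p j + s * q j + t * r j) ≤ b i := by
  intro i
  have h1 := hr i; have h2 := hp i; have h3 := hq i
  simp only [Fin.sum_univ_two] at *
  nlinarith [mul_nonneg (by linarith : (0:ℝ) ≤ 1 - s) (by linarith : (0:ℝ) ≤ b i - (A i 0 * p 0 + A i 1 * p 1)),
    mul_nonneg hs0 (by linarith : (0:ℝ) ≤ b i - (A i 0 * q 0 + A i 1 * q 1)),
    mul_nonpos_of_nonneg_of_nonpos ht h1]

/-- A sign-adjusted injective integer sequence with prescribed sign behaviour. -/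
lemma sign_seq (c : ℝ) (hc : c ≠ 0) :
    ∃ g : ℕ → ℤ, Function.Injective g ∧ ∀ n, 0 ≤ (g n : ℝ) / c := by
  rcases lt_or_gt_of_ne hc with h | h
  · refine ⟨fun n => -(n : ℤ), fun a b hab => by simp only [neg_inj, Nat.cast_inj] at hab; exact hab, fun n => ?_⟩
    apply div_nonneg_iff.mpr
    right
    constructor
    · push_cast; simp
    · exact h.le
  · refine ⟨fun n => (n : ℤ), fun a b hab => by simp only [Nat.cast_inj] at hab; exact hab, fun n => ?_⟩
    apply div_nonneg (by positivity) h.le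

theorem relaxation_bounded_dim2' (X : Set (Fin 2 → ℤ)) (hfin : X.Finite)
    (hdim : 1 ≤ dimX X)
    (P : Set (Fin 2 → ℝ)) (hP : IsPolyhedron P)
    (hrel : {z : Fin 2 → ℤ | ZtoR z ∈ P} = X) :
    Bornology.IsBounded P := by
  by_contra hub
  obtain ⟨k, A, b, hPdef⟩ := hP
  subst hPdef
  obtain ⟨x, hx, y, hy, hxy⟩ := exists_two X hdim
  obtain ⟨r, hr0, hrA⟩ := exists_recession A b hub
  have hmem : ∀ z : Fin 2 → ℤ, (∀ i, ∑ j, A i j * (ZtoR z) j ≤ b i) → z ∈ X := by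
    intro z hz
    rw [← hrel]; exact hz
  have hxP : ∀ i, ∑ j, A i j * (ZtoR x) j ≤ b i := by rw [← hrel] at hx; exact hx
  have hyP : ∀ i, ∑ j, A i j * (ZtoR y) j ≤ b i := by rw [← hrel] at hy; exact hy
  -- setup
  set w : Fin 2 → ℤ := fun j => y j - x j with hw_def
  have hw : ¬ (w 0 = 0 ∧ w 1 = 0) := by
    rintro ⟨h0, h1⟩
    apply hxy
    funext j
    fin_cases j <;> [have := h0; have := h1] <;> simp [hw_def] at this ⊢ <;> omega
  set u : Fin 2 → ℤ := if w 1 = 0 then ![0,1] else ![1,0] with hu_def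
  set Dz : ℤ := w 0 * u 1 - w 1 * u 0 with hDz_def
  have hDz : Dz ≠ 0 := by
    by_cases h : w 1 = 0 <;> simp [hDz_def, hu_def, h] <;> tauto
  have hD : ((Dz : ℝ)) ≠ 0 := by exact_mod_cast hDz
  set α : ℝ := (r 0 * (u 1 : ℝ) - r 1 * (u 0 : ℝ)) / (Dz : ℝ) with hα_def
  set β : ℝ := ((w 0 : ℝ) * r 1 - (w 1 : ℝ) * r 0) / (Dz : ℝ) with hβ_def
  have hrep : ∀ j, r j = α * (w j : ℝ) + β * (u j : ℝ) := by
    intro j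
    fin_cases j <;>
    · rw [hα_def, hβ_def]
      field_simp
      rw [hDz_def]
      push_cast
      ring
  clear_value α β
  clear hα_def hβ_def
  have hyw : ∀ j, (y j : ℝ) = (x j : ℝ) + (w j : ℝ) := by
    intro j; rw [hw_def]; push_cast; ring
  have key : ∃ z : ℕ → Fin 2 → ℤ, Function.Injective z ∧ ∀ n, z n ∈ X := by
    by_cases hβ0 : β = 0
    · -- r parallel to w
      have hα0 : α ≠ 0 := by
        intro h
        apply hr0
        funext j
        rw [Pi.zero_apply, hrep j, h, hβ0]; ring
      obtain ⟨g, hginj, hgpos⟩ := sign_seq α hα0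
      refine ⟨fun n j => x j + g n * w j, ?_, ?_⟩
      · intro n m hnm
        obtain ⟨j, hj⟩ : ∃ j, w j ≠ 0 := by
          by_contra h; push_neg at h; exact hw ⟨h 0, h 1⟩
        have h1 := congrFun hnm j
        simp only [add_right_inj] at h1
        exact hginj (mul_right_cancel₀ hj h1)
      · intro n
        apply hmem
        have hpt : ∀ j, ZtoR (fun j => x j + g n * w j) j
            = (1 - 0) * (ZtoR x) j + 0 * (ZtoR y) j + ((g n : ℝ) / α) * r j := by
          intro j
          rw [hrep j, hβ0]
          simp only [ZtoR]
          push_cast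
          field_simp
          ring
        intro i
        have := recession_mem A b r (ZtoR x) (ZtoR y) hrA hxP hyP 0 ((g n : ℝ) / α)
          le_rfl zero_le_one (hgpos n) i
        calc ∑ j, A i j * ZtoR (fun j => x j + g n * w j) j
            = ∑ j, A i j * ((1 - 0) * (ZtoR x) j + 0 * (ZtoR y) j + ((g n : ℝ) / α) * r j) :=
              Finset.sum_congr rfl fun j _ => by rw [hpt j]
          _ ≤ b i := this
    · -- r not parallel to w
      obtain ⟨g, hginj, hgpos⟩ := sign_seq β hβ0
      refine ⟨fun n j => x j + ⌈(g n : ℝ) / β * α⌉ * w j + g n * u j, ?_, ?_⟩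
      · intro n m hnm
        have h0 := congrFun hnm 0
        have h1 := congrFun hnm 1
        simp only at h0 h1
        have hc : g n * Dz = g m * Dz := by
          rw [hDz_def]
          linear_combination (w 0) * h1 - (w 1) * h0
        exact hginj (mul_right_cancel₀ hDz hc)
      · intro n
        set t : ℝ := (g n : ℝ) / β with ht_def
        have ht : 0 ≤ t := hgpos n
        have htβ : t * β = (g n : ℝ) := div_mul_cancel₀ _ hβ0
        set s : ℝ := (⌈t * α⌉ : ℝ) - t * α with hs_def
        have hs0 : 0 ≤ s := by rw [hs_def]; linarith [Int.le_ceil (t * α)]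
        have hs1 : s ≤ 1 := by rw [hs_def]; linarith [Int.ceil_lt_add_one (t * α)]
        have hcs : (⌈t * α⌉ : ℝ) = s + t * α := by rw [hs_def]; ring
        clear_value t s
        apply hmem
        have hpt : ∀ j, ZtoR (fun j => x j + ⌈(g n : ℝ) / β * α⌉ * w j + g n * u j) j
            = (1 - s) * (ZtoR x) j + s * (ZtoR y) j + t * r j := by
          intro j
          rw [hrep j]
          simp only [ZtoR]
          push_cast
          rw [← ht_def, hyw j]
          linear_combination ((w j : ℝ)) * hcs - ((u j : ℝ)) * htβ
        intro i
        have := recession_mem A b r (ZtoR x) (ZtoR y) hrA hxP hyP s t hs0 hs1 ht i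
        calc ∑ j, A i j * ZtoR (fun j => x j + ⌈(g n : ℝ) / β * α⌉ * w j + g n * u j) j
            = ∑ j, A i j * ((1 - s) * (ZtoR x) j + s * (ZtoR y) j + t * r j) :=
              Finset.sum_congr rfl fun j _ => by rw [hpt j]
          _ ≤ b i := this
  obtain ⟨z, hzinj, hzmem⟩ := key
  exact absurd hfin (Set.infinite_of_injective_forall_mem hzinj hzmem)


/-- For a finite lattice-convex set `X ⊆ ℤ²` with `dim(X) ≥ 1`,
every polyhedral relaxation of `X` is bounded. -/
theorem relaxation_bounded_dim2 (X : Set (Fin 2 → ℤ)) (hfin : X.Finite)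
    (hlc : IsLatticeConvex X) (hdim : 1 ≤ dimX X)
    (P : Set (Fin 2 → ℝ)) (hP : IsPolyhedron P)
    (hrel : {z : Fin 2 → ℤ | ZtoR z ∈ P} = X) :
    Bornology.IsBounded P :=
  relaxation_bounded_dim2' X hfin hdim P hP hrel
end

section
/- Let X ⊆ Z^3 be a finite lattice-convex set with dim(X) ≥ 2. Then every polyhedron P ⊆ R^3 with P ∩ Z^3 = X is bounded. -/
open Filter Topology


lemma simul_dirichlet (α β : ℝ) {ε : ℝ} (hε : 0 < ε) (M : ℕ) :
    ∃ (k : ℕ) (v w : ℤ), M ≤ k ∧ 1 ≤ k ∧ |(k : ℝ) * α - v| ≤ ε ∧ |(k : ℝ) * β - w| ≤ ε := by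
  set M' : ℕ := M + 1 with hM'
  set g : ℕ → ℝ × ℝ := fun i => (Int.fract ((i * M' : ℕ) * α), Int.fract ((i * M' : ℕ) * β)) with hg
  have hmem : ∀ i, g i ∈ Set.Icc (0:ℝ) 1 ×ˢ Set.Icc (0:ℝ) 1 := by
    intro i
    exact ⟨⟨Int.fract_nonneg _, (Int.fract_lt_one _).le⟩,
      ⟨Int.fract_nonneg _, (Int.fract_lt_one _).le⟩⟩
  obtain ⟨L, -, φ, hφ, hlim⟩ := (isCompact_Icc.prod isCompact_Icc).tendsto_subseq hmem
  have hev : ∀ᶠ n in atTop, dist ((g ∘ φ) n) L < ε / 2 :=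
    Metric.tendsto_nhds.1 hlim (ε/2) (by linarith)
  obtain ⟨a, ha⟩ := hev.exists_forall_of_atTop
  have h1 : dist (g (φ a)) L < ε / 2 := ha a le_rfl
  have h2 : dist (g (φ (a+1))) L < ε / 2 := ha (a+1) (by omega)
  have hd : dist (g (φ (a+1))) (g (φ a)) < ε :=
    (dist_triangle _ L _).trans_lt (by rw [dist_comm L]; linarith)
  have hlt : φ a < φ (a + 1) := hφ (by omega)
  rw [Prod.dist_eq] at hd
  have hd1 : dist (g (φ (a+1))).1 (g (φ a)).1 < ε := (le_max_left _ _).trans_lt hd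
  have hd2 : dist (g (φ (a+1))).2 (g (φ a)).2 < ε := (le_max_right _ _).trans_lt hd
  refine ⟨(φ (a+1) - φ a) * M', ⌊((φ (a+1) * M' : ℕ) : ℝ) * α⌋ - ⌊((φ a * M' : ℕ) : ℝ) * α⌋,
      ⌊((φ (a+1) * M' : ℕ) : ℝ) * β⌋ - ⌊((φ a * M' : ℕ) : ℝ) * β⌋, ?_, ?_, ?_, ?_⟩
  · calc M ≤ M' := by omega
    _ ≤ (φ (a+1) - φ a) * M' := Nat.le_mul_of_pos_left _ (by omega)
  · calc 1 ≤ M' := by omega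
    _ ≤ _ := Nat.le_mul_of_pos_left _ (by omega)
  · have hMle : φ a * M' ≤ φ (a+1) * M' := Nat.mul_le_mul_right _ hlt.le
    have heq : ((((φ (a+1) - φ a) * M' : ℕ)) : ℝ) * α
        - ((⌊((φ (a+1) * M' : ℕ) : ℝ) * α⌋ - ⌊((φ a * M' : ℕ) : ℝ) * α⌋ : ℤ) : ℝ)
        = Int.fract (((φ (a+1) * M' : ℕ) : ℝ) * α) - Int.fract (((φ a * M' : ℕ) : ℝ) * α) := by
      rw [Int.fract, Int.fract]
      push_cast [Nat.cast_sub hlt.le]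
      ring
    rw [heq]
    rw [hg] at hd1
    exact (Real.dist_eq _ _ ▸ hd1).le
  · have heq : ((((φ (a+1) - φ a) * M' : ℕ)) : ℝ) * β
        - ((⌊((φ (a+1) * M' : ℕ) : ℝ) * β⌋ - ⌊((φ a * M' : ℕ) : ℝ) * β⌋ : ℤ) : ℝ)
        = Int.fract (((φ (a+1) * M' : ℕ) : ℝ) * β) - Int.fract (((φ a * M' : ℕ) : ℝ) * β) := by
      rw [Int.fract, Int.fract]
      push_cast [Nat.cast_sub hlt.le]
      ring
    rw [heq]
    rw [hg] at hd2
    exact (Real.dist_eq _ _ ▸ hd2).le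

/-- Key density lemma: for any reals α β there are arbitrarily large n such that
the "ceiling defects" of n·α and n·β sum to at most 1. -/
lemma key_ceil (α β : ℝ) (N : ℕ) :
    ∃ n : ℕ, N ≤ n ∧ ((⌈(n:ℝ)*α⌉ : ℝ) - n*α) + ((⌈(n:ℝ)*β⌉ : ℝ) - n*β) ≤ 1 := by
  by_contra hcon
  push_neg at hcon
  set A : ℝ := (⌈(N:ℝ)*α⌉ : ℝ) - N*α with hA
  set B : ℝ := (⌈(N:ℝ)*β⌉ : ℝ) - N*β with hB
  have hAB : 1 < A + B := hcon N le_rfl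
  have hA0 : 0 ≤ A := by simpa [hA, sub_nonneg] using Int.le_ceil ((N:ℝ)*α)
  have hB0 : 0 ≤ B := by simpa [hB, sub_nonneg] using Int.le_ceil ((N:ℝ)*β)
  have hA1 : A < 1 := by
    have := Int.ceil_lt_add_one ((N:ℝ)*α); simp only [hA]; linarith
  have hB1 : B < 1 := by
    have := Int.ceil_lt_add_one ((N:ℝ)*β); simp only [hB]; linarith
  set η : ℝ := A + B - 1 with hη
  set ε : ℝ := min (min (1-A) (1-B)) η / 2 with hε
  have hεpos : 0 < ε := by
    apply div_pos _ (by norm_num)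
    exact lt_min (lt_min (by linarith) (by linarith)) (by linarith)
  obtain ⟨k, v, w, hkM, hk1, hkα, hkβ⟩ := simul_dirichlet α β hεpos (2*N)
  set n : ℕ := k - N with hn
  have hnN : N ≤ n := by omega
  have hncast : (n : ℝ) = (k : ℝ) - N := by
    rw [hn]; push_cast [Nat.cast_sub (by omega : N ≤ k)]; ring
  set δ1 : ℝ := (k:ℝ)*α - v with hδ1
  set δ2 : ℝ := (k:ℝ)*β - w with hδ2
  have habs1 : |δ1| ≤ ε := hkα
  have habs2 : |δ2| ≤ ε := hkβ
  have hd1 : -ε ≤ δ1 ∧ δ1 ≤ ε := abs_le.mp habs1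
  have hd2 : -ε ≤ δ2 ∧ δ2 ≤ ε := abs_le.mp habs2
  have hεA : ε ≤ (1-A)/2 := by
    rw [hε]; gcongr; exact (min_le_left _ _).trans (min_le_left _ _)
  have hεB : ε ≤ (1-B)/2 := by
    rw [hε]; gcongr; exact (min_le_left _ _).trans (min_le_right _ _)
  have hεη : ε ≤ η/2 := by rw [hε]; gcongr; exact min_le_right _ _
  have hApos : 0 < A := by linarith
  have hBpos : 0 < B := by linarith
  have hεltA : ε < A := by linarith [hεη, hη]  -- η ≤ A since B < 1... η = A+B-1 < A
  have hεltB : ε < B := by linarith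
  -- compute the ceiling defect at n for α
  have hcompα : ((⌈(n:ℝ)*α⌉ : ℝ) - n*α) = 1 - A - δ1 := by
    have hrep : (n:ℝ)*α = ((v - ⌈(N:ℝ)*α⌉ : ℤ) : ℝ) + (A + δ1) := by
      rw [hncast, hA, hδ1]; push_cast; ring
    have hceil : ⌈(n:ℝ)*α⌉ = 1 + (v - ⌈(N:ℝ)*α⌉) := by
      rw [hrep, add_comm ((_:ℤ):ℝ), Int.ceil_add_intCast]
      congr 1
      rw [Int.ceil_eq_iff]
      refine ⟨by push_cast; linarith, by push_cast; linarith⟩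
    rw [hceil, hrep]; push_cast; ring
  have hcompβ : ((⌈(n:ℝ)*β⌉ : ℝ) - n*β) = 1 - B - δ2 := by
    have hrep : (n:ℝ)*β = ((w - ⌈(N:ℝ)*β⌉ : ℤ) : ℝ) + (B + δ2) := by
      rw [hncast, hB, hδ2]; push_cast; ring
    have hceil : ⌈(n:ℝ)*β⌉ = 1 + (w - ⌈(N:ℝ)*β⌉) := by
      rw [hrep, add_comm ((_:ℤ):ℝ), Int.ceil_add_intCast]
      congr 1
      rw [Int.ceil_eq_iff]
      refine ⟨by push_cast; linarith, by push_cast; linarith⟩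
    rw [hceil, hrep]; push_cast; ring
  have := hcon n hnN
  rw [hcompα, hcompβ] at this
  linarith


lemma recession_dir {k : ℕ} (A : Fin k → Fin 3 → ℝ) (b : Fin k → ℝ)
    (hub : ¬ Bornology.IsBounded {x : Fin 3 → ℝ | ∀ i, ∑ j, A i j * x j ≤ b i}) :
    ∃ r : Fin 3 → ℝ, ‖r‖ = 1 ∧ ∀ i, ∑ j, A i j * r j ≤ 0 := by
  rw [isBounded_iff_forall_norm_le] at hub
  push_neg at hub
  have hseq : ∀ n : ℕ, ∃ x : Fin 3 → ℝ, (∀ i, ∑ j, A i j * x j ≤ b i) ∧ (n : ℝ) < ‖x‖ := by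
    intro n
    obtain ⟨x, hx1, hx2⟩ := hub n
    exact ⟨x, hx1, hx2⟩
  choose x hxP hxn using hseq
  have hxpos : ∀ n, (0:ℝ) < ‖x n‖ := fun n => lt_of_le_of_lt (Nat.cast_nonneg n) (hxn n)
  set y : ℕ → Fin 3 → ℝ := fun n => ‖x n‖⁻¹ • x n with hy
  have hymem : ∀ n, y n ∈ Metric.sphere (0 : Fin 3 → ℝ) 1 := by
    intro n
    simp only [Metric.mem_sphere, dist_zero_right, hy, norm_smul, norm_inv, norm_norm]
    exact inv_mul_cancel₀ (hxpos n).ne'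
  obtain ⟨r, hrs, φ, hφ, hlim⟩ := (isCompact_sphere (0 : Fin 3 → ℝ) 1).tendsto_subseq hymem
  have hrnorm : ‖r‖ = 1 := by simpa [dist_zero_right] using hrs
  refine ⟨r, hrnorm, fun i => ?_⟩
  have hcont : Tendsto (fun m => ∑ j, A i j * (y (φ m)) j) atTop (𝓝 (∑ j, A i j * r j)) := by
    apply tendsto_finset_sum
    intro j _
    exact (((continuous_apply j).tendsto r).comp hlim).const_mul _
  have hnormlim : Tendsto (fun m => ‖x (φ m)‖) atTop atTop := by
    apply tendsto_atTop_mono (fun m => (hxn (φ m)).le.trans' ?_)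
    · exact tendsto_natCast_atTop_atTop.comp hφ.tendsto_atTop
    · exact le_rfl
  have hrhs : Tendsto (fun m => b i * ‖x (φ m)‖⁻¹) atTop (𝓝 0) := by
    have := (tendsto_inv_atTop_zero.comp hnormlim).const_mul (b i)
    simpa using this
  have hle : ∀ m, ∑ j, A i j * (y (φ m)) j ≤ b i * ‖x (φ m)‖⁻¹ := by
    intro m
    have : ∑ j, A i j * (y (φ m)) j = ‖x (φ m)‖⁻¹ * ∑ j, A i j * (x (φ m)) j := by
      rw [Finset.mul_sum]
      apply Finset.sum_congr rfl
      intro j _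
      simp [hy, Pi.smul_apply, smul_eq_mul]
      ring
    rw [this, mul_comm (b i)]
    apply mul_le_mul_of_nonneg_left (hxP (φ m) i) (inv_nonneg.mpr (hxpos (φ m)).le)
  have := le_of_tendsto_of_tendsto' hcont hrhs hle
  simpa using this

lemma exists_triangle (X : Set (Fin 3 → ℤ)) (hdim : 2 ≤ dimX X) :
    ∃ p0 p1 p2 : Fin 3 → ℤ, p0 ∈ X ∧ p1 ∈ X ∧ p2 ∈ X ∧
      ∀ c d : ℝ, c • (ZtoR p1 - ZtoR p0) + d • (ZtoR p2 - ZtoR p0) = 0 → c = 0 ∧ d = 0 := by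
  classical
  set s : Set (Fin 3 → ℝ) := ZtoR '' X with hs
  have h2 : 2 ≤ Module.finrank ℝ (Submodule.span ℝ (s -ᵥ s)) := by
    have h : dimX X = Module.finrank ℝ (Submodule.span ℝ (s -ᵥ s)) := by
      rw [dimX, direction_affineSpan, vectorSpan_def]
    rw [← h]; exact hdim
  obtain ⟨B, hBsub, hBspan, hBind⟩ := exists_linearIndependent ℝ (s -ᵥ s)
  have h2' : 2 ≤ Module.finrank ℝ (Submodule.span ℝ B) := by rw [hBspan]; exact h2
  -- B cannot be contained in a single point
  have hnotsingle : ∀ u : Fin 3 → ℝ, ¬ (B ⊆ {u}) := by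
    intro u hBu
    have hle : Submodule.span ℝ B ≤ Submodule.span ℝ {u} := Submodule.span_mono hBu
    have h1 : Module.finrank ℝ (Submodule.span ℝ ({u} : Set (Fin 3 → ℝ))) ≤ 1 := by
      by_cases hu : u = 0
      · rw [hu, Submodule.span_zero_singleton]; simp
      · rw [finrank_span_singleton hu]
    have := (Submodule.finrank_mono hle).trans h1
    omega
  -- get two distinct elements of B
  obtain ⟨v, hv⟩ : B.Nonempty := by
    rcases B.eq_empty_or_nonempty with h | h
    · exact absurd (h ▸ Set.empty_subset _) (hnotsingle 0)
    · exact h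
  obtain ⟨w, hw, hvw⟩ : ∃ w ∈ B, w ≠ v := by
    by_contra hcon
    push_neg at hcon
    exact hnotsingle v (fun z hz => hcon z hz)
  -- pair independence in coefficient form
  have hvne : v ≠ 0 := hBind.ne_zero ⟨v, hv⟩
  have hpairset : LinearIndependent ℝ ((↑) : ({w, v} : Set (Fin 3 → ℝ)) → Fin 3 → ℝ) := by
    apply LinearIndepOn.mono (R := ℝ) (v := id) (s := B) hBind
    intro z hz
    rcases hz with h | h
    · exact h ▸ hw
    · exact h ▸ hv
  have hwspan : w ∉ Submodule.span ℝ ({v} : Set (Fin 3 → ℝ)) := by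
    have := (linearIndepOn_id_insert (x := w) (s := {v}) (by simpa using hvw)).1 hpairset
    exact this.2
  have hIndvw : ∀ c d : ℝ, c • v + d • w = 0 → c = 0 ∧ d = 0 := by
    intro c d hcd
    by_cases hd : d = 0
    · subst hd
      simp only [smul_zero, zero_smul, add_zero] at hcd
      rcases smul_eq_zero.mp hcd with h | h
      · exact ⟨h, rfl⟩
      · exact absurd h hvne
    · exfalso
      apply hwspan
      rw [Submodule.mem_span_singleton]
      refine ⟨d⁻¹ * (-c), ?_⟩
      have hdw : d • w = (-c) • v := by
        rw [neg_smul]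
        linear_combination (norm := module) hcd
      rw [mul_smul, ← hdw, inv_smul_smul₀ hd]
  -- decompose v and w as differences of points of s
  obtain ⟨x1, hx1, y1, hy1, hveq⟩ := Set.mem_vsub.1 (hBsub hv)
  obtain ⟨x2, hx2, y2, hy2, hweq⟩ := Set.mem_vsub.1 (hBsub hw)
  obtain ⟨a1, ha1, rfl⟩ := hx1
  obtain ⟨b1, hb1, rfl⟩ := hy1
  obtain ⟨a2, ha2, rfl⟩ := hx2
  obtain ⟨b2, hb2, hb2eq⟩ := hy2
  rw [← hb2eq] at hweq
  rw [vsub_eq_sub] at hveq hweq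
  -- helper: failure of pair independence with v gives a multiple of v
  have hnotgood : ∀ u : Fin 3 → ℝ,
      (¬ ∀ c d : ℝ, c • v + d • u = 0 → c = 0 ∧ d = 0) → ∃ t : ℝ, u = t • v := by
    intro u hbad
    push_neg at hbad
    obtain ⟨c, d, hcd, hne⟩ := hbad
    by_cases hd : d = 0
    · exfalso
      subst hd
      simp only [smul_zero, zero_smul, add_zero] at hcd
      rcases smul_eq_zero.mp hcd with h | h
      · exact hne h rfl
      · exact absurd h hvne
    · refine ⟨d⁻¹ * (-c), ?_⟩
      have hdu : d • u = (-c) • v := by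
        rw [neg_smul]
        linear_combination (norm := module) hcd
      rw [mul_smul, ← hdu, inv_smul_smul₀ hd]
  by_cases hg1 : ∀ c d : ℝ, c • v + d • (ZtoR a2 - ZtoR b1) = 0 → c = 0 ∧ d = 0
  · refine ⟨b1, a1, a2, hb1, ha1, ha2, ?_⟩
    rw [← hveq] at hg1
    exact hg1
  by_cases hg2 : ∀ c d : ℝ, c • v + d • (ZtoR b2 - ZtoR b1) = 0 → c = 0 ∧ d = 0
  · refine ⟨b1, a1, b2, hb1, ha1, hb2, ?_⟩
    rw [← hveq] at hg2
    exact hg2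
  exfalso
  obtain ⟨t1, ht1⟩ := hnotgood _ hg1
  obtain ⟨t2, ht2⟩ := hnotgood _ hg2
  have hwv : w = (t1 - t2) • v := by
    have : w = (ZtoR a2 - ZtoR b1) - (ZtoR b2 - ZtoR b1) := by rw [← hweq]; abel
    rw [this, ht1, ht2, sub_smul]
  have := hIndvw (t1 - t2) (-1) (by rw [hwv]; module)
  norm_num at this

lemma caseA {k : ℕ} (A : Fin k → Fin 3 → ℝ) (b : Fin k → ℝ) (X : Set (Fin 3 → ℤ))
    (hfin : X.Finite)
    (hPX : ∀ z : Fin 3 → ℤ, (∀ i, ∑ j, A i j * (ZtoR z j) ≤ b i) → z ∈ X)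
    (p0 q1 q2 : Fin 3 → ℤ) (r : Fin 3 → ℝ)
    (hcone : ∀ a c t : ℝ, 0 ≤ a → 0 ≤ c → a + c ≤ 1 → 0 ≤ t → ∀ i,
      ∑ j, A i j * (ZtoR p0 j + a * (ZtoR q1 j - ZtoR p0 j)
        + c * (ZtoR q2 j - ZtoR p0 j) + t * r j) ≤ b i)
    (ρ1 ρ2 : ℝ) (ς : ℤ) (hς : 0 < (ς : ℝ) * ρ1)
    (hrep : ∀ j, r j = ρ1 * (ZtoR q1 j - ZtoR p0 j) + ρ2 * (ZtoR q2 j - ZtoR p0 j))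
    (hind : ∀ c d : ℝ, c • (ZtoR q1 - ZtoR p0) + d • (ZtoR q2 - ZtoR p0) = 0 → c = 0 ∧ d = 0) :
    False := by
  have hρ1 : ρ1 ≠ 0 := by
    intro h; rw [h, mul_zero] at hς; exact lt_irrefl _ hς
  have hςne : (ς : ℝ) ≠ 0 := by
    intro h; rw [h, zero_mul] at hς; exact lt_irrefl _ hς
  set σ : ℝ := (ς : ℝ) * ρ2 / ρ1 with hσ
  set F : ℕ → (Fin 3 → ℤ) := fun n => fun j =>
    p0 j + (ς * n) * (q1 j - p0 j) + ⌈(n : ℝ) * σ⌉ * (q2 j - p0 j) with hF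
  -- each F n satisfies the inequalities
  have hFP : ∀ n : ℕ, ∀ i, ∑ j, A i j * (ZtoR (F n) j) ≤ b i := by
    intro n i
    set t : ℝ := (n : ℝ) * ((ς : ℝ) / ρ1) with ht
    set c : ℝ := (⌈(n : ℝ) * σ⌉ : ℝ) - (n : ℝ) * σ with hc
    have hts : t * ρ1 = (ς : ℝ) * n := by
      rw [ht]; field_simp
    have htσ : t * ρ2 = (n : ℝ) * σ := by
      rw [ht, hσ]; field_simp
    have hid : ∀ j, ZtoR (F n) j = ZtoR p0 j + 0 * (ZtoR q1 j - ZtoR p0 j)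
        + c * (ZtoR q2 j - ZtoR p0 j) + t * r j := by
      intro j
      rw [hrep j]
      have : ZtoR (F n) j = (ZtoR p0 j) + ((ς:ℝ) * n) * (ZtoR q1 j - ZtoR p0 j)
          + (⌈(n : ℝ) * σ⌉ : ℝ) * (ZtoR q2 j - ZtoR p0 j) := by
        show ((F n j : ℤ) : ℝ) = _
        rw [hF]
        push_cast [ZtoR]
        ring
      rw [this, hc]
      have h1 : t * (ρ1 * (ZtoR q1 j - ZtoR p0 j) + ρ2 * (ZtoR q2 j - ZtoR p0 j))
          = ((ς:ℝ) * n) * (ZtoR q1 j - ZtoR p0 j) + ((n:ℝ) * σ) * (ZtoR q2 j - ZtoR p0 j) := by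
        rw [mul_add, ← mul_assoc, ← mul_assoc, hts, htσ]
      rw [h1]; ring
    have hsum : ∑ j, A i j * (ZtoR (F n) j) = ∑ j, A i j * (ZtoR p0 j
        + 0 * (ZtoR q1 j - ZtoR p0 j) + c * (ZtoR q2 j - ZtoR p0 j) + t * r j) := by
      apply Finset.sum_congr rfl
      intro j _
      rw [hid j]
    rw [hsum]
    apply hcone 0 c t le_rfl
    · rw [hc]; linarith [Int.le_ceil ((n:ℝ) * σ)]
    · rw [hc]; linarith [Int.ceil_lt_add_one ((n:ℝ) * σ)]
    · rw [ht]
      apply mul_nonneg (Nat.cast_nonneg n)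
      have : (ς:ℝ) / ρ1 = (ς:ℝ) * ρ1 / (ρ1 * ρ1) := by field_simp
      rw [this]
      exact div_nonneg hς.le (mul_self_nonneg ρ1)
  -- injectivity
  have hinj : Function.Injective F := by
    intro n m hnm
    have hreal : (((ς : ℝ) * n) - ((ς:ℝ) * m)) • (ZtoR q1 - ZtoR p0)
        + ((⌈(n : ℝ) * σ⌉ : ℝ) - (⌈(m : ℝ) * σ⌉ : ℝ)) • (ZtoR q2 - ZtoR p0) = 0 := by
      funext j
      have hj := congrFun hnm j
      rw [hF] at hj
      simp only [Pi.add_apply, Pi.smul_apply, Pi.sub_apply, Pi.zero_apply, smul_eq_mul, ZtoR]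
      have : ((p0 j + (ς * n) * (q1 j - p0 j) + ⌈(n : ℝ) * σ⌉ * (q2 j - p0 j) : ℤ) : ℝ)
          = ((p0 j + (ς * m) * (q1 j - p0 j) + ⌈(m : ℝ) * σ⌉ * (q2 j - p0 j) : ℤ) : ℝ) := by
        exact_mod_cast congrArg (fun z : ℤ => (z : ℝ)) hj
      push_cast at this
      nlinarith [this]
    obtain ⟨h1, h2⟩ := hind _ _ hreal
    have : (ς : ℝ) * ((n : ℝ) - m) = 0 := by ring_nf; ring_nf at h1; linarith
    have hnmr : (n : ℝ) = m := by
      rcases mul_eq_zero.mp this with h | h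
      · exact absurd h hςne
      · linarith
    exact_mod_cast hnmr
  exact (Set.infinite_of_injective_forall_mem hinj
    (fun n => hPX (F n) (hFP n))) hfin

lemma caseB {k : ℕ} (A : Fin k → Fin 3 → ℝ) (b : Fin k → ℝ) (X : Set (Fin 3 → ℤ))
    (hfin : X.Finite)
    (hPX : ∀ z : Fin 3 → ℤ, (∀ i, ∑ j, A i j * (ZtoR z j) ≤ b i) → z ∈ X)
    (p0 q1 q2 : Fin 3 → ℤ) (r : Fin 3 → ℝ)
    (hcone : ∀ a c t : ℝ, 0 ≤ a → 0 ≤ c → a + c ≤ 1 → 0 ≤ t → ∀ i,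
      ∑ j, A i j * (ZtoR p0 j + a * (ZtoR q1 j - ZtoR p0 j)
        + c * (ZtoR q2 j - ZtoR p0 j) + t * r j) ≤ b i)
    (q : Fin 3 → ℤ) (ρ1 ρ2 ρ3 : ℝ) (hρ3 : 0 < ρ3)
    (hrep : ∀ j, r j = ρ1 * (ZtoR q1 j - ZtoR p0 j) + ρ2 * (ZtoR q2 j - ZtoR p0 j)
      + ρ3 * (q j : ℝ))
    (hq : ∀ c d : ℝ, (∀ j, (q j : ℝ) = c * (ZtoR q1 j - ZtoR p0 j)
      + d * (ZtoR q2 j - ZtoR p0 j)) → False) :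
    False := by
  set α : ℝ := ρ1 / ρ3 with hα
  set β : ℝ := ρ2 / ρ3 with hβ
  set S : Set ℕ := {n | ((⌈(n:ℝ)*α⌉ : ℝ) - n*α) + ((⌈(n:ℝ)*β⌉ : ℝ) - n*β) ≤ 1} with hS
  set F : ℕ → (Fin 3 → ℤ) := fun n => fun j =>
    p0 j + n * q j + ⌈(n : ℝ) * α⌉ * (q1 j - p0 j) + ⌈(n : ℝ) * β⌉ * (q2 j - p0 j) with hF
  -- membership for n ∈ S
  have hFP : ∀ n ∈ S, ∀ i, ∑ j, A i j * (ZtoR (F n) j) ≤ b i := by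
    intro n hn i
    set t : ℝ := (n : ℝ) / ρ3 with ht
    set a : ℝ := (⌈(n : ℝ) * α⌉ : ℝ) - (n : ℝ) * α with ha
    set c : ℝ := (⌈(n : ℝ) * β⌉ : ℝ) - (n : ℝ) * β with hc
    have ht1 : t * ρ1 = (n : ℝ) * α := by rw [ht, hα]; field_simp
    have ht2 : t * ρ2 = (n : ℝ) * β := by rw [ht, hβ]; field_simp
    have ht3 : t * ρ3 = (n : ℝ) := by rw [ht]; field_simp
    have hid : ∀ j, ZtoR (F n) j = ZtoR p0 j + a * (ZtoR q1 j - ZtoR p0 j)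
        + c * (ZtoR q2 j - ZtoR p0 j) + t * r j := by
      intro j
      rw [hrep j]
      have hl : ZtoR (F n) j = (ZtoR p0 j) + (n : ℝ) * (q j : ℝ)
          + (⌈(n : ℝ) * α⌉ : ℝ) * (ZtoR q1 j - ZtoR p0 j)
          + (⌈(n : ℝ) * β⌉ : ℝ) * (ZtoR q2 j - ZtoR p0 j) := by
        show ((F n j : ℤ) : ℝ) = _
        rw [hF]
        push_cast [ZtoR]
        ring
      rw [hl, ha, hc]
      have h1 : t * (ρ1 * (ZtoR q1 j - ZtoR p0 j) + ρ2 * (ZtoR q2 j - ZtoR p0 j)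
          + ρ3 * (q j : ℝ))
          = ((n:ℝ) * α) * (ZtoR q1 j - ZtoR p0 j) + ((n:ℝ) * β) * (ZtoR q2 j - ZtoR p0 j)
            + (n : ℝ) * (q j : ℝ) := by
        rw [mul_add, mul_add, ← mul_assoc, ← mul_assoc, ← mul_assoc, ht1, ht2, ht3]
      rw [h1]; ring
    have hsum : ∑ j, A i j * (ZtoR (F n) j) = ∑ j, A i j * (ZtoR p0 j
        + a * (ZtoR q1 j - ZtoR p0 j) + c * (ZtoR q2 j - ZtoR p0 j) + t * r j) := by
      apply Finset.sum_congr rfl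
      intro j _
      rw [hid j]
    rw [hsum]
    apply hcone a c t
    · rw [ha]; linarith [Int.le_ceil ((n:ℝ) * α)]
    · rw [hc]; linarith [Int.le_ceil ((n:ℝ) * β)]
    · exact hn
    · rw [ht]
      exact div_nonneg (Nat.cast_nonneg n) hρ3.le
  -- injectivity
  have hinj : Function.Injective F := by
    intro n m hnm
    by_contra hne
    have hnmr : (n : ℝ) - (m : ℝ) ≠ 0 := by
      intro h
      apply hne
      have : (n : ℝ) = m := by linarith
      exact_mod_cast this
    apply hq (-(((⌈(n : ℝ) * α⌉ : ℝ) - (⌈(m : ℝ) * α⌉ : ℝ)) / ((n:ℝ) - m)))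
      (-(((⌈(n : ℝ) * β⌉ : ℝ) - (⌈(m : ℝ) * β⌉ : ℝ)) / ((n:ℝ) - m)))
    intro j
    have hj := congrFun hnm j
    rw [hF] at hj
    have hcast : ((p0 j + n * q j + ⌈(n : ℝ) * α⌉ * (q1 j - p0 j) + ⌈(n : ℝ) * β⌉ * (q2 j - p0 j) : ℤ) : ℝ)
        = ((p0 j + m * q j + ⌈(m : ℝ) * α⌉ * (q1 j - p0 j) + ⌈(m : ℝ) * β⌉ * (q2 j - p0 j) : ℤ) : ℝ) := by
      exact_mod_cast congrArg (fun z : ℤ => (z : ℝ)) hj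
    push_cast at hcast
    show (q j : ℝ) = _
    simp only [ZtoR]
    field_simp
    rw [mul_comm α (m:ℝ)]
    nlinarith [hcast]
  -- S is unbounded hence infinite
  have hSinf : S.Infinite := by
    by_contra hfin'
    rw [Set.not_infinite] at hfin'
    obtain ⟨mB, hmB⟩ := hfin'.bddAbove
    obtain ⟨n, hnN, hkey⟩ := key_ceil α β (mB + 1)
    have : n ≤ mB := hmB hkey
    omega
  have hXinf : X.Infinite := by
    apply Set.Infinite.mono _ (hSinf.image hinj.injOn)
    rintro z ⟨n, hn, rfl⟩
    exact hPX (F n) (hFP n hn)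
  exact hXinf hfin

/-- For a finite lattice-convex set `X ⊆ ℤ³` with `dim(X) ≥ 2`,
every polyhedral relaxation of `X` is bounded. -/
theorem relaxation_bounded_dim3 (X : Set (Fin 3 → ℤ)) (hfin : X.Finite)
    (hlc : IsLatticeConvex X) (hdim : 2 ≤ dimX X)
    (P : Set (Fin 3 → ℝ)) (hP : IsPolyhedron P)
    (hrel : {z : Fin 3 → ℤ | ZtoR z ∈ P} = X) :
    Bornology.IsBounded P := by
  classical
  by_contra hub
  obtain ⟨k, A, b, hPeq⟩ := hP
  subst hPeq
  obtain ⟨r, hrn, hrrec⟩ := recession_dir A b hub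
  obtain ⟨p0, p1, p2, hp0, hp1, hp2, hind⟩ := exists_triangle X hdim
  have hPX : ∀ z : Fin 3 → ℤ, (∀ i, ∑ j, A i j * (ZtoR z j) ≤ b i) → z ∈ X := by
    intro z hz
    rw [← hrel]
    exact hz
  have hXP : ∀ z ∈ X, ∀ i, ∑ j, A i j * (ZtoR z j) ≤ b i := by
    intro z hz
    rw [← hrel] at hz
    exact hz
  have hrne : r ≠ 0 := by
    intro h
    rw [h] at hrn
    simp at hrn
  -- the triangle-plus-ray cone is contained in the polyhedron
  have hcone : ∀ pa ∈ X, ∀ pb ∈ X, ∀ a c t : ℝ, 0 ≤ a → 0 ≤ c → a + c ≤ 1 → 0 ≤ t → ∀ i,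
      ∑ j, A i j * (ZtoR p0 j + a * (ZtoR pa j - ZtoR p0 j)
        + c * (ZtoR pb j - ZtoR p0 j) + t * r j) ≤ b i := by
    intro pa hpa pb hpb a c t ha hc hac ht i
    have h0 := hXP p0 hp0 i
    have h1 := hXP pa hpa i
    have h2 := hXP pb hpb i
    have hr := hrrec i
    have hsplit : ∑ j, A i j * (ZtoR p0 j + a * (ZtoR pa j - ZtoR p0 j)
        + c * (ZtoR pb j - ZtoR p0 j) + t * r j)
        = (1 - a - c) * (∑ j, A i j * ZtoR p0 j) + a * (∑ j, A i j * ZtoR pa j)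
          + c * (∑ j, A i j * ZtoR pb j) + t * (∑ j, A i j * r j) := by
      rw [Finset.mul_sum, Finset.mul_sum, Finset.mul_sum, Finset.mul_sum,
        ← Finset.sum_add_distrib, ← Finset.sum_add_distrib, ← Finset.sum_add_distrib]
      apply Finset.sum_congr rfl
      intro j _
      ring
    rw [hsplit]
    have hb : (1 - a - c) * (∑ j, A i j * ZtoR p0 j) + a * (∑ j, A i j * ZtoR pa j)
          + c * (∑ j, A i j * ZtoR pb j) + t * (∑ j, A i j * r j)
        ≤ (1 - a - c) * b i + a * b i + c * b i + t * 0 := by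
      apply add_le_add
      apply add_le_add
      apply add_le_add
      · exact mul_le_mul_of_nonneg_left h0 (by linarith)
      · exact mul_le_mul_of_nonneg_left h1 ha
      · exact mul_le_mul_of_nonneg_left h2 hc
      · exact mul_le_mul_of_nonneg_left hr ht
    have heq : (1 - a - c) * b i + a * b i + c * b i + t * 0 = b i := by ring
    rw [heq] at hb
    exact hb
  by_cases hrW : r ∈ Submodule.span ℝ {ZtoR p1 - ZtoR p0, ZtoR p2 - ZtoR p0}
  · -- Case A : recession direction inside the plane of the triangle
    obtain ⟨ρ1, ρ2, hρ⟩ := Submodule.mem_span_pair.1 hrW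
    have hrepj : ∀ j, r j = ρ1 * (ZtoR p1 j - ZtoR p0 j) + ρ2 * (ZtoR p2 j - ZtoR p0 j) := by
      intro j
      have h := congrFun hρ j
      simpa [smul_eq_mul] using h.symm
    have hρ12 : ρ1 ≠ 0 ∨ ρ2 ≠ 0 := by
      by_contra hcc
      push_neg at hcc
      apply hrne
      funext j
      rw [hrepj j, hcc.1, hcc.2]
      simp
    rcases hρ12 with hρ1 | hρ2
    · rcases hρ1.lt_or_gt with hlt | hlt
      · exact caseA A b X hfin hPX p0 p1 p2 r (hcone p1 hp1 p2 hp2) ρ1 ρ2 (-1)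
          (by push_cast; linarith) hrepj hind
      · exact caseA A b X hfin hPX p0 p1 p2 r (hcone p1 hp1 p2 hp2) ρ1 ρ2 1
          (by push_cast; linarith) hrepj hind
    · have hrepj' : ∀ j, r j = ρ2 * (ZtoR p2 j - ZtoR p0 j)
          + ρ1 * (ZtoR p1 j - ZtoR p0 j) := by
        intro j
        rw [hrepj j]
        ring
      have hind' : ∀ c d : ℝ, c • (ZtoR p2 - ZtoR p0) + d • (ZtoR p1 - ZtoR p0) = 0
          → c = 0 ∧ d = 0 := by
        intro c d h
        have := hind d c (by rw [← h]; abel)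
        exact ⟨this.2, this.1⟩
      rcases hρ2.lt_or_gt with hlt | hlt
      · exact caseA A b X hfin hPX p0 p2 p1 r (hcone p2 hp2 p1 hp1) ρ2 ρ1 (-1)
          (by push_cast; linarith) hrepj' hind'
      · exact caseA A b X hfin hPX p0 p2 p1 r (hcone p2 hp2 p1 hp1) ρ2 ρ1 1
          (by push_cast; linarith) hrepj' hind'
  · -- Case B : recession direction transversal to the plane of the triangle
    set v1 : Fin 3 → ℝ := ZtoR p1 - ZtoR p0 with hv1
    set v2 : Fin 3 → ℝ := ZtoR p2 - ZtoR p0 with hv2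
    -- some standard basis vector is outside the plane
    have hj0 : ∃ j0 : Fin 3, (Pi.single j0 (1:ℝ) : Fin 3 → ℝ) ∉ Submodule.span ℝ {v1, v2} := by
      by_contra hall
      push_neg at hall
      apply hrW
      have hrsum : r = ∑ j0, r j0 • (Pi.single j0 (1:ℝ) : Fin 3 → ℝ) := by
        funext jj
        rw [Finset.sum_apply]
        simp [Pi.single_apply]
      rw [hrsum]
      exact Submodule.sum_mem _ (fun j0 _ => Submodule.smul_mem _ _ (hall j0))
    obtain ⟨j0, hj0W⟩ := hj0
    set eR : Fin 3 → ℝ := Pi.single j0 (1:ℝ) with heRdef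
    -- the triple (single, v1, v2) spans everything
    have hv1ne : v1 ≠ 0 := by
      intro h
      have := hind 1 0 (by rw [h]; simp)
      exact one_ne_zero this.1
    have hpairfam : LinearIndependent ℝ ![v1, v2] :=
      LinearIndependent.pair_iff.2 (fun s t hst => hind s t hst)
    have htriple : LinearIndependent ℝ ![eR, v1, v2] := by
      rw [show (![eR, v1, v2]) = Fin.cons eR ![v1, v2] from rfl,
        linearIndependent_fin_cons]
      refine ⟨hpairfam, ?_⟩
      intro hmem
      apply hj0W
      have : Set.range ![v1, v2] = {v1, v2} := by
        ext z
        simp [Matrix.range_cons, Matrix.range_empty]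
        tauto
      rwa [this] at hmem
    have htop : Submodule.span ℝ (Set.range ![eR, v1, v2]) = ⊤ := by
      apply Submodule.eq_top_of_finrank_eq
      rw [finrank_span_eq_card htriple]
      simp [Module.finrank_pi]
    have hrmem : r ∈ Submodule.span ℝ (insert eR {v1, v2}) := by
      have : Set.range ![eR, v1, v2] = insert eR {v1, v2} := by
        ext z
        simp [Matrix.range_cons, Matrix.range_empty]
        tauto
      rw [← this, htop]
      trivial
    obtain ⟨a, z, hzW, hrz⟩ := Submodule.mem_span_insert.1 hrmem
    obtain ⟨ρ1, ρ2, hzeq⟩ := Submodule.mem_span_pair.1 hzW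
    have hane : a ≠ 0 := by
      intro h
      apply hrW
      rw [hrz, h, zero_smul, zero_add, ← hzeq]
      exact Submodule.add_mem _ (Submodule.smul_mem _ _ (Submodule.subset_span (by simp)))
        (Submodule.smul_mem _ _ (Submodule.subset_span (by simp)))
    -- cast lemma for the standard basis vector
    set qI : Fin 3 → ℤ := Pi.single j0 (1:ℤ) with hqIdef
    have hcastsingle : ∀ jj, ((qI jj : ℤ) : ℝ) = eR jj := by
      intro jj
      rw [hqIdef, heRdef]
      by_cases h : jj = j0
      · subst h; simp
      · simp [Pi.single_apply, h]
    have hrepr : ∀ j, r j = ρ1 * (ZtoR p1 j - ZtoR p0 j) + ρ2 * (ZtoR p2 j - ZtoR p0 j)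
        + a * eR j := by
      intro j
      have h := congrFun hrz j
      have h2 := congrFun hzeq j
      simp only [Pi.add_apply, Pi.smul_apply, smul_eq_mul] at h h2
      rw [h, ← h2]
      simp only [hv1, hv2, Pi.sub_apply] at *
      ring
    rcases hane.lt_or_gt with hlt | hlt
    · -- a < 0 : use the negated basis vector
      apply caseB A b X hfin hPX p0 p1 p2 r (hcone p1 hp1 p2 hp2)
        (-qI) ρ1 ρ2 (-a) (by linarith)
      · intro j
        rw [hrepr j]
        have hneg : (((-qI) j : ℤ) : ℝ) = -(eR j) := by
          simp only [Pi.neg_apply, Int.cast_neg, hcastsingle j]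
        rw [hneg]
        ring
      · intro c d hcd
        apply hj0W
        rw [Submodule.mem_span_pair]
        refine ⟨-c, -d, ?_⟩
        funext j
        have := hcd j
        have hc2 : (((-qI) j : ℤ) : ℝ) = -(eR j) := by
          simp only [Pi.neg_apply, Int.cast_neg, hcastsingle j]
        rw [hc2] at this
        simp only [Pi.add_apply, Pi.smul_apply, smul_eq_mul, hv1, hv2, Pi.sub_apply]
        linarith [this]
    · -- a > 0 : use the basis vector itself
      apply caseB A b X hfin hPX p0 p1 p2 r (hcone p1 hp1 p2 hp2)
        qI ρ1 ρ2 a hlt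
      · intro j
        rw [hrepr j, hcastsingle j]
      · intro c d hcd
        apply hj0W
        rw [Submodule.mem_span_pair]
        refine ⟨c, d, ?_⟩
        funext j
        have := hcd j
        rw [hcastsingle j] at this
        simp only [Pi.add_apply, Pi.smul_apply, smul_eq_mul, hv1, hv2, Pi.sub_apply]
        linarith [this]
end

section
/- Let X = {0, e1, e2, e3, e1+e3+e4, e2+e3+e5} ⊆ Z^5 and r = (0,0,0,1,√2). Then the unbounded polyhedron conv(X) + R·r satisfies (conv(X) + R·r) ∩ Z^5 = X. -/
open scoped Pointwise

lemma hull_ineq {S : Set (Fin 5 → ℝ)} (w0 w1 w2 w3 w4 b : ℝ)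
    (h : ∀ p ∈ S, w0 * p 0 + w1 * p 1 + w2 * p 2 + w3 * p 3 + w4 * p 4 ≤ b)
    {x} (hx : x ∈ convexHull ℝ S) :
    w0 * x 0 + w1 * x 1 + w2 * x 2 + w3 * x 3 + w4 * x 4 ≤ b := by
  have hlin : IsLinearMap ℝ (fun x : Fin 5 → ℝ =>
      w0 * x 0 + w1 * x 1 + w2 * x 2 + w3 * x 3 + w4 * x 4) := by
    constructor
    · intro a c; simp only [Pi.add_apply]; ring
    · intro c a; simp only [Pi.smul_apply, smul_eq_mul]; ring
  exact convexHull_min h (convex_halfSpace_le hlin b) hx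

lemma key_ineqs {x : Fin 5 → ℝ}
    (hx : x ∈ convexHull ℝ (ZtoR '' ({![0,0,0,0,0], ![1,0,0,0,0], ![0,1,0,0,0],
      ![0,0,1,0,0], ![1,0,1,1,0], ![0,1,1,0,1]} : Set (Fin 5 → ℤ)))) :
    0 ≤ x 0 ∧ 0 ≤ x 1 ∧ 0 ≤ x 2 ∧ x 2 ≤ 1 ∧ x 0 + x 1 ≤ 1 ∧
    0 ≤ x 3 ∧ 0 ≤ x 4 ∧ x 3 ≤ x 0 ∧ x 4 ≤ x 1 ∧ x 3 + x 4 ≤ x 2 ∧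
    x 0 + x 1 + x 2 - x 3 - x 4 ≤ 1 := by
  have check : ∀ w0 w1 w2 w3 w4 b : ℝ,
      (w0 * 0 + w1 * 0 + w2 * 0 + w3 * 0 + w4 * 0 ≤ b) →
      (w0 * 1 + w1 * 0 + w2 * 0 + w3 * 0 + w4 * 0 ≤ b) →
      (w0 * 0 + w1 * 1 + w2 * 0 + w3 * 0 + w4 * 0 ≤ b) →
      (w0 * 0 + w1 * 0 + w2 * 1 + w3 * 0 + w4 * 0 ≤ b) →
      (w0 * 1 + w1 * 0 + w2 * 1 + w3 * 1 + w4 * 0 ≤ b) →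
      (w0 * 0 + w1 * 1 + w2 * 1 + w3 * 0 + w4 * 1 ≤ b) →
      w0 * x 0 + w1 * x 1 + w2 * x 2 + w3 * x 3 + w4 * x 4 ≤ b := by
    intro w0 w1 w2 w3 w4 b h0 h1 h2 h3 h4 h5
    refine hull_ineq w0 w1 w2 w3 w4 b ?_ hx
    rintro p ⟨q, hq, rfl⟩
    simp only [Set.mem_insert_iff, Set.mem_singleton_iff] at hq
    rcases hq with rfl | rfl | rfl | rfl | rfl | rfl <;> simp [ZtoR] <;> linarith
  refine ⟨?_, ?_, ?_, ?_, ?_, ?_, ?_, ?_, ?_, ?_, ?_⟩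
  · have := check (-1) 0 0 0 0 0 (by norm_num) (by norm_num) (by norm_num) (by norm_num) (by norm_num) (by norm_num); linarith
  · have := check 0 (-1) 0 0 0 0 (by norm_num) (by norm_num) (by norm_num) (by norm_num) (by norm_num) (by norm_num); linarith
  · have := check 0 0 (-1) 0 0 0 (by norm_num) (by norm_num) (by norm_num) (by norm_num) (by norm_num) (by norm_num); linarith
  · have := check 0 0 1 0 0 1 (by norm_num) (by norm_num) (by norm_num) (by norm_num) (by norm_num) (by norm_num); linarith
  · have := check 1 1 0 0 0 1 (by norm_num) (by norm_num) (by norm_num) (by norm_num) (by norm_num) (by norm_num); linarith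
  · have := check 0 0 0 (-1) 0 0 (by norm_num) (by norm_num) (by norm_num) (by norm_num) (by norm_num) (by norm_num); linarith
  · have := check 0 0 0 0 (-1) 0 (by norm_num) (by norm_num) (by norm_num) (by norm_num) (by norm_num) (by norm_num); linarith
  · have := check (-1) 0 0 1 0 0 (by norm_num) (by norm_num) (by norm_num) (by norm_num) (by norm_num) (by norm_num); linarith
  · have := check 0 (-1) 0 0 1 0 (by norm_num) (by norm_num) (by norm_num) (by norm_num) (by norm_num) (by norm_num); linarith
  · have := check 0 0 (-1) 1 1 0 (by norm_num) (by norm_num) (by norm_num) (by norm_num) (by norm_num) (by norm_num); linarith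
  · have := check 1 1 1 (-1) (-1) 1 (by norm_num) (by norm_num) (by norm_num) (by norm_num) (by norm_num) (by norm_num); linarith

lemma int_sqrt2 {n m : ℤ} (h : (m : ℝ) = n * Real.sqrt 2) : n = 0 ∧ m = 0 := by
  by_cases hn : n = 0
  · subst hn; simp at h; exact ⟨rfl, by exact_mod_cast h⟩
  · exfalso
    apply irrational_sqrt_two
    refine ⟨(m : ℚ) / (n : ℚ), ?_⟩
    have hn' : (n : ℝ) ≠ 0 := Int.cast_ne_zero.mpr hn
    push_cast
    field_simp
    linarith [h]

/-- The five-dimensional example of Kaibel & Weltge: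
`X = {0, e₁, e₂, e₃, e₁+e₃+e₄, e₂+e₃+e₅} ⊆ ℤ⁵` and `r = (0,0,0,1,√2)`.
The unbounded polyhedron `conv(X) + ℝ·r` is a relaxation of `X`. -/
theorem five_dim_unbounded_relaxation :
    let X : Set (Fin 5 → ℤ) :=
      {![0,0,0,0,0], ![1,0,0,0,0], ![0,1,0,0,0], ![0,0,1,0,0], ![1,0,1,1,0], ![0,1,1,0,1]}
    let r : Fin 5 → ℝ := ![0, 0, 0, 1, Real.sqrt 2]
    let P : Set (Fin 5 → ℝ) :=
      convexHull ℝ (ZtoR '' X) + Set.range (fun t : ℝ => t • r)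
    ¬ Bornology.IsBounded P ∧ {z : Fin 5 → ℤ | ZtoR z ∈ P} = X := by
  intro X r P
  have hmem : ∀ v ∈ X, ∀ t : ℝ, ZtoR v + t • r ∈ P := by
    intro v hv t
    exact Set.add_mem_add (subset_convexHull ℝ _ ⟨v, hv, rfl⟩) ⟨t, rfl⟩
  constructor
  · intro hb
    rw [isBounded_iff_forall_norm_le] at hb
    obtain ⟨C, hC⟩ := hb
    set t : ℝ := |C| + 1 with ht
    have hv0 : (![0,0,0,0,0] : Fin 5 → ℤ) ∈ X := by left; rfl
    have hp : ZtoR ![0,0,0,0,0] + t • r ∈ P := hmem _ hv0 t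
    have h1 := hC _ hp
    have h2 : ‖(ZtoR ![0,0,0,0,0] + t • r) 3‖ ≤ ‖ZtoR ![0,0,0,0,0] + t • r‖ :=
      norm_le_pi_norm _ 3
    have h3 : (ZtoR ![0,0,0,0,0] + t • r) 3 = t := by simp [ZtoR, r]
    rw [h3, Real.norm_eq_abs] at h2
    have h4 : |t| = t := abs_of_pos (by positivity)
    rw [h4] at h2
    have := le_abs_self C
    linarith
  · ext z
    simp only [Set.mem_setOf_eq]
    constructor
    · intro hz
      rw [Set.mem_add] at hz
      obtain ⟨x, hx, y, ⟨t, rfl⟩, heq⟩ := hz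
      have e0 : x 0 = (z 0 : ℝ) := by have := congrFun heq 0; simpa [ZtoR, r] using this
      have e1 : x 1 = (z 1 : ℝ) := by have := congrFun heq 1; simpa [ZtoR, r] using this
      have e2 : x 2 = (z 2 : ℝ) := by have := congrFun heq 2; simpa [ZtoR, r] using this
      have e3 : x 3 + t = (z 3 : ℝ) := by have := congrFun heq 3; simpa [ZtoR, r] using this
      have e4 : x 4 + t * Real.sqrt 2 = (z 4 : ℝ) := by
        have := congrFun heq 4; simpa [ZtoR, r] using this
      obtain ⟨k1, k2, k3, k4, k5, k6, k7, k8, k9, k10, k11⟩ := key_ineqs hx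
      have hz0 : 0 ≤ z 0 := by exact_mod_cast e0 ▸ k1
      have hz1 : 0 ≤ z 1 := by exact_mod_cast e1 ▸ k2
      have hz2 : 0 ≤ z 2 := by exact_mod_cast e2 ▸ k3
      have hz2' : z 2 ≤ 1 := by exact_mod_cast e2 ▸ k4
      have hz01 : z 0 + z 1 ≤ 1 := by
        have : (z 0 : ℝ) + (z 1 : ℝ) ≤ 1 := by rw [← e0, ← e1]; exact k5
        exact_mod_cast this
      have hcase : (z 0 = 0 ∧ z 1 = 0 ∧ z 2 = 0) ∨ (z 0 = 1 ∧ z 1 = 0 ∧ z 2 = 0) ∨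
          (z 0 = 0 ∧ z 1 = 1 ∧ z 2 = 0) ∨ (z 0 = 0 ∧ z 1 = 0 ∧ z 2 = 1) ∨
          (z 0 = 1 ∧ z 1 = 0 ∧ z 2 = 1) ∨ (z 0 = 0 ∧ z 1 = 1 ∧ z 2 = 1) := by omega
      simp only [X, Set.mem_insert_iff, Set.mem_singleton_iff]
      rcases hcase with ⟨h0, h1, h2⟩ | ⟨h0, h1, h2⟩ | ⟨h0, h1, h2⟩ | ⟨h0, h1, h2⟩ |
        ⟨h0, h1, h2⟩ | ⟨h0, h1, h2⟩
      · have r0 : x 0 = 0 := by rw [e0, h0]; norm_num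
        have r1 : x 1 = 0 := by rw [e1, h1]; norm_num
        have hx3 : x 3 = 0 := by linarith
        have hx4 : x 4 = 0 := by linarith
        have hs : ((z 4 : ℤ) : ℝ) = ((z 3 : ℤ) : ℝ) * Real.sqrt 2 := by
          have ht' : (z 3 : ℝ) = t := by linarith
          rw [ht']; linarith
        obtain ⟨hn, hm⟩ := int_sqrt2 hs
        refine Or.inl ?_
        funext i; fin_cases i <;> simp [h0, h1, h2, hn, hm]
      · have r0 : x 0 = 1 := by rw [e0, h0]; norm_num
        have r1 : x 1 = 0 := by rw [e1, h1]; norm_num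
        have r2 : x 2 = 0 := by rw [e2, h2]; norm_num
        have hx4 : x 4 = 0 := by linarith
        have hx3 : x 3 = 0 := by linarith
        have hs : ((z 4 : ℤ) : ℝ) = ((z 3 : ℤ) : ℝ) * Real.sqrt 2 := by
          have ht' : (z 3 : ℝ) = t := by linarith
          rw [ht']; linarith
        obtain ⟨hn, hm⟩ := int_sqrt2 hs
        refine Or.inr (Or.inl ?_)
        funext i; fin_cases i <;> simp [h0, h1, h2, hn, hm]
      · have r0 : x 0 = 0 := by rw [e0, h0]; norm_num
        have r2 : x 2 = 0 := by rw [e2, h2]; norm_num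
        have hx3 : x 3 = 0 := by linarith
        have hx4 : x 4 = 0 := by linarith
        have hs : ((z 4 : ℤ) : ℝ) = ((z 3 : ℤ) : ℝ) * Real.sqrt 2 := by
          have ht' : (z 3 : ℝ) = t := by linarith
          rw [ht']; linarith
        obtain ⟨hn, hm⟩ := int_sqrt2 hs
        refine Or.inr (Or.inr (Or.inl ?_))
        funext i; fin_cases i <;> simp [h0, h1, h2, hn, hm]
      · have r0 : x 0 = 0 := by rw [e0, h0]; norm_num
        have r1 : x 1 = 0 := by rw [e1, h1]; norm_num
        have hx3 : x 3 = 0 := by linarith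
        have hx4 : x 4 = 0 := by linarith
        have hs : ((z 4 : ℤ) : ℝ) = ((z 3 : ℤ) : ℝ) * Real.sqrt 2 := by
          have ht' : (z 3 : ℝ) = t := by linarith
          rw [ht']; linarith
        obtain ⟨hn, hm⟩ := int_sqrt2 hs
        refine Or.inr (Or.inr (Or.inr (Or.inl ?_)))
        funext i; fin_cases i <;> simp [h0, h1, h2, hn, hm]
      · -- (1,0,1) : x3 = 1, x4 = 0
        have r0 : x 0 = 1 := by rw [e0, h0]; norm_num
        have r1 : x 1 = 0 := by rw [e1, h1]; norm_num
        have r2 : x 2 = 1 := by rw [e2, h2]; norm_num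
        have hx4 : x 4 = 0 := by linarith
        have hx3 : x 3 = 1 := by linarith
        have hs : ((z 4 : ℤ) : ℝ) = ((z 3 - 1 : ℤ) : ℝ) * Real.sqrt 2 := by
          push_cast
          have ht' : (z 3 : ℝ) - 1 = t := by linarith
          rw [ht']; linarith
        obtain ⟨hn, hm⟩ := int_sqrt2 hs
        have hz3 : z 3 = 1 := by omega
        refine Or.inr (Or.inr (Or.inr (Or.inr (Or.inl ?_))))
        funext i; fin_cases i <;> simp [h0, h1, h2, hz3, hm]
      · -- (0,1,1) : x3 = 0, x4 = 1
        have r0 : x 0 = 0 := by rw [e0, h0]; norm_num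
        have r1 : x 1 = 1 := by rw [e1, h1]; norm_num
        have r2 : x 2 = 1 := by rw [e2, h2]; norm_num
        have hx3 : x 3 = 0 := by linarith
        have hx4 : x 4 = 1 := by linarith
        have hs : ((z 4 - 1 : ℤ) : ℝ) = ((z 3 : ℤ) : ℝ) * Real.sqrt 2 := by
          push_cast
          have ht' : (z 3 : ℝ) = t := by linarith
          rw [ht']; linarith
        obtain ⟨hn, hm⟩ := int_sqrt2 hs
        have hz4 : z 4 = 1 := by omega
        refine Or.inr (Or.inr (Or.inr (Or.inr (Or.inr ?_))))
        funext i; fin_cases i <;> simp [h0, h1, h2, hn, hz4]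
    · intro hz
      have := hmem z hz 0
      rwa [zero_smul, add_zero] at this
end

section
/- Let X ⊆ Z^d be a finite lattice-convex set and Ax ≤ b a system of linear inequalities. Then Ax ≤ b separates X from Z^d \ X if and only if Ax ≤ b separates X from obs(X), where obs(X) = {y ∈ Z^d \ X : conv(X ∪ {y}) ∩ Z^d = X ∪ {y}}. -/
/-- The set of observers of `X`: points `y ∈ ℤ^d \ X` such that `X ∪ {y}` is lattice-convex. -/
def obs {d : ℕ} (X : Set (Fin d → ℤ)) : Set (Fin d → ℤ) :=
  {y | y ∉ X ∧ IsLatticeConvex (X ∪ {y})}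

/-- The system `Ax ≤ b` separates `X` from `Y`: all inequalities hold on `X` and at least
one inequality is violated on each point of `Y`. -/
def Separates {d k : ℕ} (A : Fin k → Fin d → ℝ) (b : Fin k → ℝ)
    (X Y : Set (Fin d → ℤ)) : Prop :=
  (∀ x ∈ X, ∀ i, ∑ j, A i j * (x j : ℝ) ≤ b i) ∧
  ∀ y ∈ Y, ∃ i, b i < ∑ j, A i j * (y j : ℝ)

lemma ZtoR_inj {d : ℕ} : Function.Injective (ZtoR (d:=d)) := by
  intro a b h; funext i
  have := congrFun h i
  simpa [ZtoR] using this

lemma finite_lattice_of_bounded {d : ℕ} {S : Set (Fin d → ℝ)}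
    (hS : Bornology.IsBounded S) : {z : Fin d → ℤ | ZtoR z ∈ S}.Finite := by
  obtain ⟨r, hr⟩ := (Metric.isBounded_iff_subset_closedBall 0).1 hS
  apply Set.Finite.subset (Set.finite_Icc (fun _ => (⌈-r⌉ : ℤ)) (fun _ => ⌊r⌋))
  intro z hz
  have hball := hr hz
  have hnorm : ‖ZtoR z‖ ≤ r := by
    simpa [Metric.mem_closedBall, dist_zero_right] using hball
  constructor <;> intro i
  · have h1 : |(z i : ℝ)| ≤ r := le_trans (by simpa [ZtoR] using norm_le_pi_norm (ZtoR z) i) hnorm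
    have : -r ≤ (z i : ℝ) := by linarith [neg_abs_le ((z i : ℝ)), abs_le.1 h1]
    exact Int.ceil_le.2 this
  · have h1 : |(z i : ℝ)| ≤ r := le_trans (by simpa [ZtoR] using norm_le_pi_norm (ZtoR z) i) hnorm
    exact Int.le_floor.2 ((abs_le.1 h1).2)

lemma finite_hull {d : ℕ} {X : Set (Fin d → ℤ)} (h : X.Finite) :
    {z : Fin d → ℤ | ZtoR z ∈ convexHull ℝ (ZtoR '' X)}.Finite :=
  finite_lattice_of_bounded (((h.image ZtoR).isCompact_convexHull ℝ).isBounded)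

/-- For y ∉ X there is an observer in conv(X ∪ {y}). -/
lemma exists_obs {d : ℕ} {X : Set (Fin d → ℤ)} (hfin : X.Finite) (hlc : IsLatticeConvex X)
    (hne : X.Nonempty) {y : Fin d → ℤ} (hy : y ∉ X) :
    ∃ z ∈ obs X, ZtoR z ∈ convexHull ℝ (ZtoR '' (X ∪ {y})) := by
  classical
  set S : (Fin d → ℤ) → Set (Fin d → ℤ) :=
    fun w => {v | v ∉ X ∧ ZtoR v ∈ convexHull ℝ (ZtoR '' (X ∪ {w}))} with hSdef
  have hSfin : ∀ w, (S w).Finite := fun w =>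
    (finite_hull (hfin.union (Set.finite_singleton w))).subset (fun v hv => hv.2)
  have hself : ∀ w, w ∉ X → w ∈ S w := by
    intro w hw
    exact ⟨hw, subset_convexHull ℝ _ ⟨w, Set.mem_union_right _ rfl, rfl⟩⟩
  -- monotonicity: if v ∈ conv(X ∪ {w}) then conv(X∪{v}) ⊆ conv(X∪{w})
  have hmono : ∀ w v : Fin d → ℤ, ZtoR v ∈ convexHull ℝ (ZtoR '' (X ∪ {w})) →
      convexHull ℝ (ZtoR '' (X ∪ {v})) ⊆ convexHull ℝ (ZtoR '' (X ∪ {w})) := by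
    intro w v hv
    apply convexHull_min _ (convex_convexHull ℝ _)
    rintro p ⟨u, hu, rfl⟩
    rcases hu with hu | hu
    · exact subset_convexHull ℝ _ ⟨u, Set.mem_union_left _ hu, rfl⟩
    · rw [Set.mem_singleton_iff.1 hu]; exact hv
  -- pick z ∈ S y minimizing ncard (S z)
  obtain ⟨z, hzSy, hzmin⟩ := Set.exists_min_image (S y) (fun w => (S w).ncard)
    (hSfin y) ⟨y, hself y hy⟩
  refine ⟨z, ⟨hzSy.1, ?_⟩, hzSy.2⟩
  -- z is an observer
  intro w hw
  by_contra hwmem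
  have hwX : w ∉ X := fun h => (hwmem : w ∉ X ∪ {z}) (Set.mem_union_left _ h)
  have hwz : w ≠ z := fun h => (hwmem : w ∉ X ∪ {z}) (by rw [h]; exact Set.mem_union_right _ rfl)
  have hwconv : ZtoR w ∈ convexHull ℝ (ZtoR '' (X ∪ {z})) := hw
  have hwSz : w ∈ S z := ⟨hwX, hwconv⟩
  -- w ∈ S y
  have hwSy : w ∈ S y := ⟨hwX, hmono y z hzSy.2 hwconv⟩
  -- S w ⊆ S z
  have hsub : S w ⊆ S z := fun v hv => ⟨hv.1, hmono z w hwconv hv.2⟩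
  have heq : S w = S z := Set.eq_of_subset_of_ncard_le hsub (hzmin w hwSy) (hSfin z)
  have hzSw : z ∈ S w := heq ▸ (hself z hzSy.1)
  -- now the algebra
  have hXne : (ZtoR '' X).Nonempty := hne.image _
  have hins : ∀ v : Fin d → ℤ, ZtoR '' (X ∪ {v}) = insert (ZtoR v) (ZtoR '' X) := by
    intro v
    rw [Set.union_comm, Set.image_union, Set.image_singleton, Set.singleton_union]
  have hw' : ZtoR w ∈ convexJoin ℝ {ZtoR z} (convexHull ℝ (ZtoR '' X)) := by
    rw [← convexHull_insert hXne, ← hins]; exact hwconv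
  have hz' : ZtoR z ∈ convexJoin ℝ {ZtoR w} (convexHull ℝ (ZtoR '' X)) := by
    rw [← convexHull_insert hXne, ← hins]; exact hzSw.2
  rw [mem_convexJoin] at hw' hz'
  obtain ⟨x0, hx0, p, hp, hseg⟩ := hw'
  rw [Set.mem_singleton_iff] at hx0; subst hx0
  obtain ⟨a, c, ha, hc, hac, hpw⟩ := hseg
  obtain ⟨x1, hx1, q, hq, hseg'⟩ := hz'
  rw [Set.mem_singleton_iff] at hx1; subst hx1
  obtain ⟨a', c', ha', hc', hac', hqz⟩ := hseg'
  -- ZtoR w = a • ZtoR z + c • p,  ZtoR z = a' • ZtoR w + c' • q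
  have hA : a ≤ 1 := by linarith
  have hA' : a' ≤ 1 := by linarith
  by_cases haa : a * a' = 1
  · -- then a = a' = 1, so w = z
    have h1 : a * a' ≤ a := mul_le_of_le_one_right ha hA'
    have ha1 : a = 1 := le_antisymm hA (by linarith)
    have hc0 : c = 0 := by linarith
    apply hwz
    apply ZtoR_inj
    rw [← hpw, ha1, hc0]; simp
  · have hle : a' * a ≤ 1 := by
      have := mul_le_one₀ hA' ha hA
      linarith
    have hlt : a' * a < 1 := lt_of_le_of_ne hle (fun h => haa (by rw [mul_comm]; exact h))
    have hpos : 0 < 1 - a' * a := by linarith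
    -- ZtoR z = a' • (a • ZtoR z + c • p) + c' • q
    have h2 : a' • (a • ZtoR z + c • p) + c' • q = ZtoR z := by rw [hpw]; exact hqz
    have key : (1 - a' * a) • ZtoR z = (a' * c) • p + c' • q := by
      linear_combination (norm := module) -h2
    have hcoef : (a' * c) + c' = 1 - a' * a := by linear_combination a' * hac + hac'
    have hzconv : ZtoR z ∈ convexHull ℝ (ZtoR '' X) := by
      have hz2 : ZtoR z = ((a' * c) / (1 - a' * a)) • p + (c' / (1 - a' * a)) • q := by
        have := congrArg (fun v => (1 - a' * a)⁻¹ • v) key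
        simp only [smul_smul, inv_mul_cancel₀ (ne_of_gt hpos), one_smul] at this
        rw [this, smul_add, smul_smul, smul_smul]
        ring_nf
      rw [hz2]
      apply (convex_convexHull ℝ (ZtoR '' X)) hp hq
      · positivity
      · positivity
      · rw [← add_div, hcoef, div_self (ne_of_gt hpos)]
    exact hzSy.1 (hlc z hzconv)

lemma image_union_singleton {d : ℕ} (X : Set (Fin d → ℤ)) (v : Fin d → ℤ) :
    ZtoR '' (X ∪ {v}) = insert (ZtoR v) (ZtoR '' X) := by
  rw [Set.union_comm, Set.image_union, Set.image_singleton, Set.singleton_union]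


/-- A system `Ax ≤ b` separates a finite lattice-convex set `X` from `ℤ^d \ X`
iff it separates `X` from its set of observers. -/
theorem separates_iff_separates_obs {d k : ℕ} (X : Set (Fin d → ℤ)) (hfin : X.Finite)
    (hlc : IsLatticeConvex X) (A : Fin k → Fin d → ℝ) (b : Fin k → ℝ) :
    Separates A b X Xᶜ ↔ Separates A b X (obs X) := by
  constructor
  · rintro ⟨h1, h2⟩
    exact ⟨h1, fun y hy => h2 y hy.1⟩
  · rintro ⟨h1, h2⟩
    refine ⟨h1, fun y hy => ?_⟩
    have hyX : y ∉ X := hy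
    rcases X.eq_empty_or_nonempty with rfl | hne
    · refine h2 y ⟨hyX, ?_⟩
      intro z hz
      have : ZtoR '' ((∅ : Set (Fin d → ℤ)) ∪ {y}) = {ZtoR y} := by simp
      rw [this, convexHull_singleton, Set.mem_singleton_iff] at hz
      have : z = y := ZtoR_inj hz
      rw [this]; exact Set.mem_union_right _ rfl
    · obtain ⟨z, hzobs, hzconv⟩ := exists_obs hfin hlc hne hyX
      obtain ⟨i, hi⟩ := h2 z hzobs
      -- every point of conv X satisfies inequality i
      have hconvhalf : ∀ p ∈ convexHull ℝ (ZtoR '' X), ∑ j, A i j * p j ≤ b i := by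
        have hlin : IsLinearMap ℝ (fun x : Fin d → ℝ => ∑ j, A i j * x j) := by
          constructor
          · intro x y; simp [mul_add, Finset.sum_add_distrib]
          · intro r x
            simp only [Pi.smul_apply, smul_eq_mul, Finset.mul_sum]
            exact Finset.sum_congr rfl (fun j _ => by ring)
        intro p hp
        have hcvx : Convex ℝ {x : Fin d → ℝ | ∑ j, A i j * x j ≤ b i} :=
          convex_halfSpace_le hlin (b i)
        exact convexHull_min (by rintro _ ⟨x, hx, rfl⟩; exact h1 x hx i) hcvx hp
      -- decompose z ∈ conv(X ∪ {y})
      rw [image_union_singleton, convexHull_insert (hne.image _), mem_convexJoin] at hzconv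
      obtain ⟨x0, hx0, p, hp, hseg⟩ := hzconv
      rw [Set.mem_singleton_iff] at hx0; subst hx0
      obtain ⟨a, c, ha, hc, hac, hseq⟩ := hseg
      have heq' : ∀ j, (z j : ℝ) = a * (y j : ℝ) + c * p j := by
        intro j
        have := congrFun hseq j
        simpa [ZtoR] using this.symm
      have hsum : ∑ j, A i j * (z j : ℝ)
          = a * (∑ j, A i j * (y j : ℝ)) + c * (∑ j, A i j * p j) := by
        simp only [heq', Finset.mul_sum, ← Finset.sum_add_distrib]
        exact Finset.sum_congr rfl (fun j _ => by ring)
      have hp_le : ∑ j, A i j * p j ≤ b i := hconvhalf p hp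
      rw [hsum] at hi
      refine ⟨i, ?_⟩
      rcases eq_or_lt_of_le ha with rfl | hapos
      · exfalso
        have hc1 : c = 1 := by linarith
        rw [hc1] at hi; norm_num at hi
        linarith
      · by_contra hcon
        push_neg at hcon
        have h3 : a * ∑ j, A i j * (y j : ℝ) ≤ a * b i :=
          mul_le_mul_of_nonneg_left hcon ha
        have h4 : c * ∑ j, A i j * p j ≤ c * b i := mul_le_mul_of_nonneg_left hp_le hc
        have h5 : a * b i + c * b i = b i := by linear_combination (b i) * hac
        linarith
end

section
/- Let X ⊆ Z^d be a full-dimensional finite lattice-convex set that is parity-complete, i.e., for every z ∈ Z^d there exists x ∈ X with (x − z)/2 ∈ Z^d. Then obs(X) ⊆ 2X − X = {2x' − x : x, x' ∈ X}; in particular obs(X) is finite. -/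
/-- For a full-dimensional finite lattice-convex parity-complete set `X ⊆ ℤ^d`,
`obs(X) ⊆ 2X − X`; in particular `obs(X)` is finite. -/
theorem obs_subset_of_parity_complete {d : ℕ} (X : Set (Fin d → ℤ)) (hfin : X.Finite)
    (hlc : IsLatticeConvex X) (hfull : affineSpan ℝ (ZtoR '' X) = ⊤)
    (hpar : ∀ z : Fin d → ℤ, ∃ x ∈ X, ∀ i, (2 : ℤ) ∣ (x i - z i)) :
    obs X ⊆ {z | ∃ x ∈ X, ∃ x' ∈ X, z = 2 • x' - x} ∧ (obs X).Finite := by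
  have hsub : obs X ⊆ {z | ∃ x ∈ X, ∃ x' ∈ X, z = 2 • x' - x} := by
    rintro y ⟨hyX, hy⟩
    obtain ⟨x, hxX, h2⟩ := hpar y
    choose c hc using h2
    set m : Fin d → ℤ := x - c with hm
    have hmem : ZtoR m ∈ convexHull ℝ (ZtoR '' (X ∪ {y})) := by
      have hx : ZtoR x ∈ convexHull ℝ (ZtoR '' (X ∪ {y})) :=
        subset_convexHull ℝ _ ⟨x, Or.inl hxX, rfl⟩
      have hyy : ZtoR y ∈ convexHull ℝ (ZtoR '' (X ∪ {y})) :=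
        subset_convexHull ℝ _ ⟨y, Or.inr rfl, rfl⟩
      have hcomb := (convex_convexHull ℝ (ZtoR '' (X ∪ {y}))) hx hyy
        (by norm_num : (0:ℝ) ≤ 1/2) (by norm_num : (0:ℝ) ≤ 1/2) (by norm_num)
      convert hcomb using 1
      funext i
      have hci : (x i : ℝ) - y i = 2 * c i := by exact_mod_cast hc i
      simp only [ZtoR, hm, Pi.sub_apply, Pi.add_apply, Pi.smul_apply, smul_eq_mul]
      push_cast
      linarith
    have hmXy : m ∈ X ∪ {y} := hy m hmem
    have hmy : m ≠ y := by
      intro h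
      apply hyX
      have hxy : x = y := by
        funext i
        have h1 := hc i
        have h2 : m i = y i := congrFun h i
        simp only [hm, Pi.sub_apply] at h2
        omega
      rwa [hxy] at hxX
    have hmX : m ∈ X := by
      rcases hmXy with h | h
      · exact h
      · exact absurd h hmy
    refine ⟨x, hxX, m, hmX, ?_⟩
    funext i
    have h1 := hc i
    simp only [hm, Pi.sub_apply, Pi.smul_apply, nsmul_eq_mul, smul_eq_mul, Pi.mul_apply, Pi.natCast_apply, Nat.cast_ofNat, Pi.ofNat_apply]
    omega
  refine ⟨hsub, ?_⟩
  have himg : {z : Fin d → ℤ | ∃ x ∈ X, ∃ x' ∈ X, z = 2 • x' - x}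
      ⊆ (fun p : (Fin d → ℤ) × (Fin d → ℤ) => 2 • p.2 - p.1) '' (X ×ˢ X) := by
    rintro z ⟨x, hx, x', hx', rfl⟩
    exact ⟨(x, x'), ⟨hx, hx'⟩, rfl⟩
  exact Set.Finite.subset (((hfin.prod hfin).image _)) (hsub.trans himg)
end

section
/- Let X, Y be non-empty finite subsets of Q^d with X lattice-convex, and k a positive integer. If X can be separated from Y by a system of k linear inequalities with real coefficients, then X can be separated from Y by a system of k linear inequalities with rational coefficients. -/
open Set

private lemma cont_aux {k d : ℕ} (i : Fin k) (c : Fin d → ℝ) :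
    Continuous (fun p : (Fin k → Fin d → ℝ) × (Fin k → ℝ) => ∑ j, p.1 i j * c j) :=
  continuous_finset_sum _ fun j _ =>
    (by fun_prop)

private lemma cont_aux2 {k d : ℕ} (i : Fin k) :
    Continuous (fun p : (Fin k → Fin d → ℝ) × (Fin k → ℝ) => p.2 i) :=
  (continuous_apply i).comp continuous_snd

/-- If two non-empty finite subsets `X, Y ⊆ ℚ^d` (with `X` lattice-convex) can be separated
by a system of `k` linear inequalities with real coefficients, then they can be separated by
a system of `k` linear inequalities with rational coefficients. -/
theorem rational_separation {d : ℕ} (X Y : Set (Fin d → ℚ))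
    (hXfin : X.Finite) (hYfin : Y.Finite) (hXne : X.Nonempty) (hYne : Y.Nonempty)
    (hlc : ∀ z : Fin d → ℤ,
      (fun i => (z i : ℚ)) ∈ convexHull ℚ X → (fun i => (z i : ℚ)) ∈ X)
    (k : ℕ) (hk : 0 < k)
    (A : Fin k → Fin d → ℝ) (b : Fin k → ℝ)
    (hXsep : ∀ x ∈ X, ∀ i, ∑ j, A i j * (x j : ℝ) ≤ b i)
    (hYsep : ∀ y ∈ Y, ∃ i, b i < ∑ j, A i j * (y j : ℝ)) :
    ∃ (A' : Fin k → Fin d → ℚ) (b' : Fin k → ℚ),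
      (∀ x ∈ X, ∀ i, ∑ j, A' i j * x j ≤ b' i) ∧
      ∀ y ∈ Y, ∃ i, b' i < ∑ j, A' i j * y j := by
  classical
  -- slack: for each y there is i with b i < ∑ A i j y j; take minimal slack ε > 0
  set YF := hYfin.toFinset with hYF
  have hYFne : YF.Nonempty := by simpa [hYF] using hYne
  -- define slack for y
  have hslack : ∀ y ∈ Y, (0:ℝ) < (⨆ i, (∑ j, A i j * (y j : ℝ)) - b i) := by
    intro y hy
    obtain ⟨i, hi⟩ := hYsep y hy
    have : (0:ℝ) < (∑ j, A i j * (y j : ℝ)) - b i := by linarith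
    calc (0:ℝ) < (∑ j, A i j * (y j : ℝ)) - b i := this
    _ ≤ _ := le_ciSup (f := fun i => (∑ j, A i j * (y j : ℝ)) - b i)
      (Set.Finite.bddAbove (Set.finite_range _)) i
  set ε : ℝ := (YF.inf' hYFne fun y => ⨆ i, (∑ j, A i j * (y j : ℝ)) - b i) with hε
  have hεpos : 0 < ε := by
    rw [hε]
    apply (Finset.lt_inf'_iff _).2
    intro y hy
    exact hslack y (by simpa [hYF] using hy)
  -- the strict-separation set
  set S : Set ((Fin k → Fin d → ℝ) × (Fin k → ℝ)) :=
    {p | (∀ x ∈ X, ∀ i, ∑ j, p.1 i j * (x j : ℝ) < p.2 i) ∧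
         (∀ y ∈ Y, ∃ i, p.2 i < ∑ j, p.1 i j * (y j : ℝ))} with hS
  have hSopen : IsOpen S := by
    rw [hS]
    have : {p : (Fin k → Fin d → ℝ) × (Fin k → ℝ) |
        (∀ x ∈ X, ∀ i, ∑ j, p.1 i j * (x j : ℝ) < p.2 i) ∧
        (∀ y ∈ Y, ∃ i, p.2 i < ∑ j, p.1 i j * (y j : ℝ))} =
        (⋂ x ∈ X, ⋂ i, {p | ∑ j, p.1 i j * ((x : Fin d → ℚ) j : ℝ) < p.2 i}) ∩
        (⋂ y ∈ Y, ⋃ i, {p | p.2 i < ∑ j, p.1 i j * ((y : Fin d → ℚ) j : ℝ)}) := by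
      ext p; simp [Set.mem_iInter, Set.mem_iUnion]
    rw [this]
    apply IsOpen.inter
    · exact hXfin.isOpen_biInter fun x _ => isOpen_iInter_of_finite fun i =>
        isOpen_lt (cont_aux i _) (cont_aux2 i)
    · exact hYfin.isOpen_biInter fun y _ => isOpen_iUnion fun i =>
        isOpen_lt (cont_aux2 i) (cont_aux i _)
  have hSne : S.Nonempty := by
    refine ⟨(A, fun i => b i + ε / 2), ?_, ?_⟩
    · intro x hx i
      have := hXsep x hx i
      simp only
      linarith
    · intro y hy
      obtain ⟨i, hi⟩ := hYsep y hy
      have h1 : ε ≤ ⨆ i, (∑ j, A i j * (y j : ℝ)) - b i := by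
        rw [hε]; exact Finset.inf'_le _ (by simpa [hYF] using hy)
      -- pick i achieving the sup: since Fin k finite, sup attained
      haveI : Nonempty (Fin k) := ⟨⟨0, hk⟩⟩
      obtain ⟨i₀, hi₀⟩ := Finite.exists_max fun i => (∑ j, A i j * (y j : ℝ)) - b i
      have h2 : (⨆ i, (∑ j, A i j * (y j : ℝ)) - b i) ≤ (∑ j, A i₀ j * (y j : ℝ)) - b i₀ :=
        ciSup_le hi₀
      exact ⟨i₀, by simp only; linarith⟩
  -- rational points are dense
  set D : Set ((Fin k → Fin d → ℝ) × (Fin k → ℝ)) :=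
    (univ.pi fun _ : Fin k => univ.pi fun _ : Fin d => range ((↑) : ℚ → ℝ)) ×ˢ
      (univ.pi fun _ : Fin k => range ((↑) : ℚ → ℝ)) with hD
  have hDdense : Dense D := by
    rw [hD]
    exact Dense.prod
      (dense_pi _ fun i _ => dense_pi _ fun j _ => Rat.denseRange_cast)
      (dense_pi _ fun i _ => Rat.denseRange_cast)
  obtain ⟨p, hpD, hpS⟩ := hDdense.exists_mem_open hSopen hSne
  rw [hD] at hpD
  obtain ⟨hp1, hp2⟩ := hpD
  simp only [Set.mem_pi, Set.mem_univ, forall_true_left, Set.mem_range] at hp1 hp2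
  choose A'' hA'' using hp1
  choose b' hb' using hp2
  rw [hS] at hpS
  obtain ⟨hpX, hpY⟩ := hpS
  refine ⟨A'', b', ?_, ?_⟩
  · intro x hx i
    have := hpX x hx i
    rw [← hb' i] at this
    have hsum : (∑ j, p.1 i j * (x j : ℝ)) = ((∑ j, A'' i j * x j : ℚ) : ℝ) := by
      push_cast
      exact Finset.sum_congr rfl fun j _ => by rw [hA'' i j]
    rw [hsum] at this
    exact_mod_cast this.le
  · intro y hy
    obtain ⟨i, hi⟩ := hpY y hy
    refine ⟨i, ?_⟩
    rw [← hb' i] at hi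
    have hsum : (∑ j, p.1 i j * (y j : ℝ)) = ((∑ j, A'' i j * y j : ℚ) : ℝ) := by
      push_cast
      exact Finset.sum_congr rfl fun j _ => by rw [hA'' i j]
    rw [hsum] at hi
    exact_mod_cast hi
end

section
/- For all integers a ≤ b with {a,b} ≠ {0}, the set X_{a,b} = {e1, e2, e1+e2} ∪ {k·e3 : k = a,…,b} ⊆ Z^3 is lattice-convex and satisfies rc(X_{a,b}) = rc_Q(X_{a,b}) = 4. -/
/-- The set `X_{a,b} = {e₁, e₂, e₁+e₂} ∪ {k·e₃ : a ≤ k ≤ b} ⊆ ℤ³`. -/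
def Xab (a b : ℤ) : Set (Fin 3 → ℤ) :=
  {![1,0,0], ![0,1,0], ![1,1,0]} ∪ {z | ∃ k : ℤ, a ≤ k ∧ k ≤ b ∧ z = ![0,0,k]}

lemma eq_vec3 {α : Type*} (x : Fin 3 → α) (u v w : α) :
    x = ![u,v,w] ↔ x 0 = u ∧ x 1 = v ∧ x 2 = w := by
  constructor
  · rintro rfl; simp
  · rintro ⟨h0,h1,h2⟩; funext i; fin_cases i <;> simpa

lemma mem_Xab {a b : ℤ} {x : Fin 3 → ℤ} :
    x ∈ Xab a b ↔
      (x 0 = 1 ∧ x 1 = 0 ∧ x 2 = 0) ∨ (x 0 = 0 ∧ x 1 = 1 ∧ x 2 = 0) ∨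
      (x 0 = 1 ∧ x 1 = 1 ∧ x 2 = 0) ∨ (x 0 = 0 ∧ x 1 = 0 ∧ a ≤ x 2 ∧ x 2 ≤ b) := by
  constructor
  · intro hx
    rcases hx with h | ⟨k, hk1, hk2, rfl⟩
    · simp only [Set.mem_insert_iff, Set.mem_singleton_iff] at h
      rcases h with h | h | h <;> rw [eq_vec3] at h <;> tauto
    · right; right; right
      refine ⟨by simp, by simp, ?_, ?_⟩ <;> simpa
  · rintro (⟨h0,h1,h2⟩|⟨h0,h1,h2⟩|⟨h0,h1,h2⟩|⟨h0,h1,hk1,hk2⟩)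
    · exact Or.inl (Or.inl ((eq_vec3 _ _ _ _).2 ⟨h0,h1,h2⟩))
    · exact Or.inl (Or.inr (Or.inl ((eq_vec3 _ _ _ _).2 ⟨h0,h1,h2⟩)))
    · exact Or.inl (Or.inr (Or.inr ((eq_vec3 _ _ _ _).2 ⟨h0,h1,h2⟩)))
    · exact Or.inr ⟨x 2, hk1, hk2, (eq_vec3 _ _ _ _).2 ⟨h0,h1,rfl⟩⟩

lemma le_neg_one_of_mul {b x c : ℤ} (hb : 1 ≤ b) (h : b*x ≤ c) (hc : c ≤ -1) : x ≤ -1 := by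
  by_contra h'
  push_neg at h'
  nlinarith [mul_nonneg (by linarith : (0:ℤ) ≤ b) (by omega : (0:ℤ) ≤ x)]

-- Case A arithmetic (a ≥ 1)
lemma caseA_iff (a b x y z : ℤ) (ha : 1 ≤ a) (hab : a ≤ b) :
    ((x = 1 ∧ y = 0 ∧ z = 0) ∨ (x = 0 ∧ y = 1 ∧ z = 0) ∨ (x = 1 ∧ y = 1 ∧ z = 0) ∨
      (x = 0 ∧ y = 0 ∧ a ≤ z ∧ z ≤ b)) ↔
    (b*x + z ≤ b ∧ b*y + z ≤ b ∧ 2*a - 1 ≤ 4*(b+1)*(x+y) + 2*z ∧ x + y - 3*z ≤ 2) := by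
  have hb : 1 ≤ b := le_trans ha hab
  constructor
  · rintro (⟨rfl,rfl,rfl⟩|⟨rfl,rfl,rfl⟩|⟨rfl,rfl,rfl⟩|⟨rfl,rfl,hz1,hz2⟩) <;>
      refine ⟨by nlinarith, by nlinarith, by nlinarith, by nlinarith⟩
  · rintro ⟨h1, h2, h3, h4⟩
    have hz0 : 0 ≤ z := by
      by_contra h
      push_neg at h
      have hz : z ≤ -1 := by omega
      have hxy : x + y ≤ 2 + 3*z := by omega
      have k1 : 4*(b+1)*(x+y) ≤ 4*(b+1)*(2+3*z) :=
        mul_le_mul_of_nonneg_left hxy (by linarith)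
      nlinarith
    have hzb : z ≤ b := by
      by_contra h
      push_neg at h
      have hx : x ≤ -1 := le_neg_one_of_mul (c := b - z) hb (by linarith) (by omega)
      have hy : y ≤ -1 := le_neg_one_of_mul (c := b - z) hb (by linarith) (by omega)
      -- b*(x+y) ≤ -z
      have k1 : b*y ≤ -b := by nlinarith
      have k2 : b*(x+y) ≤ -z := by nlinarith
      -- 4(b+1)(x+y) = 4b(x+y)+4(x+y) ≤ -4z - 8
      have k3 : 4*(b+1)*(x+y) ≤ -4*z - 8 := by nlinarith
      nlinarith
    have hx1 : x ≤ 1 := by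
      by_contra h
      push_neg at h
      nlinarith [mul_le_mul_of_nonneg_left (by omega : 2 ≤ x) (by linarith : (0:ℤ) ≤ b)]
    have hy1 : y ≤ 1 := by
      by_contra h
      push_neg at h
      nlinarith [mul_le_mul_of_nonneg_left (by omega : 2 ≤ y) (by linarith : (0:ℤ) ≤ b)]
    by_cases hz : z = 0
    · subst hz
      have hxy1 : 1 ≤ x + y := by
        by_contra h
        push_neg at h
        have : 4*(b+1)*(x+y) ≤ 0 :=
          mul_nonpos_of_nonneg_of_nonpos (by linarith) (by omega)
        omega
      have hxy2 : x + y ≤ 2 := by omega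
      omega
    · have hz1 : 1 ≤ z := by omega
      have hx0 : x ≤ 0 := by
        by_contra h
        push_neg at h
        nlinarith [mul_le_mul_of_nonneg_left (by omega : 1 ≤ x) (by linarith : (0:ℤ) ≤ b)]
      have hy0 : y ≤ 0 := by
        by_contra h
        push_neg at h
        nlinarith [mul_le_mul_of_nonneg_left (by omega : 1 ≤ y) (by linarith : (0:ℤ) ≤ b)]
      have hxy : 0 ≤ x + y := by
        by_contra h
        push_neg at h
        have k1 : 4*(b+1)*(x+y) ≤ 4*(b+1)*(-1) :=
          mul_le_mul_of_nonneg_left (by omega) (by linarith)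
        nlinarith
      have hx' : x = 0 := by omega
      have hy' : y = 0 := by omega
      subst hx'; subst hy'
      right; right; right
      refine ⟨rfl, rfl, by omega, hzb⟩

set_option maxHeartbeats 2000000 in
lemma caseC_iff (a b x y z : ℤ) (ha : a ≤ 0) (hb : 1 ≤ b) :
    ((x = 1 ∧ y = 0 ∧ z = 0) ∨ (x = 0 ∧ y = 1 ∧ z = 0) ∨ (x = 1 ∧ y = 1 ∧ z = 0) ∨
      (x = 0 ∧ y = 0 ∧ a ≤ z ∧ z ≤ b)) ↔
    (b*(2*b+1)*x - b*y + (2*b+1)*z ≤ b*(2*b+1) ∧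
     -((b-a)*(2*b+1))*x + (b-a)*y + z ≤ b - a ∧
     (1-a)*(1+b-a)*x - (1-a)*(1+b-a)*(2-2*a)*y - z ≤ (1-a)*(1+b-a) ∧
     -(2*(1-a)*(1+b-a))*x + 2*(1-a)*(1+b-a)*(2-2*a)*y - (2*(3-2*a)*(1+b-a) - 1)*z
        ≤ 2*(1-a)*(1+b-a)*(2-2*a)) := by
  have hP : (0:ℤ) < (1-a)*(1+b-a) := mul_pos (by omega) (by omega)
  have hE : (0:ℤ) < 2*(3-2*a)*(1+b-a) - 1 := by nlinarith
  constructor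
  · rintro (⟨rfl,rfl,rfl⟩|⟨rfl,rfl,rfl⟩|⟨rfl,rfl,rfl⟩|⟨rfl,rfl,hz1,hz2⟩)
    · refine ⟨by nlinarith, by nlinarith, by nlinarith, by nlinarith⟩
    · refine ⟨by nlinarith, by nlinarith, by nlinarith, by nlinarith⟩
    · refine ⟨by nlinarith, by nlinarith, by nlinarith, by nlinarith⟩
    · refine ⟨?_, by omega, ?_, ?_⟩
      · nlinarith [mul_le_mul_of_nonneg_left hz2 (by omega : (0:ℤ) ≤ 2*b+1)]
      · nlinarith [mul_nonneg (by omega : (0:ℤ) ≤ -a) (by omega : (0:ℤ) ≤ b - a)]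
      · rcases le_or_gt 0 z with hz | hz
        · nlinarith [mul_nonneg (le_of_lt hE) hz]
        · have k1 : (2*(3-2*a)*(1+b-a) - 1)*(-z) ≤ (2*(3-2*a)*(1+b-a) - 1)*(-a) :=
            mul_le_mul_of_nonneg_left (by omega) (by omega)
          nlinarith [mul_nonneg (by omega : (0:ℤ) ≤ -a) (by omega : (0:ℤ) ≤ 1 + b - a)]
  · rintro ⟨h1, h2, h3, h4⟩
    by_cases hzt : b + 1 ≤ z
    · -- top empty
      exfalso
      have hu0 : 0 ≤ (2*b+1)*x - y := by
        by_contra h'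
        push_neg at h'
        have hu : (2*b+1)*x - y ≤ -1 := by omega
        nlinarith [mul_le_mul_of_nonneg_left hu (by omega : (0:ℤ) ≤ b - a)]
      have hzz : (2*b+1)*(b+1) ≤ (2*b+1)*z := mul_le_mul_of_nonneg_left hzt (by omega)
      nlinarith [mul_nonneg (by omega : (0:ℤ) ≤ b) hu0]
    by_cases hzb : z ≤ a - 1
    · -- bottom empty
      exfalso
      have key : -(2*(3-2*a)*(1+b-a) - 1 + 2)*z ≤ 2*(1-a)*(1+b-a)*(3-2*a) := by linarith
      have k2 : (2*(3-2*a)*(1+b-a) - 1 + 2)*(1-a) ≤ (2*(3-2*a)*(1+b-a) - 1 + 2)*(-z) :=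
        mul_le_mul_of_nonneg_left (by omega) (by omega)
      nlinarith
    push_neg at hzt hzb
    have hza : a ≤ z := by omega
    have hzb' : z ≤ b := by omega
    -- now three sub-bands
    rcases lt_trichotomy z 0 with hzn | rfl | hzp
    · -- a ≤ z ≤ -1
      have hzm : z ≤ -1 := by omega
      have hu_lo : -1 ≤ (2*b+1)*x - y := by
        by_contra h'
        push_neg at h'
        have hu : (2*b+1)*x - y ≤ -2 := by omega
        nlinarith [mul_le_mul_of_nonneg_left hu (by omega : (0:ℤ) ≤ b - a)]
      have hw_hi : x - (2-2*a)*y ≤ 0 := by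
        by_contra h'
        push_neg at h'
        have hw : 1 ≤ x - (2-2*a)*y := by omega
        nlinarith [mul_le_mul_of_nonneg_left hw (le_of_lt hP)]
      have hw_lo : 2*a - 1 ≤ x - (2-2*a)*y := by
        by_contra h'
        push_neg at h'
        have hw : x - (2-2*a)*y ≤ 2*a - 2 := by omega
        have k1 : 2*((1-a)*(1+b-a))*(x - (2-2*a)*y) ≤ 2*((1-a)*(1+b-a))*(2*a-2) :=
          mul_le_mul_of_nonneg_left hw (by positivity)
        have k2 : (2*(3-2*a)*(1+b-a) - 1)*1 ≤ (2*(3-2*a)*(1+b-a) - 1)*(-z) :=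
          mul_le_mul_of_nonneg_left (by omega) (by omega)
        nlinarith
      have hy0 : 0 ≤ y := by
        by_contra h'
        push_neg at h'
        have hy : y ≤ -1 := by omega
        have idu : (2*b+1)*x - y
            = (2*b+1)*(x - (2-2*a)*y) + ((2-2*a)*(2*b+1) - 1)*y := by ring
        have c1 : (2*b+1)*(x - (2-2*a)*y) ≤ 0 :=
          mul_nonpos_of_nonneg_of_nonpos (by omega) hw_hi
        have c2 : ((2-2*a)*(2*b+1) - 1)*y ≤ ((2-2*a)*(2*b+1) - 1)*(-1) :=
          mul_le_mul_of_nonneg_left hy (by nlinarith)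
        nlinarith
      have hy1 : y ≤ 1 := by
        by_contra h'
        push_neg at h'
        have hy : 2 ≤ y := by omega
        have idu : (2*b+1)*x - y
            = (2*b+1)*(x - (2-2*a)*y) + ((2-2*a)*(2*b+1) - 1)*y := by ring
        have c1 : (2*b+1)*(2*a-1) ≤ (2*b+1)*(x - (2-2*a)*y) :=
          mul_le_mul_of_nonneg_left hw_lo (by omega)
        have c2 : ((2-2*a)*(2*b+1) - 1)*2 ≤ ((2-2*a)*(2*b+1) - 1)*y :=
          mul_le_mul_of_nonneg_left hy (by nlinarith)
        -- u ≥ (2b+1)(3-2a) - 2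
        have uge : (2*b+1)*(3-2*a) - 2 ≤ (2*b+1)*x - y := by nlinarith
        have c3 : b*((2*b+1)*(3-2*a) - 2) ≤ b*((2*b+1)*x - y) :=
          mul_le_mul_of_nonneg_left uge (by omega)
        have c4 : (2*b+1)*a ≤ (2*b+1)*z := mul_le_mul_of_nonneg_left hza (by omega)
        have c5 : (0:ℤ) ≤ (-(a+1)) * (2*b-1) :=
          mul_nonneg (by omega) (by omega)
        nlinarith
      interval_cases y
      · -- y = 0
        have hx0 : x = 0 := by
          rcases lt_trichotomy x 0 with hx | hx | hx
          · exfalso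
            have : (2*b+1)*x ≤ (2*b+1)*(-1) := mul_le_mul_of_nonneg_left (by omega) (by omega)
            nlinarith
          · exact hx
          · exfalso
            nlinarith
        subst hx0
        right; right; right; exact ⟨rfl, rfl, hza, hzb'⟩
      · -- y = 1 : impossible
        exfalso
        -- x ≥ -2z+1
        have hxlo : -2*z + 1 ≤ x := by
          by_contra h'
          push_neg at h'
          have hx : x ≤ -2*z := by omega
          have c1 : 2*((1-a)*(1+b-a))*x ≤ 2*((1-a)*(1+b-a))*(-2*z) :=
            mul_le_mul_of_nonneg_left hx (by positivity)
          have c2 : (4*((1-a)*(1+b-a))+3)*(-z) ≤ (2*(3-2*a)*(1+b-a) - 1)*(-z) :=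
            mul_le_mul_of_nonneg_right (by nlinarith) (by omega)
          nlinarith
        have c3 : b*(2*b+1)*(-2*z+1) ≤ b*(2*b+1)*x :=
          mul_le_mul_of_nonneg_left hxlo (by positivity)
        have c4 : (2*b+1)*(2*b-1) ≤ ((2*b+1)*(2*b-1))*(-z) := by
          nlinarith [mul_le_mul_of_nonneg_left (by omega : (1:ℤ) ≤ -z)
            (by nlinarith : (0:ℤ) ≤ (2*b+1)*(2*b-1))]
        nlinarith
    · -- z = 0
      have hu_lo : -1 ≤ (2*b+1)*x - y := by
        by_contra h'
        push_neg at h'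
        have hu : (2*b+1)*x - y ≤ -2 := by omega
        nlinarith [mul_le_mul_of_nonneg_left hu (by omega : (0:ℤ) ≤ b - a)]
      have hu_hi : (2*b+1)*x - y ≤ 2*b+1 := by
        by_contra h'
        push_neg at h'
        have hu : 2*b+2 ≤ (2*b+1)*x - y := by omega
        nlinarith [mul_le_mul_of_nonneg_left hu (by omega : (0:ℤ) ≤ b)]
      have hw_hi : x - (2-2*a)*y ≤ 1 := by
        by_contra h'
        push_neg at h'
        have hw : 2 ≤ x - (2-2*a)*y := by omega
        nlinarith [mul_le_mul_of_nonneg_left hw (le_of_lt hP)]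
      have hw_lo : 2*a - 2 ≤ x - (2-2*a)*y := by
        by_contra h'
        push_neg at h'
        have hw : x - (2-2*a)*y ≤ 2*a - 3 := by omega
        nlinarith [mul_le_mul_of_nonneg_left hw (by positivity : (0:ℤ) ≤ 2*((1-a)*(1+b-a)))]
      have hy0 : 0 ≤ y := by
        by_contra h'
        push_neg at h'
        have hy : y ≤ -1 := by omega
        have idu : (2*b+1)*x - y
            = (2*b+1)*(x - (2-2*a)*y) + ((2-2*a)*(2*b+1) - 1)*y := by ring
        have c1 : (2*b+1)*(x - (2-2*a)*y) ≤ (2*b+1)*1 :=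
          mul_le_mul_of_nonneg_left hw_hi (by omega)
        have c2 : ((2-2*a)*(2*b+1) - 1)*y ≤ ((2-2*a)*(2*b+1) - 1)*(-1) :=
          mul_le_mul_of_nonneg_left hy (by nlinarith)
        have c3 : (2*b+1)*(2*a-1) ≤ (2*b+1)*(-1) :=
          mul_le_mul_of_nonneg_left (by omega) (by omega)
        nlinarith
      have hy1 : y ≤ 1 := by
        by_contra h'
        push_neg at h'
        have hy : 2 ≤ y := by omega
        have idu : (2*b+1)*x - y
            = (2*b+1)*(x - (2-2*a)*y) + ((2-2*a)*(2*b+1) - 1)*y := by ring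
        have c1 : (2*b+1)*(2*a-2) ≤ (2*b+1)*(x - (2-2*a)*y) :=
          mul_le_mul_of_nonneg_left hw_lo (by omega)
        have c2 : ((2-2*a)*(2*b+1) - 1)*2 ≤ ((2-2*a)*(2*b+1) - 1)*y :=
          mul_le_mul_of_nonneg_left hy (by nlinarith)
        have c3 : (2*b+1)*2 ≤ (2*b+1)*(2-2*a) :=
          mul_le_mul_of_nonneg_left (by omega) (by omega)
        nlinarith
      interval_cases y
      · have hx01 : x = 0 ∨ x = 1 := by
          rcases lt_trichotomy x 0 with hx | hx | hx
          · exfalso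
            have : (2*b+1)*x ≤ (2*b+1)*(-1) := mul_le_mul_of_nonneg_left (by omega) (by omega)
            nlinarith
          · exact Or.inl hx
          · rcases lt_or_ge x 2 with hx2 | hx2
            · exact Or.inr (by omega)
            · exfalso
              have : (2*b+1)*2 ≤ (2*b+1)*x := mul_le_mul_of_nonneg_left hx2 (by omega)
              nlinarith
        rcases hx01 with rfl | rfl
        · right; right; right; exact ⟨rfl, rfl, ha, by omega⟩
        · left; exact ⟨rfl, rfl, rfl⟩
      · have hx01 : x = 0 ∨ x = 1 := by
          rcases lt_trichotomy x 0 with hx | hx | hx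
          · exfalso
            have : (2*b+1)*x ≤ (2*b+1)*(-1) := mul_le_mul_of_nonneg_left (by omega) (by omega)
            nlinarith
          · exact Or.inl hx
          · rcases lt_or_ge x 2 with hx2 | hx2
            · exact Or.inr (by omega)
            · exfalso
              have : (2*b+1)*2 ≤ (2*b+1)*x := mul_le_mul_of_nonneg_left hx2 (by omega)
              nlinarith
        rcases hx01 with rfl | rfl
        · right; left; exact ⟨rfl, rfl, rfl⟩
        · right; right; left; exact ⟨rfl, rfl, rfl⟩
    · -- 1 ≤ z ≤ b
      have hz1 : 1 ≤ z := hzp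
      have hu0 : 0 ≤ (2*b+1)*x - y := by
        by_contra h'
        push_neg at h'
        have hu : (2*b+1)*x - y ≤ -1 := by omega
        nlinarith [mul_le_mul_of_nonneg_left hu (by omega : (0:ℤ) ≤ b - a)]
      have hu_hi : (2*b+1)*x - y ≤ 2*b - 2 := by
        by_contra h'
        push_neg at h'
        have hu : 2*b - 1 ≤ (2*b+1)*x - y := by omega
        have c1 : b*(2*b-1) ≤ b*((2*b+1)*x - y) := mul_le_mul_of_nonneg_left hu (by omega)
        have c2 : (2*b+1)*1 ≤ (2*b+1)*z := mul_le_mul_of_nonneg_left hz1 (by omega)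
        nlinarith
      have hw_hi : x - (2-2*a)*y ≤ 1 := by
        by_contra h'
        push_neg at h'
        have hw : 2 ≤ x - (2-2*a)*y := by omega
        have c1 : (1+b) ≤ (1-a)*(1+b-a) := by
          nlinarith [mul_nonneg (by omega : (0:ℤ) ≤ -a) (by omega : (0:ℤ) ≤ 2 - a + b)]
        nlinarith [mul_le_mul_of_nonneg_left hw (le_of_lt hP)]
      have hy0 : 0 ≤ y := by
        by_contra h'
        push_neg at h'
        have hy : y ≤ -1 := by omega
        have idu : (2*b+1)*x - y
            = (2*b+1)*(x - (2-2*a)*y) + ((2-2*a)*(2*b+1) - 1)*y := by ring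
        have c1 : (2*b+1)*(x - (2-2*a)*y) ≤ (2*b+1)*1 :=
          mul_le_mul_of_nonneg_left hw_hi (by omega)
        have c2 : ((2-2*a)*(2*b+1) - 1)*y ≤ ((2-2*a)*(2*b+1) - 1)*(-1) :=
          mul_le_mul_of_nonneg_left hy (by nlinarith)
        have c3 : (2*b+1)*(2*a-1) ≤ (2*b+1)*(-1) :=
          mul_le_mul_of_nonneg_left (by omega) (by omega)
        nlinarith
      have hx1 : x ≤ 1 := by
        by_contra h'
        push_neg at h'
        have hx : 2 ≤ x := by omega
        -- y ≥ (2b+1)x - (2b-2)  (from hu_hi)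
        -- 2P x ≥ 2P(2-2a)(y-1) - E z ; E ≤ 6P - 1 ; z ≤ b
        have hyx : (2*b+1)*x - (2*b-2) ≤ y := by omega
        have c0 : (0:ℤ) ≤ 2*((1-a)*(1+b-a)) := by positivity
        have cE : (2*(3-2*a)*(1+b-a) - 1)*z ≤ 6*((1-a)*(1+b-a))*z := by
          have : (2*(3-2*a)*(1+b-a) - 1) ≤ 6*((1-a)*(1+b-a)) := by
            nlinarith [mul_nonneg (by omega : (0:ℤ) ≤ -a) (by omega : (0:ℤ) ≤ 1+b-a)]
          exact mul_le_mul_of_nonneg_right this (by omega)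
        have cz : 6*((1-a)*(1+b-a))*z ≤ 6*((1-a)*(1+b-a))*b :=
          mul_le_mul_of_nonneg_left hzb' (by positivity)
        -- from h4: 2P x ≥ 2P(2-2a)y - 2P(2-2a) - E z
        -- (2-2a)(y-1) ≥ 2(y-1) ≥ 2((2b+1)x - 2b+1)
        have cy : (0:ℤ) ≤ y - 1 := by
          have : (2*b+1)*2 ≤ (2*b+1)*x := mul_le_mul_of_nonneg_left hx (by omega)
          omega
        have c4 : 2*(y-1) ≤ (2-2*a)*(y-1) :=
          mul_le_mul_of_nonneg_right (by omega) cy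
        have c5 : 2*((1-a)*(1+b-a))*(2*(y-1)) ≤ 2*((1-a)*(1+b-a))*((2-2*a)*(y-1)) :=
          mul_le_mul_of_nonneg_left c4 c0
        have c6 : 2*((1-a)*(1+b-a))*(2*((2*b+1)*x - (2*b-2) - 1))
            ≤ 2*((1-a)*(1+b-a))*(2*(y-1)) := by
          have : 2*((2*b+1)*x - (2*b-2) - 1) ≤ 2*(y-1) := by omega
          exact mul_le_mul_of_nonneg_left this c0
        -- final: 0 ≥ P((8b+2)x - 14b+4), x ≥ 2 ⟹ contradiction
        have c7 : 2*((1-a)*(1+b-a))*((8*b+2)*2) ≤ 2*((1-a)*(1+b-a))*((8*b+2)*x) := by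
          have : (8*b+2)*2 ≤ (8*b+2)*x := mul_le_mul_of_nonneg_left hx (by omega)
          exact mul_le_mul_of_nonneg_left this c0
        nlinarith [hP, mul_pos hP (by omega : (0:ℤ) < b)]
      -- x ≤ 1; case x = 1 impossible
      rcases lt_trichotomy x 0 with hx | rfl | hx
      · exfalso
        have : (2*b+1)*x ≤ (2*b+1)*(-1) := mul_le_mul_of_nonneg_left (by omega) (by omega)
        nlinarith
      · -- x = 0 : u = -y ≥ 0 and y ≥ 0 ⟹ y = 0
        have : y = 0 := by omega
        subst this
        right; right; right; exact ⟨rfl, rfl, by omega, hzb'⟩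
      · have hx' : x = 1 := by omega
        subst hx'
        exfalso
        -- y ≥ 3 from hu_hi ; (2b+1) z ≤ b y from h1 ; y ≥ 2z+1
        have hy3 : 3 ≤ y := by omega
        have hzy : (2*b+1)*z ≤ b*y := by nlinarith
        have hy2z : 2*z + 1 ≤ y := by
          by_contra h'
          push_neg at h'
          have hy' : y ≤ 2*z := by omega
          have : b*y ≤ b*(2*z) := mul_le_mul_of_nonneg_left hy' (by omega)
          nlinarith
        -- h4 with x=1 : 2P(2-2a)(y-1) ≤ 2P + Ez ≤ 2P + (6P-1)z
        have cE : (2*(3-2*a)*(1+b-a) - 1) ≤ 6*((1-a)*(1+b-a)) - 1 := by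
          nlinarith [mul_nonneg (by omega : (0:ℤ) ≤ -a) (by omega : (0:ℤ) ≤ 1+b-a)]
        have cEz : (2*(3-2*a)*(1+b-a) - 1)*z ≤ (6*((1-a)*(1+b-a)) - 1)*z :=
          mul_le_mul_of_nonneg_right cE (by omega)
        have c4 : 2*(y-1) ≤ (2-2*a)*(y-1) :=
          mul_le_mul_of_nonneg_right (by omega) (by omega)
        have c5 : 2*((1-a)*(1+b-a))*(2*(y-1)) ≤ 2*((1-a)*(1+b-a))*((2-2*a)*(y-1)) :=
          mul_le_mul_of_nonneg_left c4 (by positivity)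
        have c6 : 2*((1-a)*(1+b-a))*(2*(2*z)) ≤ 2*((1-a)*(1+b-a))*(2*(y-1)) := by
          have : 2*(2*z) ≤ 2*(y-1) := by omega
          exact mul_le_mul_of_nonneg_left this (by positivity)
        have c7 : ((1-a)*(1+b-a))*1 ≤ ((1-a)*(1+b-a))*z :=
          mul_le_mul_of_nonneg_left hz1 (by positivity)
        nlinarith

lemma relaxQ_of_rows (X : Set (Fin 3 → ℤ)) (A : Fin 4 → Fin 3 → ℤ) (c : Fin 4 → ℤ)
    (h : ∀ x : Fin 3 → ℤ,
      x ∈ X ↔ ∀ i, A i 0 * x 0 + A i 1 * x 1 + A i 2 * x 2 ≤ c i) :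
    IsRelaxationQ X 4 := by
  refine ⟨0, fun i j => (A i j : ℚ), fun i => (c i : ℚ), fun i => (Fin.elim0 i),
    fun i => (Fin.elim0 i), ?_⟩
  ext x
  simp only [Set.mem_setOf_eq, IsEmpty.forall_iff, and_true]
  rw [h x]
  refine forall_congr' fun i => ?_
  rw [Fin.sum_univ_three]
  constructor
  · intro hi; exact_mod_cast hi
  · intro hi; exact_mod_cast hi

lemma relaxA {a b : ℤ} (ha : 1 ≤ a) (hab : a ≤ b) : IsRelaxationQ (Xab a b) 4 := by
  apply relaxQ_of_rows _ ![![b,0,1],![0,b,1],![-(4*(b+1)),-(4*(b+1)),-2],![1,1,-3]]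
    ![b,b,1-2*a,2]
  intro x
  rw [mem_Xab, caseA_iff a b (x 0) (x 1) (x 2) ha hab]
  constructor
  · rintro ⟨h1,h2,h3,h4⟩ i
    fin_cases i <;> simp <;> linarith
  · intro hi
    have g0 := hi 0; have g1 := hi 1; have g2 := hi 2; have g3 := hi 3
    simp only [Matrix.cons_val_zero, Matrix.cons_val_one, Matrix.head_cons,
      Matrix.cons_val_two, Matrix.tail_cons, Matrix.cons_val_three] at g0 g1 g2 g3
    refine ⟨by linarith, by linarith, by linarith, by linarith⟩

lemma relaxC {a b : ℤ} (ha : a ≤ 0) (hb : 1 ≤ b) : IsRelaxationQ (Xab a b) 4 := by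
  apply relaxQ_of_rows _
    ![![b*(2*b+1), -b, 2*b+1],
      ![-((b-a)*(2*b+1)), b-a, 1],
      ![(1-a)*(1+b-a), -((1-a)*(1+b-a)*(2-2*a)), -1],
      ![-(2*(1-a)*(1+b-a)), 2*(1-a)*(1+b-a)*(2-2*a), -(2*(3-2*a)*(1+b-a) - 1)]]
    ![b*(2*b+1), b-a, (1-a)*(1+b-a), 2*(1-a)*(1+b-a)*(2-2*a)]
  intro x
  rw [mem_Xab, caseC_iff a b (x 0) (x 1) (x 2) ha hb]
  constructor
  · rintro ⟨h1,h2,h3,h4⟩ i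
    fin_cases i <;> simp <;> linarith
  · intro hi
    have g0 := hi 0; have g1 := hi 1; have g2 := hi 2; have g3 := hi 3
    simp only [Matrix.cons_val_zero, Matrix.cons_val_one, Matrix.head_cons,
      Matrix.cons_val_two, Matrix.tail_cons, Matrix.cons_val_three] at g0 g1 g2 g3
    refine ⟨by linarith, by linarith, by linarith, by linarith⟩

def flipv (x : Fin 3 → ℤ) : Fin 3 → ℤ := ![x 0, x 1, -x 2]

lemma mem_Xab_flip {a b : ℤ} (x : Fin 3 → ℤ) :
    flipv x ∈ Xab (-b) (-a) ↔ x ∈ Xab a b := by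
  simp only [mem_Xab, flipv, Matrix.cons_val_zero, Matrix.cons_val_one, Matrix.head_cons,
    Matrix.cons_val_two, Matrix.tail_cons]
  omega

lemma relaxQ_flip {a b : ℤ} (h : IsRelaxationQ (Xab (-b) (-a)) 4) :
    IsRelaxationQ (Xab a b) 4 := by
  obtain ⟨m, A, c, U, v, hset⟩ := h
  refine ⟨m, fun i => ![A i 0, A i 1, -A i 2], c, fun i => ![U i 0, U i 1, -U i 2], v, ?_⟩
  ext x
  have hx := Set.ext_iff.1 hset (flipv x)
  rw [mem_Xab_flip] at hx
  simp only [Set.mem_setOf_eq] at hx ⊢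
  rw [hx]
  have key : ∀ (B : Fin 3 → ℚ), (∑ j, B j * ((flipv x) j : ℚ))
      = ∑ j, (![B 0, B 1, -B 2]) j * (x j : ℚ) := by
    intro B
    simp only [Fin.sum_univ_three, flipv, Matrix.cons_val_zero, Matrix.cons_val_one,
      Matrix.head_cons, Matrix.cons_val_two, Matrix.tail_cons]
    push_cast
    ring
  constructor
  · rintro ⟨h1, h2⟩
    exact ⟨fun i => by rw [← key (A i)]; exact h1 i, fun i => by rw [← key (U i)]; exact h2 i⟩
  · rintro ⟨h1, h2⟩
    exact ⟨fun i => by rw [key (A i)]; exact h1 i, fun i => by rw [key (U i)]; exact h2 i⟩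

lemma relaxQ4 {a b : ℤ} (hab : a ≤ b) (h0 : ¬(a = 0 ∧ b = 0)) :
    IsRelaxationQ (Xab a b) 4 := by
  rcases le_or_gt 1 a with ha | ha
  · exact relaxA ha hab
  rcases le_or_gt 1 b with hb | hb
  · exact relaxC (by omega) hb
  apply relaxQ_flip
  rcases le_or_gt b (-1) with hbn | hbn
  · exact relaxA (by omega) (by omega)
  · exact relaxC (by omega) (by omega)

lemma isRelaxation_of_Q {d k : ℕ} {X : Set (Fin d → ℤ)} (h : IsRelaxationQ X k) :
    IsRelaxation X k := by
  obtain ⟨m, A, c, U, v, hset⟩ := h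
  refine ⟨m, fun i j => (A i j : ℝ), fun i => (c i : ℝ), fun i j => (U i j : ℝ),
    fun i => (v i : ℝ), ?_⟩
  rw [hset]
  ext x
  simp only [Set.mem_setOf_eq]
  have key : ∀ (B : Fin d → ℚ), ∑ j, ((B j : ℝ)) * ((x j : ℤ) : ℝ)
      = ((∑ j, B j * (x j : ℚ) : ℚ) : ℝ) := by
    intro B
    push_cast
    rfl
  constructor
  · rintro ⟨h1, h2⟩
    refine ⟨fun i => ?_, fun i => ?_⟩
    · rw [key]; exact_mod_cast h1 i
    · rw [key]; exact_mod_cast h2 i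
  · rintro ⟨h1, h2⟩
    refine ⟨fun i => ?_, fun i => ?_⟩
    · have := h1 i; rw [key] at this; exact_mod_cast this
    · have := h2 i; rw [key] at this; exact_mod_cast this

lemma isLatticeConvex_of_relax {d k : ℕ} {X : Set (Fin d → ℤ)} (h : IsRelaxation X k) :
    IsLatticeConvex X := by
  obtain ⟨m, A, c, U, v, hset⟩ := h
  intro p hp
  rw [hset]
  have hlin : ∀ (B : Fin d → ℝ), IsLinearMap ℝ (fun w : Fin d → ℝ => ∑ j, B j * w j) := by
    intro B
    constructor
    · intro w1 w2
      simp only [Pi.add_apply, mul_add]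
      rw [Finset.sum_add_distrib]
    · intro s w
      simp only [Pi.smul_apply, smul_eq_mul, Finset.mul_sum]
      congr 1
      funext j
      ring
  constructor
  · intro i
    have hsub : convexHull ℝ (ZtoR '' X) ⊆ {w : Fin d → ℝ | ∑ j, A i j * w j ≤ c i} := by
      apply convexHull_min
      · rintro _ ⟨q, hq, rfl⟩
        have hq' := (show q ∈ {x : Fin d → ℤ |
          (∀ i, ∑ j, A i j * (x j : ℝ) ≤ c i) ∧ ∀ i, ∑ j, U i j * (x j : ℝ) = v i}
          from hset ▸ hq).1 i
        simpa [ZtoR] using hq'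
      · exact convex_halfSpace_le (hlin (A i)) _
    exact hsub hp
  · intro i
    have hsub : convexHull ℝ (ZtoR '' X) ⊆ {w : Fin d → ℝ | ∑ j, U i j * w j = v i} := by
      apply convexHull_min
      · rintro _ ⟨q, hq, rfl⟩
        have hq' := (show q ∈ {x : Fin d → ℤ |
          (∀ i, ∑ j, A i j * (x j : ℝ) ≤ c i) ∧ ∀ i, ∑ j, U i j * (x j : ℝ) = v i}
          from hset ▸ hq).2 i
        simpa [ZtoR] using hq'
      · exact convex_hyperplane (hlin (U i)) _
    exact hsub hp

lemma mem_e1 {a b : ℤ} : ![1,0,0] ∈ Xab a b := mem_Xab.2 (Or.inl (by simp))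
lemma mem_e2 {a b : ℤ} : ![0,1,0] ∈ Xab a b := mem_Xab.2 (Or.inr (Or.inl (by simp)))
lemma mem_e12 {a b : ℤ} : ![1,1,0] ∈ Xab a b := mem_Xab.2 (Or.inr (Or.inr (Or.inl (by simp))))
lemma mem_axis {a b k : ℤ} (h1 : a ≤ k) (h2 : k ≤ b) : ![0,0,k] ∈ Xab a b :=
  mem_Xab.2 (Or.inr (Or.inr (Or.inr (by simp [h1, h2]))))

/-- If a real point which is a nonneg combination of points of `Xab` (coefficients summing
to 1) plus `t` times a direction `y` on which all rows are `≤ 0`, is integral, then it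
satisfies all rows; so if it is not in `Xab`, contradiction with `hmem`. -/
lemma cut_combo {a b : ℤ} (A : Fin 3 → Fin 3 → ℝ) (c : Fin 3 → ℝ)
    (hval : ∀ p ∈ Xab a b, ∀ i, ∑ j, A i j * (p j : ℝ) ≤ c i)
    (hmem : ∀ x : Fin 3 → ℤ, (∀ i, ∑ j, A i j * (x j : ℝ) ≤ c i) → x ∈ Xab a b)
    (y : Fin 3 → ℝ) (hy : ∀ i, ∑ j, A i j * y j ≤ 0)
    (t l1 l2 l3 l4 : ℝ) (ht : 0 ≤ t) (hl1 : 0 ≤ l1) (hl2 : 0 ≤ l2) (hl3 : 0 ≤ l3)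
    (hl4 : 0 ≤ l4) (hs : l1 + l2 + l3 + l4 = 1)
    (d : ℤ) (hd1 : a ≤ d) (hd2 : d ≤ b)
    (w : Fin 3 → ℤ)
    (e0 : (w 0 : ℝ) = l1 + l3 + t * y 0)
    (e1 : (w 1 : ℝ) = l2 + l3 + t * y 1)
    (e2 : (w 2 : ℝ) = l4 * d + t * y 2)
    (hw : w ∉ Xab a b) : False := by
  apply hw
  apply hmem
  intro i
  have v1 := hval ![1,0,0] mem_e1 i
  have v2 := hval ![0,1,0] mem_e2 i
  have v3 := hval ![1,1,0] mem_e12 i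
  have v4 := hval ![0,0,d] (mem_axis hd1 hd2) i
  have hyi := hy i
  simp only [Fin.sum_univ_three, Matrix.cons_val_zero, Matrix.cons_val_one, Matrix.head_cons,
    Matrix.cons_val_two, Matrix.tail_cons, Int.cast_one, Int.cast_zero] at v1 v2 v3 v4 hyi ⊢
  rw [e0, e1, e2]
  have b1 : l1 * (A i 0 * 1 + A i 1 * 0 + A i 2 * 0) ≤ l1 * c i :=
    mul_le_mul_of_nonneg_left v1 hl1
  have b2 : l2 * (A i 0 * 0 + A i 1 * 1 + A i 2 * 0) ≤ l2 * c i :=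
    mul_le_mul_of_nonneg_left v2 hl2
  have b3 : l3 * (A i 0 * 1 + A i 1 * 1 + A i 2 * 0) ≤ l3 * c i :=
    mul_le_mul_of_nonneg_left v3 hl3
  have b4 : l4 * (A i 0 * 0 + A i 1 * 0 + A i 2 * (d:ℝ)) ≤ l4 * c i :=
    mul_le_mul_of_nonneg_left v4 hl4
  have b5 : t * (A i 0 * y 0 + A i 1 * y 1 + A i 2 * y 2) ≤ 0 :=
    mul_nonpos_of_nonneg_of_nonpos ht hyi
  nlinarith [b1, b2, b3, b4, b5]

set_option maxHeartbeats 1000000 in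
lemma not_relax3 (a b : ℤ) (hab : a ≤ b) (h0 : ¬(a = 0 ∧ b = 0))
    (A : Fin 3 → Fin 3 → ℝ) (c : Fin 3 → ℝ) (m : ℕ) (U : Fin m → Fin 3 → ℝ) (v : Fin m → ℝ)
    (hset : Xab a b = {x : Fin 3 → ℤ |
      (∀ i, ∑ j, A i j * (x j : ℝ) ≤ c i) ∧ ∀ i, ∑ j, U i j * (x j : ℝ) = v i}) :
    False := by
  have hval : ∀ p ∈ Xab a b, ∀ i, ∑ j, A i j * (p j : ℝ) ≤ c i := by
    intro p hp
    exact (show p ∈ {x : Fin 3 → ℤ |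
      (∀ i, ∑ j, A i j * (x j : ℝ) ≤ c i) ∧ ∀ i, ∑ j, U i j * (x j : ℝ) = v i}
      from hset ▸ hp).1
  have hvaleq : ∀ p ∈ Xab a b, ∀ i, ∑ j, U i j * (p j : ℝ) = v i := by
    intro p hp
    exact (show p ∈ {x : Fin 3 → ℤ |
      (∀ i, ∑ j, A i j * (x j : ℝ) ≤ c i) ∧ ∀ i, ∑ j, U i j * (x j : ℝ) = v i}
      from hset ▸ hp).2
  -- the equations are trivial
  obtain ⟨t, ht0, hta, htb⟩ : ∃ t : ℤ, t ≠ 0 ∧ a ≤ t ∧ t ≤ b := by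
    by_cases hb : b = 0
    · exact ⟨a, by omega, le_refl a, by omega⟩
    · exact ⟨b, hb, hab, le_refl b⟩
  have heq : ∀ i, ∀ x : Fin 3 → ℤ, ∑ j, U i j * (x j : ℝ) = v i := by
    intro i x
    have E1 := hvaleq ![1,0,0] mem_e1 i
    have E2 := hvaleq ![0,1,0] mem_e2 i
    have E3 := hvaleq ![1,1,0] mem_e12 i
    have E4 := hvaleq ![0,0,t] (mem_axis hta htb) i
    simp only [Fin.sum_univ_three, Matrix.cons_val_zero, Matrix.cons_val_one, Matrix.head_cons,
      Matrix.cons_val_two, Matrix.tail_cons, Int.cast_one, Int.cast_zero, mul_one, mul_zero,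
      add_zero, zero_add] at E1 E2 E3 E4 ⊢
    have hv : v i = 0 := by linarith
    have hU0 : U i 0 = 0 := by linarith
    have hU1 : U i 1 = 0 := by linarith
    have hU2 : U i 2 = 0 := by
      rw [hv] at E4
      rcases mul_eq_zero.1 E4 with h | h
      · exact h
      · exact absurd (by exact_mod_cast h) ht0
    rw [hU0, hU1, hU2, hv]
    ring
  have hmem : ∀ x : Fin 3 → ℤ, (∀ i, ∑ j, A i j * (x j : ℝ) ≤ c i) → x ∈ Xab a b := by
    intro x hx
    rw [hset]
    exact ⟨hx, fun i => heq i x⟩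
  -- matrix dichotomy
  set M : Matrix (Fin 3) (Fin 3) ℝ := Matrix.of A with hM
  by_cases hdet : M.det = 0
  · -- kernel direction
    obtain ⟨y, hy0, hMy⟩ := (Matrix.exists_mulVec_eq_zero_iff).2 hdet
    have hrow : ∀ i, ∑ j, A i j * y j = 0 := by
      intro i
      have := congrFun hMy i
      simpa [Matrix.mulVec, dotProduct, hM] using this
    have hrowle : ∀ i, ∑ j, A i j * y j ≤ 0 := fun i => le_of_eq (hrow i)
    have hrownegle : ∀ i, ∑ j, A i j * (fun j => -y j) j ≤ 0 := by
      intro i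
      have : ∑ j, A i j * (-y j) = -(∑ j, A i j * y j) := by
        simp [mul_neg]
      simpa [this, hrow i]
    by_cases hy2 : y 2 = 0
    · -- planar direction
      by_cases hy0' : y 0 = 0
      case neg
      · rcases lt_or_gt_of_ne hy0' with hneg | hpos
        · -- y 0 < 0 : w = ![-1, m, 0]
          set T : ℝ := 2 / (-y 0) with hT
          have hTpos : 0 < T := div_pos two_pos (by linarith)
          set s : ℝ := (⌈T * y 1⌉ : ℝ) - T * y 1 with hs
          have hs0 : 0 ≤ s := by
            have := Int.le_ceil (T * y 1); linarith
          have hs1 : s ≤ 1 := by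
            have := Int.ceil_lt_add_one (T * y 1); linarith
          refine cut_combo A c hval hmem y hrowle T (1-s) 0 s 0 (le_of_lt hTpos)
            (by linarith) le_rfl hs0 le_rfl (by ring) b hab le_rfl
            ![-1, ⌈T * y 1⌉, 0] ?_ ?_ ?_ ?_
          · simp only [Matrix.cons_val_zero]
            push_cast
            have : T * y 0 = -2 := by
              rw [hT, div_mul_eq_mul_div, div_eq_iff (by linarith : -y 0 ≠ 0)]; ring
            linarith [this]
          · simp only [Matrix.cons_val_one, Matrix.head_cons]
            rw [hs]; push_cast; ring
          · simp only [Matrix.cons_val_two, Matrix.tail_cons, Matrix.head_cons]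
            rw [hy2]; push_cast; ring
          · intro hm
            rcases mem_Xab.1 hm with ⟨h1',_,_⟩|⟨h1',_,_⟩|⟨h1',_,_⟩|⟨h1',_,_,_⟩ <;>
              simp at h1'
        · -- y 0 > 0 : w = ![3, m, 0]
          set T : ℝ := 2 / y 0 with hT
          have hTpos : 0 < T := div_pos two_pos (by linarith)
          set s : ℝ := (⌈T * y 1⌉ : ℝ) - T * y 1 with hs
          have hs0 : 0 ≤ s := by
            have := Int.le_ceil (T * y 1); linarith
          have hs1 : s ≤ 1 := by
            have := Int.ceil_lt_add_one (T * y 1); linarith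
          refine cut_combo A c hval hmem y hrowle T (1-s) 0 s 0 (le_of_lt hTpos)
            (by linarith) le_rfl hs0 le_rfl (by ring) b hab le_rfl
            ![3, ⌈T * y 1⌉, 0] ?_ ?_ ?_ ?_
          · simp only [Matrix.cons_val_zero]
            push_cast
            have : T * y 0 = 2 := by
              rw [hT, div_mul_eq_mul_div, div_eq_iff (by linarith : y 0 ≠ 0)]
            linarith [this]
          · simp only [Matrix.cons_val_one, Matrix.head_cons]
            rw [hs]; push_cast; ring
          · simp only [Matrix.cons_val_two, Matrix.tail_cons, Matrix.head_cons]
            rw [hy2]; push_cast; ring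
          · intro hm
            rcases mem_Xab.1 hm with ⟨h1',_,_⟩|⟨h1',_,_⟩|⟨h1',_,_⟩|⟨h1',_,_,_⟩ <;>
              simp at h1'
      case pos
      · have hy1' : y 1 ≠ 0 := by
          intro h'
          apply hy0
          funext j
          fin_cases j
          · exact hy0'
          · exact h'
          · exact hy2
        rcases lt_or_gt_of_ne hy1' with hneg | hpos
        · -- y 1 < 0 : w = ![0, -1, 0], edge through e2 (s = 0)
          set T : ℝ := 2 / (-y 1) with hT
          have hTpos : 0 < T := div_pos two_pos (by linarith)
          refine cut_combo A c hval hmem y hrowle T 0 1 0 0 (le_of_lt hTpos)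
            le_rfl zero_le_one le_rfl le_rfl (by ring) b hab le_rfl
            ![0, -1, 0] ?_ ?_ ?_ ?_
          · simp only [Matrix.cons_val_zero]
            rw [hy0']
            push_cast
            ring
          · simp only [Matrix.cons_val_one, Matrix.head_cons]
            have : T * y 1 = -2 := by
              rw [hT, div_mul_eq_mul_div, div_eq_iff (by linarith : -y 1 ≠ 0)]; ring
            push_cast
            linarith [this]
          · simp only [Matrix.cons_val_two, Matrix.tail_cons, Matrix.head_cons]
            rw [hy2]; push_cast; ring
          · intro hm
            rcases mem_Xab.1 hm with ⟨_,h1',_⟩|⟨_,h1',_⟩|⟨_,h1',_⟩|⟨_,h1',_,_⟩ <;>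
              simp at h1'
        · -- y 1 > 0 : w = ![0, 3, 0]
          set T : ℝ := 2 / y 1 with hT
          have hTpos : 0 < T := div_pos two_pos (by linarith)
          refine cut_combo A c hval hmem y hrowle T 0 1 0 0 (le_of_lt hTpos)
            le_rfl zero_le_one le_rfl le_rfl (by ring) b hab le_rfl
            ![0, 3, 0] ?_ ?_ ?_ ?_
          · simp only [Matrix.cons_val_zero]
            rw [hy0']
            push_cast
            ring
          · simp only [Matrix.cons_val_one, Matrix.head_cons]
            have : T * y 1 = 2 := by
              rw [hT, div_mul_eq_mul_div, div_eq_iff (by linarith : y 1 ≠ 0)]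
            push_cast
            linarith [this]
          · simp only [Matrix.cons_val_two, Matrix.tail_cons, Matrix.head_cons]
            rw [hy2]; push_cast; ring
          · intro hm
            rcases mem_Xab.1 hm with ⟨_,h1',_⟩|⟨_,h1',_⟩|⟨_,h1',_⟩|⟨_,h1',_,_⟩ <;>
              simp at h1'
    · -- y 2 ≠ 0 : slice argument
      obtain ⟨H, hH1, hHb, hHa⟩ : ∃ H : ℤ, 1 ≤ H ∧ b < H ∧ -H < a :=
        ⟨1 + |a| + |b|, by linarith [abs_nonneg a, abs_nonneg b],
          by linarith [le_abs_self b, abs_nonneg a],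
          by linarith [neg_abs_le a, abs_nonneg b]⟩
      obtain ⟨Y, hYrow, hY2⟩ : ∃ Y : Fin 3 → ℝ, (∀ i, ∑ j, A i j * Y j = 0) ∧ 0 < Y 2 := by
        rcases lt_or_gt_of_ne hy2 with hneg | hpos
        · refine ⟨fun j => -y j, fun i => ?_, ?_⟩
          · simp only [mul_neg]
            rw [Finset.sum_neg_distrib, hrow i, neg_zero]
          · simpa using neg_pos.2 hneg
        · exact ⟨y, hrow, hpos⟩
      have hYle : ∀ i, ∑ j, A i j * Y j ≤ 0 := fun i => le_of_eq (hYrow i)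
      have hYnegle : ∀ i, ∑ j, A i j * (fun j => -Y j) j ≤ 0 := by
        intro i
        simp only [mul_neg]
        rw [Finset.sum_neg_distrib, hYrow i, neg_zero]
      set r1 : ℝ := (H:ℝ) * Y 0 / Y 2 with hr1
      set r2 : ℝ := (H:ℝ) * Y 1 / Y 2 with hr2
      have fract_add_neg : ∀ x : ℝ, Int.fract x + Int.fract (-x) ≤ 1 := by
        intro x
        rcases eq_or_ne (Int.fract x) 0 with h | h
        · have h2 : Int.fract (-x) = 0 := by rwa [Int.fract_neg_eq_zero]
          rw [h, h2]; norm_num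
        · rw [Int.fract_neg h]; linarith
      have hHpos : (0:ℝ) < (H:ℝ) := by exact_mod_cast hH1.trans_lt' (by norm_num)
      have htnn : (0:ℝ) ≤ (H:ℝ)/Y 2 := le_of_lt (div_pos hHpos hY2)
      have hdich : Int.fract r1 + Int.fract r2 ≤ 1 ∨
          Int.fract (-r1) + Int.fract (-r2) ≤ 1 := by
        by_contra h'
        push_neg at h'
        linarith [fract_add_neg r1, fract_add_neg r2, h'.1, h'.2,
          Int.fract_nonneg r1, Int.fract_nonneg r2]
      rcases hdich with hgood | hgood
      · refine cut_combo A c hval hmem Y hYle ((H:ℝ)/Y 2) (Int.fract r2) (Int.fract r1)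
          (1 - Int.fract r1 - Int.fract r2) 0 htnn
          (Int.fract_nonneg _) (Int.fract_nonneg _) (by linarith) le_rfl (by ring)
          b hab le_rfl ![1 + ⌊r1⌋, 1 + ⌊r2⌋, H] ?_ ?_ ?_ ?_
        · simp only [Matrix.cons_val_zero]
          have e : ((H:ℝ)/Y 2) * Y 0 = r1 := by rw [hr1]; ring
          rw [e]
          push_cast
          linarith [Int.floor_add_fract r1]
        · simp only [Matrix.cons_val_one, Matrix.head_cons]
          have e : ((H:ℝ)/Y 2) * Y 1 = r2 := by rw [hr2]; ring
          rw [e]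
          push_cast
          linarith [Int.floor_add_fract r2]
        · simp only [Matrix.cons_val_two, Matrix.tail_cons, Matrix.head_cons]
          rw [div_mul_cancel₀ _ (ne_of_gt hY2)]
          push_cast
          ring
        · intro hm
          rcases mem_Xab.1 hm with h2|h2|h2|h2 <;> simp at h2 <;> omega
      · refine cut_combo A c hval hmem (fun j => -Y j) hYnegle ((H:ℝ)/Y 2)
          (Int.fract (-r2)) (Int.fract (-r1))
          (1 - Int.fract (-r1) - Int.fract (-r2)) 0 htnn
          (Int.fract_nonneg _) (Int.fract_nonneg _) (by linarith) le_rfl (by ring)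
          b hab le_rfl ![1 + ⌊-r1⌋, 1 + ⌊-r2⌋, -H] ?_ ?_ ?_ ?_
        · simp only [Matrix.cons_val_zero]
          have e : ((H:ℝ)/Y 2) * (-Y 0) = -r1 := by rw [hr1]; ring
          show ((1 + ⌊-r1⌋ : ℤ) : ℝ) = _ + ((H:ℝ)/Y 2) * (-Y 0)
          rw [e]
          push_cast
          linarith [Int.floor_add_fract (-r1)]
        · simp only [Matrix.cons_val_one, Matrix.head_cons]
          have e : ((H:ℝ)/Y 2) * (-Y 1) = -r2 := by rw [hr2]; ring
          show ((1 + ⌊-r2⌋ : ℤ) : ℝ) = _ + ((H:ℝ)/Y 2) * (-Y 1)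
          rw [e]
          push_cast
          linarith [Int.floor_add_fract (-r2)]
        · simp only [Matrix.cons_val_two, Matrix.tail_cons, Matrix.head_cons]
          show ((-H : ℤ) : ℝ) = _ + ((H:ℝ)/Y 2) * (-Y 2)
          rw [show ((H:ℝ)/Y 2) * (-Y 2) = -(((H:ℝ)/Y 2) * Y 2) by ring,
            div_mul_cancel₀ _ (ne_of_gt hY2)]
          push_cast
          ring
        · intro hm
          rcases mem_Xab.1 hm with h2|h2|h2|h2 <;> simp at h2 <;> omega
  · -- invertible case : rational recession direction
    have hMy : M.mulVec (M⁻¹.mulVec (fun _ => (-1:ℝ))) = (fun _ => (-1:ℝ)) := by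
      rw [Matrix.mulVec_mulVec, Matrix.mul_nonsing_inv _ (isUnit_iff_ne_zero.2 hdet),
        Matrix.one_mulVec]
    set y : Fin 3 → ℝ := M⁻¹.mulVec (fun _ => (-1:ℝ)) with hy
    have hrow : ∀ i, ∑ j, A i j * y j = -1 := by
      intro i
      have := congrFun hMy i
      simpa [Matrix.mulVec, dotProduct, hM] using this
    set S : ℝ := ∑ i, ∑ j, |A i j| with hS
    have hS0 : 0 ≤ S := by positivity
    have hij : ∀ i j, |A i j| ≤ S := by
      intro i j
      refine le_trans (Finset.single_le_sum (fun j' _ => abs_nonneg (A i j'))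
        (Finset.mem_univ j)) ?_
      exact Finset.single_le_sum (f := fun i' => ∑ j', |A i' j'|)
        (fun i' _ => by positivity) (Finset.mem_univ i)
    set δ : ℝ := 1/(3*(S+1)) with hδ
    have hδ0 : 0 < δ := by positivity
    obtain ⟨q0, hq0⟩ := exists_rat_near (y 0) hδ0
    obtain ⟨q1, hq1⟩ := exists_rat_near (y 1) hδ0
    obtain ⟨q2, hq2⟩ := exists_rat_near (y 2) hδ0
    have hterm : ∀ (i : Fin 3) (j : Fin 3) (q : ℚ), |y j - (q:ℝ)| < δ →
        A i j * (q:ℝ) ≤ A i j * y j + S * δ := by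
      intro i j q hq
      have h1 : A i j * ((q:ℝ) - y j) ≤ |A i j * ((q:ℝ) - y j)| := le_abs_self _
      rw [abs_mul] at h1
      have h2 : |(q:ℝ) - y j| ≤ δ := by
        rw [abs_sub_comm]; exact le_of_lt hq
      have h3 : |A i j| * |(q:ℝ) - y j| ≤ S * δ :=
        mul_le_mul (hij i j) h2 (abs_nonneg _) hS0
      nlinarith
    have hSδ : 3 * (S * δ) < 1 := by
      rw [hδ]
      rw [show 3 * (S * (1/(3*(S+1)))) = S/(S+1) by field_simp]
      rw [div_lt_one (by positivity)]
      linarith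
    have hrowq : ∀ i, A i 0 * (q0:ℝ) + A i 1 * (q1:ℝ) + A i 2 * (q2:ℝ) < 0 := by
      intro i
      have e := hrow i
      rw [Fin.sum_univ_three] at e
      have t0 := hterm i 0 q0 hq0
      have t1 := hterm i 1 q1 hq1
      have t2 := hterm i 2 q2 hq2
      linarith
    -- clear denominators
    set D : ℤ := (q0.den : ℤ) * (q1.den : ℤ) * (q2.den : ℤ) with hD
    have hDpos : 0 < D := by positivity
    set u : Fin 3 → ℤ := ![q0.num * q1.den * q2.den, (q0.den : ℤ) * q1.num * q2.den,
      (q0.den : ℤ) * q1.den * q2.num] with hu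
    have hden0 : ((q0.den : ℤ) : ℝ) ≠ 0 := by
      exact_mod_cast (Int.natCast_ne_zero.2 q0.den_nz)
    have hden1 : ((q1.den : ℤ) : ℝ) ≠ 0 := by
      exact_mod_cast (Int.natCast_ne_zero.2 q1.den_nz)
    have hden2 : ((q2.den : ℤ) : ℝ) ≠ 0 := by
      exact_mod_cast (Int.natCast_ne_zero.2 q2.den_nz)
    have hu0 : ((u 0 : ℤ) : ℝ) = (D:ℝ) * (q0:ℝ) := by
      rw [hu, hD]
      simp only [Matrix.cons_val_zero]
      rw [Rat.cast_def]
      push_cast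
      field_simp
    have hu1 : ((u 1 : ℤ) : ℝ) = (D:ℝ) * (q1:ℝ) := by
      rw [hu, hD]
      simp only [Matrix.cons_val_one, Matrix.head_cons]
      rw [Rat.cast_def]
      push_cast
      field_simp
    have hu2' : ((u 2 : ℤ) : ℝ) = (D:ℝ) * (q2:ℝ) := by
      rw [hu, hD]
      simp only [Matrix.cons_val_two, Matrix.tail_cons, Matrix.head_cons]
      rw [Rat.cast_def]
      push_cast
      field_simp
    have hrowu : ∀ i, ∑ j, A i j * ((u j : ℤ) : ℝ) < 0 := by
      intro i
      rw [Fin.sum_univ_three, hu0, hu1, hu2']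
      have e : A i 0 * ((D:ℝ) * q0) + A i 1 * ((D:ℝ) * q1) + A i 2 * ((D:ℝ) * q2)
          = (D:ℝ) * (A i 0 * (q0:ℝ) + A i 1 * (q1:ℝ) + A i 2 * (q2:ℝ)) := by ring
      rw [e]
      exact mul_neg_of_pos_of_neg (by exact_mod_cast hDpos) (hrowq i)
    have hrowule : ∀ i, ∑ j, A i j * (fun j' => ((u j' : ℤ):ℝ)) j ≤ 0 :=
      fun i => le_of_lt (hrowu i)
    rcases lt_trichotomy (u 2) 0 with hu2 | hu2 | hu2
    · -- escape downward
      obtain ⟨K, hK1, hKa⟩ : ∃ K : ℤ, 1 ≤ K ∧ a < K := ⟨1 + |a|,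
        by linarith [abs_nonneg a], by linarith [le_abs_self a]⟩
      have hKu : K * u 2 ≤ -K := by nlinarith
      refine cut_combo A c hval hmem (fun j => ((u j : ℤ):ℝ)) hrowule (K:ℝ) 0 0 0 1
        (by exact_mod_cast le_of_lt (by omega : (0:ℤ) < K)) le_rfl le_rfl le_rfl zero_le_one
        (by ring) a le_rfl hab ![K * u 0, K * u 1, a + K * u 2] ?_ ?_ ?_ ?_
      · simp only [Matrix.cons_val_zero]; push_cast; ring
      · simp only [Matrix.cons_val_one, Matrix.head_cons]; push_cast; ring
      · simp only [Matrix.cons_val_two, Matrix.tail_cons, Matrix.head_cons]; push_cast; ring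
      · intro hm
        rcases mem_Xab.1 hm with h2|h2|h2|h2 <;> simp at h2 <;> omega
    · -- horizontal escape
      have hne : ¬(u 0 = 0 ∧ u 1 = 0) := by
        rintro ⟨e0', e1'⟩
        have := hrowu 0
        rw [Fin.sum_univ_three, e0', e1', hu2] at this
        simp at this
      by_cases hu0' : u 0 = 0
      · have hu1' : u 1 ≠ 0 := fun h' => hne ⟨hu0', h'⟩
        refine cut_combo A c hval hmem (fun j => ((u j : ℤ):ℝ)) hrowule 2 0 1 0 0
          (by norm_num) le_rfl zero_le_one le_rfl le_rfl (by ring) b hab le_rfl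
          ![2 * u 0, 1 + 2 * u 1, 0] ?_ ?_ ?_ ?_
        · simp only [Matrix.cons_val_zero]; push_cast; ring
        · simp only [Matrix.cons_val_one, Matrix.head_cons]; push_cast; ring
        · simp only [Matrix.cons_val_two, Matrix.tail_cons, Matrix.head_cons]
          rw [hu2]; push_cast; ring
        · intro hm
          rcases mem_Xab.1 hm with h2|h2|h2|h2 <;> simp at h2 <;> omega
      · refine cut_combo A c hval hmem (fun j => ((u j : ℤ):ℝ)) hrowule 2 1 0 0 0
          (by norm_num) zero_le_one le_rfl le_rfl le_rfl (by ring) b hab le_rfl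
          ![1 + 2 * u 0, 2 * u 1, 0] ?_ ?_ ?_ ?_
        · simp only [Matrix.cons_val_zero]; push_cast; ring
        · simp only [Matrix.cons_val_one, Matrix.head_cons]; push_cast; ring
        · simp only [Matrix.cons_val_two, Matrix.tail_cons, Matrix.head_cons]
          rw [hu2]; push_cast; ring
        · intro hm
          rcases mem_Xab.1 hm with h2|h2|h2|h2 <;> simp at h2 <;> omega
    · -- escape upward
      obtain ⟨K, hK1, hKb⟩ : ∃ K : ℤ, 1 ≤ K ∧ -b < K := ⟨1 + |b|,
        by linarith [abs_nonneg b], by linarith [neg_abs_le b]⟩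
      have hKu : K ≤ K * u 2 := by nlinarith
      refine cut_combo A c hval hmem (fun j => ((u j : ℤ):ℝ)) hrowule (K:ℝ) 0 0 0 1
        (by exact_mod_cast le_of_lt (by omega : (0:ℤ) < K)) le_rfl le_rfl le_rfl zero_le_one
        (by ring) b hab le_rfl ![K * u 0, K * u 1, b + K * u 2] ?_ ?_ ?_ ?_
      · simp only [Matrix.cons_val_zero]; push_cast; ring
      · simp only [Matrix.cons_val_one, Matrix.head_cons]; push_cast; ring
      · simp only [Matrix.cons_val_two, Matrix.tail_cons, Matrix.head_cons]; push_cast; ring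
      · intro hm
        rcases mem_Xab.1 hm with h2|h2|h2|h2 <;> simp at h2 <;> omega


lemma four_le_of_relax (a b : ℤ) (hab : a ≤ b) (h0 : ¬(a = 0 ∧ b = 0)) {k : ℕ}
    (h : IsRelaxation (Xab a b) k) : 4 ≤ k := by
  by_contra hk
  push_neg at hk
  have hk3 : k ≤ 3 := by omega
  obtain ⟨m, A, c, U, v, hset⟩ := h
  apply not_relax3 a b hab h0
    (fun i j => if h' : (i:ℕ) < k then A ⟨i, h'⟩ j else 0)
    (fun i => if h' : (i:ℕ) < k then c ⟨i, h'⟩ else 0) m U v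
  rw [hset]
  ext x
  simp only [Set.mem_setOf_eq]
  constructor
  · rintro ⟨hi, he⟩
    refine ⟨fun i => ?_, he⟩
    by_cases hik : (i:ℕ) < k
    · simp only [dif_pos hik]
      exact hi ⟨i, hik⟩
    · simp only [dif_neg hik]
      simp
  · rintro ⟨hi, he⟩
    refine ⟨fun i => ?_, he⟩
    have h2 := hi ⟨(i:ℕ), lt_of_lt_of_le i.2 hk3⟩
    simp only [Fin.val_mk, dif_pos i.2, Fin.eta] at h2
    exact h2

/-- For all integers `a ≤ b` with `{a,b} ≠ {0}`, the set `X_{a,b}` is lattice-convex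
and `rc(X_{a,b}) = rc_ℚ(X_{a,b}) = 4`. -/
theorem rc_Xab (a b : ℤ) (hab : a ≤ b) (h0 : ¬(a = 0 ∧ b = 0)) :
    IsLatticeConvex (Xab a b) ∧ rc (Xab a b) = 4 ∧ rcQ (Xab a b) = 4 := by
  have hQ4 : IsRelaxationQ (Xab a b) 4 := relaxQ4 hab h0
  have hR4 : IsRelaxation (Xab a b) 4 := isRelaxation_of_Q hQ4
  refine ⟨isLatticeConvex_of_relax hR4, ?_, ?_⟩
  · apply le_antisymm
    · exact Nat.sInf_le hR4
    · exact le_csInf ⟨4, hR4⟩ (fun k hk => four_le_of_relax a b hab h0 hk)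
  · apply le_antisymm
    · exact Nat.sInf_le hQ4
    · exact le_csInf ⟨4, hQ4⟩
        (fun k hk => four_le_of_relax a b hab h0 (isRelaxation_of_Q hk))
end
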